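/- arXiv:1306.0537 — 6 statements merged into one kernel-verified Lean document; each statement's English description precedes it below -/
import Mathlib

section
/- Let f be a multiplicative function from the positive integers to the complex numbers that is bounded in mean square, i.e., limsup_{x→∞} (1/x) ∑_{n≤x} |f(n)|² < ∞. Suppose that for every nonnegative integer k, the arithmetic function n ↦ f(n)·(n/σ(n))^k possesses a mean value (that is, (1/x) ∑_{n≤x} f(n)(n/σ(n))^k converges to a complex limit as x → ∞). Then for every real u ∈ [0,1], the limit D_f(u) := lim_{x→∞} (1/x) ∑_{n≤x, n/σ(n)≤u} f(n) exists, and D_f(u) is continuous as a function of u on [0,1]. -/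
open Filter ArithmeticFunction

/-- The ratio `n/σ(n)` as a real number. -/
noncomputable def sigmaRatio (n : ℕ) : ℝ := (n : ℝ) / ((sigma 1 n : ℕ) : ℝ)


open Finset

lemma le_sigma_self {n : ℕ} (hn : 1 ≤ n) : n ≤ sigma 1 n := by
  rw [sigma_one_apply]
  exact Finset.single_le_sum (f := fun d => d) (fun d _ => Nat.zero_le d)
    (Nat.mem_divisors_self n (Nat.one_le_iff_ne_zero.mp hn))

lemma sigma_pos {n : ℕ} (hn : 1 ≤ n) : 0 < sigma 1 n := lt_of_lt_of_le hn (le_sigma_self hn)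

lemma sigmaRatio_pos {n : ℕ} (hn : 1 ≤ n) : 0 < sigmaRatio n := by
  apply div_pos (by exact_mod_cast hn) (by exact_mod_cast sigma_pos hn)

lemma sigmaRatio_le_one {n : ℕ} (hn : 1 ≤ n) : sigmaRatio n ≤ 1 := by
  rw [sigmaRatio, div_le_one (by exact_mod_cast sigma_pos hn)]
  exact_mod_cast le_sigma_self hn

lemma sigmaRatio_mul_prime {p m : ℕ} (hp : p.Prime) (hm : 1 ≤ m) (hpm : ¬ p ∣ m) :
    sigmaRatio m = sigmaRatio (p * m) * (1 + 1 / (p : ℝ)) := by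
  have hcop : Nat.Coprime p m := (Nat.Prime.coprime_iff_not_dvd hp).mpr hpm
  have hsig : sigma 1 (p * m) = (1 + p) * sigma 1 m := by
    rw [isMultiplicative_sigma.map_mul_of_coprime hcop]
    congr 1
    rw [sigma_one_apply, hp.divisors, Finset.sum_insert (by simp [hp.one_lt.ne]), Finset.sum_singleton]
  have hp0 : (0:ℝ) < p := by exact_mod_cast hp.pos
  have hs0 : (0:ℝ) < (sigma 1 m : ℕ) := by exact_mod_cast sigma_pos hm
  rw [sigmaRatio, sigmaRatio, hsig]
  push_cast
  field_simp
  ring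

lemma sigma_div_eq {n : ℕ} (hn : 1 ≤ n) :
    ((sigma 1 n : ℕ) : ℝ) / n = ∑ d ∈ n.divisors, (1:ℝ) / d := by
  have : ∑ d ∈ n.divisors, (1:ℝ) / d = ∑ d ∈ n.divisors, (1:ℝ) / ((n / d : ℕ) : ℝ) :=
    (Nat.sum_div_divisors n (fun d => (1:ℝ) / d)).symm
  rw [this, sigma_one_apply]
  push_cast
  rw [Finset.sum_div]
  apply Finset.sum_congr rfl
  intro d hd
  obtain ⟨hdvd, -⟩ := Nat.mem_divisors.mp hd
  have hd0 : 0 < d := Nat.pos_of_mem_divisors hd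
  have : ((n / d : ℕ) : ℝ) = (n : ℝ) / d := by
    rw [Nat.cast_div hdvd (by exact_mod_cast hd0.ne')]
  rw [this, one_div_div]

lemma card_mult (N d : ℕ) : ((Finset.Icc 1 N).filter (fun n => d ∣ n)).card = N / d := by
  have : Finset.Icc 1 N = Finset.Ioc 0 N := rfl
  rw [this]
  exact Nat.Ioc_filter_dvd_card_eq_div N d

lemma sum_invsq_aux (N : ℕ) (hN : 1 ≤ N) :
    ∑ d ∈ Finset.Icc 1 N, (1:ℝ) / (d:ℝ)^2 ≤ 2 - 1 / N := by
  induction N with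
  | zero => omega
  | succ n ih =>
    rcases Nat.eq_zero_or_pos n with h | h
    · subst h; norm_num
    rw [Finset.sum_Icc_succ_top (by omega)]
    have hn0 : (0:ℝ) < n := by exact_mod_cast h
    have key : (1:ℝ) / ((n:ℝ)+1)^2 ≤ 1 / n - 1 / ((n:ℝ)+1) := by
      rw [div_sub_div _ _ (ne_of_gt hn0) (by positivity)]
      rw [div_le_div_iff₀ (by positivity) (by positivity)]
      ring_nf
      nlinarith [hn0]
    have := ih h
    push_cast
    linarith

lemma sum_invsq (N : ℕ) : ∑ d ∈ Finset.Icc 1 N, (1:ℝ) / (d:ℝ)^2 ≤ 2 := by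
  rcases Nat.eq_zero_or_pos N with h | h
  · subst h; simp
  have := sum_invsq_aux N h
  have : (0:ℝ) < 1 / N := by positivity
  linarith [sum_invsq_aux N h]

lemma divisors_eq_filter {n N : ℕ} (h1 : 1 ≤ n) (h2 : n ≤ N) :
    n.divisors = (Finset.Icc 1 N).filter (fun d => d ∣ n) := by
  ext d
  simp only [Nat.mem_divisors, Finset.mem_filter, Finset.mem_Icc]
  constructor
  · rintro ⟨hd, -⟩
    have hd0 : 0 < d := Nat.pos_of_dvd_of_pos hd (by omega)
    exact ⟨⟨hd0, le_trans (Nat.le_of_dvd (by omega) hd) h2⟩, hd⟩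
  · rintro ⟨-, hd⟩
    exact ⟨hd, by omega⟩

lemma sum_sigma_div_le (N : ℕ) :
    ∑ n ∈ Finset.Icc 1 N, ((sigma 1 n : ℕ) : ℝ) / n ≤ 2 * N := by
  have step1 : ∑ n ∈ Finset.Icc 1 N, ((sigma 1 n : ℕ) : ℝ) / n
      = ∑ n ∈ Finset.Icc 1 N, ∑ d ∈ Finset.Icc 1 N, if d ∣ n then (1:ℝ)/d else 0 := by
    apply Finset.sum_congr rfl
    intro n hn
    obtain ⟨h1, h2⟩ := Finset.mem_Icc.mp hn
    rw [sigma_div_eq h1, divisors_eq_filter h1 h2, Finset.sum_filter]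
  rw [step1, Finset.sum_comm]
  have step2 : ∀ d ∈ Finset.Icc 1 N,
      (∑ n ∈ Finset.Icc 1 N, if d ∣ n then (1:ℝ)/d else 0) ≤ (N : ℝ) / (d:ℝ)^2 := by
    intro d hd
    obtain ⟨h1, -⟩ := Finset.mem_Icc.mp hd
    have hd0 : (0:ℝ) < d := by exact_mod_cast h1
    rw [← Finset.sum_filter, Finset.sum_const, card_mult]
    have : ((N / d : ℕ) : ℝ) ≤ (N : ℝ) / d := Nat.cast_div_le
    rw [nsmul_eq_mul]
    calc ((N / d : ℕ) : ℝ) * (1/d) ≤ ((N:ℝ)/d) * (1/d) := by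
          apply mul_le_mul_of_nonneg_right this (by positivity)
      _ = (N:ℝ) / d^2 := by ring
  calc ∑ d ∈ Finset.Icc 1 N, ∑ n ∈ Finset.Icc 1 N, (if d ∣ n then (1:ℝ)/d else 0)
      ≤ ∑ d ∈ Finset.Icc 1 N, (N : ℝ) / (d:ℝ)^2 := Finset.sum_le_sum step2
    _ = (N:ℝ) * ∑ d ∈ Finset.Icc 1 N, (1:ℝ) / (d:ℝ)^2 := by
        rw [Finset.mul_sum]; apply Finset.sum_congr rfl; intros; ring
    _ ≤ (N:ℝ) * 2 := by
        apply mul_le_mul_of_nonneg_left (sum_invsq N) (by positivity)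
    _ = 2 * N := by ring

def pw (L : ℕ) : Finset ℕ := (Finset.Icc 1 L).filter Nat.Prime

noncomputable def Mw (L : ℕ) : ℝ := ∑ p ∈ pw L, (1:ℝ)/p

lemma pw_mem {L p : ℕ} (hp : p ∈ pw L) : p.Prime ∧ 2 ≤ p ∧ p ≤ L := by
  obtain ⟨h1, h2⟩ := Finset.mem_filter.mp hp
  exact ⟨h2, h2.two_le, (Finset.mem_Icc.mp h1).2⟩

lemma Mw_nonneg (L : ℕ) : 0 ≤ Mw L :=
  Finset.sum_nonneg (fun p _ => by positivity)

lemma card_pw_le (L : ℕ) : (pw L).card ≤ L := by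
  calc (pw L).card ≤ (Finset.Icc 1 L).card := Finset.card_filter_le _ _
    _ = L := by rw [Nat.card_Icc]; omega

lemma double_count (s t : Finset ℕ) (r : ℕ → ℕ → Prop) [∀ p n, Decidable (r p n)] :
    ∑ n ∈ s, ((t.filter (fun p => r p n)).card : ℝ)
      = ∑ p ∈ t, ((s.filter (fun n => r p n)).card : ℝ) := by
  have h1 : ∀ n, ((t.filter (fun p => r p n)).card : ℝ)
      = ∑ p ∈ t, (if r p n then (1:ℝ) else 0) := by
    intro n; rw [Finset.card_filter]; push_cast; rfl
  have h2 : ∀ p, ((s.filter (fun n => r p n)).card : ℝ)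
      = ∑ n ∈ s, (if r p n then (1:ℝ) else 0) := by
    intro p; rw [Finset.card_filter]; push_cast; rfl
  simp only [h1, h2]
  exact Finset.sum_comm

lemma floor_div_lb (N d : ℕ) (hd : 1 ≤ d) : (N : ℝ)/d - 1 ≤ ((N / d : ℕ) : ℝ) := by
  have : N / d = ⌊(N:ℝ)/d⌋₊ := by
    rw [Nat.floor_div_natCast, Nat.floor_natCast]
  rw [this]
  exact (Nat.sub_one_lt_floor _).le

lemma sum_omega_lb (L N : ℕ) :
    (N : ℝ) * Mw L - L ≤ ∑ n ∈ Finset.Icc 1 N, (((pw L).filter (fun p => p ∣ n)).card : ℝ) := by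
  rw [double_count]
  have : ∀ p ∈ pw L, (N:ℝ) * (1/p) - 1 ≤ (((Finset.Icc 1 N).filter (fun n => p ∣ n)).card : ℝ) := by
    intro p hp
    have hp2 := (pw_mem hp).2.1
    rw [card_mult]
    have := floor_div_lb N p (by omega : 1 ≤ p)
    calc (N:ℝ) * (1/p) - 1 = (N:ℝ)/p - 1 := by ring
      _ ≤ _ := this
  calc (N : ℝ) * Mw L - L
      ≤ ∑ p ∈ pw L, ((N:ℝ) * (1/p) - 1) := by
        rw [Finset.sum_sub_distrib, ← Finset.mul_sum, Finset.sum_const, nsmul_eq_mul, mul_one]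
        have : ((pw L).card : ℝ) ≤ L := by exact_mod_cast card_pw_le L
        rw [Mw]
        linarith
    _ ≤ _ := Finset.sum_le_sum this

lemma sum_omega_ub (L N : ℕ) :
    ∑ n ∈ Finset.Icc 1 N, (((pw L).filter (fun p => p ∣ n)).card : ℝ) ≤ N * Mw L := by
  rw [double_count]
  have : ∀ p ∈ pw L, (((Finset.Icc 1 N).filter (fun n => p ∣ n)).card : ℝ) ≤ (N:ℝ) * (1/p) := by
    intro p hp
    rw [card_mult]
    calc ((N/p : ℕ) : ℝ) ≤ (N:ℝ)/p := Nat.cast_div_le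
      _ = (N:ℝ) * (1/p) := by ring
  calc ∑ p ∈ pw L, (((Finset.Icc 1 N).filter (fun n => p ∣ n)).card : ℝ)
      ≤ ∑ p ∈ pw L, (N:ℝ) * (1/p) := Finset.sum_le_sum this
    _ = N * Mw L := by rw [Mw, Finset.mul_sum]

lemma sum_omega_sq_ub (L N : ℕ) :
    ∑ n ∈ Finset.Icc 1 N, (((pw L).filter (fun p => p ∣ n)).card : ℝ)^2
      ≤ (N:ℝ) * (Mw L)^2 + N * Mw L := by
  have hind : ∀ n, (((pw L).filter (fun p => p ∣ n)).card : ℝ)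
      = ∑ p ∈ pw L, (if p ∣ n then (1:ℝ) else 0) := by
    intro n; rw [Finset.card_filter]; push_cast; rfl
  have expand : ∀ n, (((pw L).filter (fun p => p ∣ n)).card : ℝ)^2
      = ∑ p ∈ pw L, ∑ q ∈ pw L, (if p ∣ n ∧ q ∣ n then (1:ℝ) else 0) := by
    intro n
    rw [hind, sq, Finset.sum_mul_sum]
    apply Finset.sum_congr rfl; intro p _
    apply Finset.sum_congr rfl; intro q _
    by_cases h1 : p ∣ n <;> by_cases h2 : q ∣ n <;> simp [h1, h2]
  simp only [expand]
  rw [Finset.sum_comm]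
  have swap2 : ∀ p ∈ pw L, ∑ n ∈ Finset.Icc 1 N, ∑ q ∈ pw L, (if p ∣ n ∧ q ∣ n then (1:ℝ) else 0)
      = ∑ q ∈ pw L, ((((Finset.Icc 1 N).filter (fun n => p ∣ n ∧ q ∣ n)).card : ℝ)) := by
    intro p _
    rw [Finset.sum_comm]
    apply Finset.sum_congr rfl; intro q _
    rw [Finset.card_filter]
    push_cast
    rfl
  rw [Finset.sum_congr rfl swap2]
  have key : ∀ p ∈ pw L, ∀ q ∈ pw L,
      ((((Finset.Icc 1 N).filter (fun n => p ∣ n ∧ q ∣ n)).card : ℝ))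
        ≤ (N:ℝ) * (1/p) * (1/q) + (if p = q then (N:ℝ)*(1/p) else 0) := by
    intro p hp q hq
    obtain ⟨hpp, hp2, -⟩ := pw_mem hp
    obtain ⟨hqp, hq2, -⟩ := pw_mem hq
    by_cases hpq : p = q
    · subst hpq
      have hand : (Finset.Icc 1 N).filter (fun n => p ∣ n ∧ p ∣ n)
          = (Finset.Icc 1 N).filter (fun n => p ∣ n) := by simp
      rw [hand, if_pos rfl, card_mult]
      have hle : ((N/p:ℕ):ℝ) ≤ (N:ℝ)/p := Nat.cast_div_le
      have hnn : (0:ℝ) ≤ (N:ℝ) * (1/p) * (1/p) := by positivity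
      have heq : (N:ℝ)/p = (N:ℝ)*(1/p) := by ring
      linarith
    · rw [if_neg hpq, add_zero]
      have heq : (Finset.Icc 1 N).filter (fun n => p ∣ n ∧ q ∣ n)
          = (Finset.Icc 1 N).filter (fun n => p * q ∣ n) := by
        apply Finset.filter_congr
        intro n _
        constructor
        · rintro ⟨h1, h2⟩
          exact (Nat.Coprime.mul_dvd_of_dvd_of_dvd ((Nat.coprime_primes hpp hqp).mpr hpq) h1 h2)
        · intro h
          exact ⟨dvd_trans (Dvd.intro q rfl) h, dvd_trans (Dvd.intro_left p rfl) h⟩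
      rw [heq, card_mult]
      calc ((N / (p*q) : ℕ) : ℝ) ≤ (N:ℝ)/((p*q : ℕ):ℝ) := Nat.cast_div_le
        _ = (N:ℝ) * (1/p) * (1/q) := by push_cast; ring
  calc ∑ p ∈ pw L, ∑ q ∈ pw L, ((((Finset.Icc 1 N).filter (fun n => p ∣ n ∧ q ∣ n)).card : ℝ))
      ≤ ∑ p ∈ pw L, ∑ q ∈ pw L, ((N:ℝ) * (1/p) * (1/q) + (if p = q then (N:ℝ)*(1/p) else 0)) := by
        apply Finset.sum_le_sum; intro p hp
        apply Finset.sum_le_sum; intro q hq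
        exact key p hp q hq
    _ ≤ (N:ℝ) * (Mw L)^2 + N * Mw L := by
        rw [Finset.sum_congr rfl (fun p _ => Finset.sum_add_distrib)]
        rw [Finset.sum_add_distrib]
        apply add_le_add
        · apply le_of_eq
          rw [Mw, sq, Finset.sum_mul_sum, Finset.mul_sum]
          apply Finset.sum_congr rfl; intro p _
          rw [Finset.mul_sum]
          apply Finset.sum_congr rfl; intro q _
          ring
        · apply le_of_eq
          have : ∀ p ∈ pw L, ∑ q ∈ pw L, (if p = q then (N:ℝ)*(1/p) else 0) = (N:ℝ)*(1/p) := by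
            intro p hp
            rw [Finset.sum_ite_eq (pw L) p (fun _ => (N:ℝ)*(1/p))]
            simp [hp]
          rw [Finset.sum_congr rfl this, Mw, Finset.mul_sum]

lemma interval_lt {u δ : ℝ} (hu : 0 < u) {L p q : ℕ} (hp : p ∈ pw L) (hq : q ∈ pw L)
    (hlt : p < q) (hδ : δ = u/(8*(L:ℝ)^2)) :
    (u+δ)*(1+1/(q:ℝ)) < (u-δ)*(1+1/(p:ℝ)) := by
  obtain ⟨-, hp2, hpL⟩ := pw_mem hp
  obtain ⟨-, hq2, hqL⟩ := pw_mem hq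
  have hpr : (2:ℝ) ≤ p := by exact_mod_cast hp2
  have hqr : (2:ℝ) ≤ q := by exact_mod_cast hq2
  have hpLr : (p:ℝ) ≤ L := by exact_mod_cast hpL
  have hqLr : (q:ℝ) ≤ L := by exact_mod_cast hqL
  have hpq : (p:ℝ) + 1 ≤ q := by exact_mod_cast hlt
  have hL2 : (2:ℝ) ≤ L := le_trans hpr hpLr
  have hp0 : (0:ℝ) < p := by linarith
  have hq0 : (0:ℝ) < q := by linarith
  have hL0 : (0:ℝ) < L := by linarith
  have hδ0 : 0 < δ := by rw [hδ]; positivity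
  have gap : 1/(p:ℝ) - 1/(q:ℝ) ≥ 1/((p:ℝ)*q) := by
    rw [div_sub_div _ _ hp0.ne' hq0.ne', ge_iff_le, div_le_div_iff₀ (by positivity) (by positivity)]
    have hqp1 : (q:ℝ) - p ≥ 1 := by linarith
    nlinarith [mul_pos hp0 hq0]
  have gap2 : 1/((p:ℝ)*q) ≥ 1/(L:ℝ)^2 := by
    rw [ge_iff_le, div_le_div_iff₀ (by positivity) (by positivity)]
    nlinarith
  have hδle : 4*δ = u/(2*(L:ℝ)^2) := by
    rw [hδ]; field_simp; ring
  have hfrac : u/(2*(L:ℝ)^2) < u * (1/(p:ℝ) - 1/(q:ℝ)) := by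
    have h1 : u * (1/(L:ℝ)^2) ≤ u * (1/(p:ℝ) - 1/(q:ℝ)) := by
      apply mul_le_mul_of_nonneg_left (le_trans gap2 gap) hu.le
    have hx : 0 < u/(L:ℝ)^2 := by positivity
    have h2 : u/(2*(L:ℝ)^2) < u * (1/(L:ℝ)^2) := by
      rw [mul_one_div, show u/(2*(L:ℝ)^2) = (u/(L:ℝ)^2)/2 by ring]
      linarith
    linarith
  have hineq : δ*(2 + 1/(p:ℝ) + 1/(q:ℝ)) < u*(1/(p:ℝ) - 1/(q:ℝ)) := by
    have : δ*(2 + 1/(p:ℝ) + 1/(q:ℝ)) ≤ 4*δ := by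
      have h1 : 1/(p:ℝ) ≤ 1 := by rw [div_le_one hp0]; linarith
      have h2 : 1/(q:ℝ) ≤ 1 := by rw [div_le_one hq0]; linarith
      nlinarith
    linarith
  nlinarith [hineq]

lemma sum_exact_le {u δ : ℝ} (hu : 0 < u) (L N : ℕ)
    (hδ : δ = u/(8*(L:ℝ)^2)) :
    ∑ n ∈ (Finset.Icc 1 N).filter (fun n => |sigmaRatio n - u| ≤ δ),
        (((pw L).filter (fun p => p ∣ n ∧ ¬ p^2 ∣ n)).card : ℝ) ≤ N := by
  set T := (Finset.Icc 1 N).filter (fun n => |sigmaRatio n - u| ≤ δ) with hT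
  set A : ℕ → Finset ℕ := fun p => (Finset.Icc 1 N).filter
    (fun m => (u-δ)*(1+1/(p:ℝ)) ≤ sigmaRatio m ∧ sigmaRatio m ≤ (u+δ)*(1+1/(p:ℝ))) with hA
  rw [double_count]
  have step1 : ∀ p ∈ pw L, ((T.filter (fun n => p ∣ n ∧ ¬ p^2 ∣ n)).card : ℝ) ≤ ((A p).card : ℝ) := by
    intro p hp
    obtain ⟨hpp, hp2, hpL⟩ := pw_mem hp
    have hcard : (T.filter (fun n => p ∣ n ∧ ¬ p^2 ∣ n)).card ≤ (A p).card := by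
      apply Finset.card_le_card_of_injOn (fun n => n / p)
      · intro n hn
        obtain ⟨hnT, hdvd, hnsq⟩ : n ∈ T ∧ p ∣ n ∧ ¬ p^2 ∣ n := by
          have := Finset.mem_filter.mp hn
          exact ⟨this.1, this.2.1, this.2.2⟩
        obtain ⟨hnI, hnu⟩ := Finset.mem_filter.mp hnT
        obtain ⟨hn1, hnN⟩ := Finset.mem_Icc.mp hnI
        have hnm : n = p * (n / p) := (Nat.mul_div_cancel' hdvd).symm
        have hm1 : 1 ≤ n / p := by
          rcases Nat.eq_zero_or_pos (n / p) with h | h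
          · rw [h, mul_zero] at hnm; omega
          · exact h
        have hmN : n / p ≤ N := le_trans (Nat.div_le_self n p) hnN
        have hpm : ¬ p ∣ (n / p) := by
          intro hc
          exact hnsq (by rw [hnm, sq]; exact mul_dvd_mul_left p hc)
        have hrat : sigmaRatio (n / p) = sigmaRatio n * (1 + 1/(p:ℝ)) := by
          have := sigmaRatio_mul_prime hpp hm1 hpm
          rw [this, ← hnm]
        have habs := abs_le.mp hnu
        have hfac : (0:ℝ) < 1 + 1/(p:ℝ) := by
          have : (0:ℝ) < p := by exact_mod_cast hpp.pos
          positivity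
        rw [hA]
        show n / p ∈ (Finset.Icc 1 N).filter _
        rw [Finset.mem_filter, Finset.mem_Icc]
        refine ⟨⟨hm1, hmN⟩, ?_, ?_⟩
        · rw [hrat]; apply mul_le_mul_of_nonneg_right (by linarith) hfac.le
        · rw [hrat]; apply mul_le_mul_of_nonneg_right (by linarith) hfac.le
      · intro n hn n' hn' heq
        obtain ⟨-, hdvd, -⟩ : n ∈ T ∧ p ∣ n ∧ ¬ p^2 ∣ n := by
          have := Finset.mem_filter.mp hn; exact ⟨this.1, this.2.1, this.2.2⟩
        obtain ⟨-, hdvd', -⟩ : n' ∈ T ∧ p ∣ n' ∧ ¬ p^2 ∣ n' := by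
          have := Finset.mem_filter.mp hn'; exact ⟨this.1, this.2.1, this.2.2⟩
        have h1 : n = p * (n / p) := (Nat.mul_div_cancel' hdvd).symm
        have h2 : n' = p * (n' / p) := (Nat.mul_div_cancel' hdvd').symm
        simp only at heq
        rw [h1, h2, heq]
    exact_mod_cast hcard
  have hdisj : ∀ p ∈ pw L, ∀ q ∈ pw L, p ≠ q → Disjoint (A p) (A q) := by
    have key : ∀ p ∈ pw L, ∀ q ∈ pw L, p < q → Disjoint (A p) (A q) := by
      intro p hp q hq hlt
      rw [Finset.disjoint_left]
      intro m hmp hmq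
      obtain ⟨-, h1, -⟩ := Finset.mem_filter.mp hmp
      obtain ⟨-, -, h2⟩ := Finset.mem_filter.mp hmq
      have := interval_lt hu hp hq hlt hδ
      linarith
    intro p hp q hq hne
    rcases lt_or_gt_of_ne hne with h | h
    · exact key p hp q hq h
    · exact (key q hq p hp h).symm
  calc ∑ p ∈ pw L, ((T.filter (fun n => p ∣ n ∧ ¬ p^2 ∣ n)).card : ℝ)
      ≤ ∑ p ∈ pw L, ((A p).card : ℝ) := Finset.sum_le_sum step1
    _ = (((pw L).biUnion A).card : ℝ) := by
        rw [Finset.card_biUnion hdisj]; push_cast; rfl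
    _ ≤ ((Finset.Icc 1 N).card : ℝ) := by
        have : (pw L).biUnion A ⊆ Finset.Icc 1 N := by
          intro m hm
          obtain ⟨p, -, hmp⟩ := Finset.mem_biUnion.mp hm
          exact (Finset.mem_filter.mp hmp).1
        exact_mod_cast Finset.card_le_card this
    _ ≤ N := by rw [Nat.card_Icc]; simp

lemma Mw_tendsto : Filter.Tendsto Mw Filter.atTop Filter.atTop := by
  have hnonneg : ∀ n : ℕ, 0 ≤ Set.indicator {p | Nat.Prime p} (fun n : ℕ => (1:ℝ)/n) n := by
    intro n
    apply Set.indicator_nonneg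
    intro p _
    positivity
  have hdiv := (not_summable_iff_tendsto_nat_atTop_of_nonneg hnonneg).mp
    not_summable_one_div_on_primes
  have heq : ∀ L : ℕ, Mw L = ∑ n ∈ Finset.range (L+1),
      Set.indicator {p | Nat.Prime p} (fun n : ℕ => (1:ℝ)/n) n := by
    intro L
    rw [Mw]
    rw [Finset.sum_indicator_eq_sum_filter]
    apply Finset.sum_congr
    · ext p
      simp only [Finset.mem_filter, Finset.mem_Icc, Finset.mem_range, pw, Set.mem_setOf_eq]
      constructor
      · rintro ⟨⟨h1, h2⟩, h3⟩; exact ⟨by omega, h3⟩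
      · rintro ⟨h1, h2⟩; exact ⟨⟨h2.one_lt.le, by omega⟩, h2⟩
    · intros; rfl
  have : Filter.Tendsto (fun L : ℕ => ∑ n ∈ Finset.range (L+1),
      Set.indicator {p | Nat.Prime p} (fun n : ℕ => (1:ℝ)/n) n) Filter.atTop Filter.atTop :=
    hdiv.comp (Filter.tendsto_add_atTop_nat 1)
  exact this.congr (fun L => (heq L).symm)

lemma sum_sqdvd_le (L N : ℕ) :
    ∑ n ∈ Finset.Icc 1 N, (((pw L).filter (fun p => p^2 ∣ n)).card : ℝ) ≤ N := by
  rw [double_count]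
  have step : ∀ p ∈ pw L, (((Finset.Icc 1 N).filter (fun n => p^2 ∣ n)).card : ℝ) ≤ (N:ℝ)/(p:ℝ)^2 := by
    intro p hp
    rw [card_mult]
    calc ((N / p^2 : ℕ) : ℝ) ≤ (N:ℝ)/((p^2 : ℕ):ℝ) := Nat.cast_div_le
      _ = (N:ℝ)/(p:ℝ)^2 := by push_cast; ring
  calc ∑ p ∈ pw L, (((Finset.Icc 1 N).filter (fun n => p^2 ∣ n)).card : ℝ)
      ≤ ∑ p ∈ pw L, (N:ℝ)/(p:ℝ)^2 := Finset.sum_le_sum step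
    _ = (N:ℝ) * ∑ p ∈ pw L, (1:ℝ)/(p:ℝ)^2 := by
        rw [Finset.mul_sum]; apply Finset.sum_congr rfl; intros; ring
    _ ≤ (N:ℝ) * 1 := by
        apply mul_le_mul_of_nonneg_left _ (by positivity)
        have hsub : pw L ⊆ Finset.Icc 2 L := by
          intro p hp
          obtain ⟨-, h2, h3⟩ := pw_mem hp
          exact Finset.mem_Icc.mpr ⟨h2, h3⟩
        have h1 : ∑ p ∈ pw L, (1:ℝ)/(p:ℝ)^2 ≤ ∑ d ∈ Finset.Icc 2 L, (1:ℝ)/(d:ℝ)^2 :=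
          Finset.sum_le_sum_of_subset_of_nonneg hsub (fun d _ _ => by positivity)
        rcases le_or_gt 2 L with hL | hL
        · have h2 : ∑ d ∈ Finset.Icc 1 L, (1:ℝ)/(d:ℝ)^2
              = 1 + ∑ d ∈ Finset.Icc 2 L, (1:ℝ)/(d:ℝ)^2 := by
            rw [show Finset.Icc 2 L = Finset.Ioc 1 L from Finset.Icc_add_one_left_eq_Ioc 1 L,
              Finset.Icc_eq_cons_Ioc (by omega : (1:ℕ) ≤ L), Finset.sum_cons]
            norm_num
          have := sum_invsq L
          linarith
        · apply le_trans h1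
          rw [Finset.Icc_eq_empty (by omega)]
          simp
    _ = N := mul_one _

lemma markov_count (N : ℕ) {δ : ℝ} (hδ : 0 < δ) :
    (((Finset.Icc 1 N).filter (fun n => sigmaRatio n ≤ δ)).card : ℝ) ≤ 2*δ*N := by
  set S := (Finset.Icc 1 N).filter (fun n => sigmaRatio n ≤ δ) with hS
  have key : ∀ n ∈ S, (1:ℝ)/δ ≤ ((sigma 1 n : ℕ) : ℝ) / n := by
    intro n hn
    obtain ⟨hnI, hle⟩ := Finset.mem_filter.mp hn
    obtain ⟨h1, -⟩ := Finset.mem_Icc.mp hnI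
    have hpos := sigmaRatio_pos h1
    have hn0 : (0:ℝ) < n := by exact_mod_cast h1
    have hs0 : (0:ℝ) < ((sigma 1 n : ℕ) : ℝ) := by
      rcases lt_or_ge 0 (((sigma 1 n : ℕ) : ℝ)) with h | h
      · exact h
      · exfalso
        have : sigmaRatio n ≤ 0 := div_nonpos_of_nonneg_of_nonpos hn0.le h
        linarith
    rw [div_le_div_iff₀ hδ hn0]
    have := (div_le_iff₀ hs0).mp hle
    rw [sigmaRatio] at hle
    rw [div_le_iff₀ hs0] at hle
    nlinarith
  have h1 : (S.card : ℝ) * (1/δ) ≤ ∑ n ∈ S, ((sigma 1 n : ℕ) : ℝ) / n := by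
    have := Finset.card_nsmul_le_sum S (fun n => ((sigma 1 n : ℕ) : ℝ) / n) (1/δ) key
    rw [nsmul_eq_mul] at this
    linarith
  have h2 : ∑ n ∈ S, ((sigma 1 n : ℕ) : ℝ) / n ≤ ∑ n ∈ Finset.Icc 1 N, ((sigma 1 n : ℕ) : ℝ) / n := by
    apply Finset.sum_le_sum_of_subset_of_nonneg (Finset.filter_subset _ _)
    intro n hn _
    positivity
  have h3 := sum_sigma_div_le N
  have hcard : (S.card : ℝ) ≤ 2*N*δ := by
    have hδ' : 0 < (1:ℝ)/δ := by positivity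
    have : (S.card : ℝ) * (1/δ) ≤ 2*N := by linarith
    calc (S.card : ℝ) = (S.card : ℝ) * (1/δ) * δ := by field_simp
      _ ≤ 2*N*δ := by apply mul_le_mul_of_nonneg_right this hδ.le
  linarith

set_option maxHeartbeats 1000000 in
theorem conc (u ε : ℝ) (hu : 0 ≤ u) (hε : 0 < ε) :
    ∃ δ > 0, ∀ᶠ N : ℕ in Filter.atTop,
      (((Finset.Icc 1 N).filter (fun n => |sigmaRatio n - u| ≤ δ)).card : ℝ) ≤ ε * N := by
  rcases eq_or_lt_of_le hu with hu0 | hupos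
  · -- u = 0
    refine ⟨ε/2, by positivity, Filter.Eventually.of_forall (fun N => ?_)⟩
    have hsub : (Finset.Icc 1 N).filter (fun n => |sigmaRatio n - u| ≤ ε/2)
        ⊆ (Finset.Icc 1 N).filter (fun n => sigmaRatio n ≤ ε/2) := by
      intro n hn
      obtain ⟨h1, h2⟩ := Finset.mem_filter.mp hn
      apply Finset.mem_filter.mpr ⟨h1, ?_⟩
      rw [← hu0, sub_zero] at h2
      exact (abs_le.mp h2).2
    calc (((Finset.Icc 1 N).filter (fun n => |sigmaRatio n - u| ≤ ε/2)).card : ℝ)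
        ≤ (((Finset.Icc 1 N).filter (fun n => sigmaRatio n ≤ ε/2)).card : ℝ) := by
          exact_mod_cast Finset.card_le_card hsub
      _ ≤ 2*(ε/2)*N := markov_count N (by positivity)
      _ = ε * N := by ring
  · -- u > 0
    obtain ⟨L₀, hL₀⟩ := Filter.eventually_atTop.mp (Mw_tendsto.eventually_ge_atTop (16/ε))
    set L := max L₀ 2 with hLdef
    have hM : 16/ε ≤ Mw L := hL₀ L (le_max_left _ _)
    have hL2 : 2 ≤ L := le_max_right _ _
    have hMpos : 0 < Mw L := lt_of_lt_of_le (by positivity) hM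
    have hLpos : (0:ℝ) < L := by
      have : (2:ℝ) ≤ L := by exact_mod_cast hL2
      linarith
    set M := Mw L with hMdef
    set δ := u/(8*(L:ℝ)^2) with hδdef
    have hδpos : 0 < δ := by rw [hδdef]; positivity
    refine ⟨δ, hδpos, ?_⟩
    rw [Filter.eventually_atTop]
    refine ⟨L, fun N hN => ?_⟩
    have hNL : (L:ℝ) ≤ N := by exact_mod_cast hN
    -- abbreviations
    set om : ℕ → ℝ := fun n => (((pw L).filter (fun p => p ∣ n)).card : ℝ) with hom
    set T := (Finset.Icc 1 N).filter (fun n => |sigmaRatio n - u| ≤ δ) with hT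
    set B := (Finset.Icc 1 N).filter (fun n => om n < M/2) with hB
    set G := T.filter (fun n => M/2 ≤ om n) with hG
    have homnn : ∀ n, 0 ≤ om n := fun n => by positivity
    -- variance bound
    have hvar : ∑ n ∈ Finset.Icc 1 N, (om n - M)^2 ≤ N*M + 2*M*L := by
      have hexp : ∑ n ∈ Finset.Icc 1 N, (om n - M)^2
          = (∑ n ∈ Finset.Icc 1 N, (om n)^2) - 2*M*(∑ n ∈ Finset.Icc 1 N, om n) + N*M^2 := by
        have : ∀ n ∈ Finset.Icc 1 N, (om n - M)^2 = (om n)^2 - 2*M*(om n) + M^2 := by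
          intros; ring
        rw [Finset.sum_congr rfl this, Finset.sum_add_distrib, Finset.sum_sub_distrib,
          ← Finset.mul_sum, Finset.sum_const, Nat.card_Icc]
        simp only [Nat.add_sub_cancel, nsmul_eq_mul]
      have h1 := sum_omega_sq_ub L N
      have h2 := sum_omega_lb L N
      have h3 := Mw_nonneg L
      rw [hexp]
      have : 2*M*((N:ℝ)*M - L) ≤ 2*M*(∑ n ∈ Finset.Icc 1 N, om n) := by
        apply mul_le_mul_of_nonneg_left h2 (by linarith)
      nlinarith
    -- Chebyshev
    have hBcard : (B.card : ℝ) * (M/2)^2 ≤ N*M + 2*M*L := by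
      have h1 : (B.card : ℝ) * (M/2)^2 ≤ ∑ n ∈ B, (om n - M)^2 := by
        have key : ∀ n ∈ B, (M/2)^2 ≤ (om n - M)^2 := by
          intro n hn
          have hlt := (Finset.mem_filter.mp hn).2
          have := homnn n
          nlinarith
        have := Finset.card_nsmul_le_sum B (fun n => (om n - M)^2) ((M/2)^2) key
        rw [nsmul_eq_mul] at this
        linarith
      have h2 : ∑ n ∈ B, (om n - M)^2 ≤ ∑ n ∈ Finset.Icc 1 N, (om n - M)^2 := by
        apply Finset.sum_le_sum_of_subset_of_nonneg (Finset.filter_subset _ _)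
        intros; positivity
      linarith
    -- G bound
    have hGcard : (G.card : ℝ) * (M/2) ≤ 2*N := by
      have h1 : (G.card : ℝ) * (M/2) ≤ ∑ n ∈ G, om n := by
        have key : ∀ n ∈ G, M/2 ≤ om n := fun n hn => (Finset.mem_filter.mp hn).2
        have := Finset.card_nsmul_le_sum G om (M/2) key
        rw [nsmul_eq_mul] at this
        linarith
      have hpoint : ∀ n, om n ≤ (((pw L).filter (fun p => p ∣ n ∧ ¬ p^2 ∣ n)).card : ℝ)
          + (((pw L).filter (fun p => p^2 ∣ n)).card : ℝ) := by
        intro n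
        have hsub : (pw L).filter (fun p => p ∣ n)
            ⊆ ((pw L).filter (fun p => p ∣ n ∧ ¬ p^2 ∣ n)) ∪ ((pw L).filter (fun p => p^2 ∣ n)) := by
          intro p hp
          obtain ⟨hpw, hdvd⟩ := Finset.mem_filter.mp hp
          by_cases h : p^2 ∣ n
          · exact Finset.mem_union_right _ (Finset.mem_filter.mpr ⟨hpw, h⟩)
          · exact Finset.mem_union_left _ (Finset.mem_filter.mpr ⟨hpw, hdvd, h⟩)
        have := le_trans (Finset.card_le_card hsub) (Finset.card_union_le _ _)
        have h' : (((pw L).filter (fun p => p ∣ n)).card : ℝ)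
            ≤ (((pw L).filter (fun p => p ∣ n ∧ ¬ p^2 ∣ n)).card : ℝ)
              + (((pw L).filter (fun p => p^2 ∣ n)).card : ℝ) := by exact_mod_cast this
        exact h'
      have h2 : ∑ n ∈ G, om n ≤ ∑ n ∈ G, ((((pw L).filter (fun p => p ∣ n ∧ ¬ p^2 ∣ n)).card : ℝ)
          + (((pw L).filter (fun p => p^2 ∣ n)).card : ℝ)) :=
        Finset.sum_le_sum (fun n _ => hpoint n)
      have h3 : ∑ n ∈ G, (((pw L).filter (fun p => p ∣ n ∧ ¬ p^2 ∣ n)).card : ℝ)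
          ≤ ∑ n ∈ T, (((pw L).filter (fun p => p ∣ n ∧ ¬ p^2 ∣ n)).card : ℝ) := by
        apply Finset.sum_le_sum_of_subset_of_nonneg (Finset.filter_subset _ _)
        intros; positivity
      have h4 := sum_exact_le hupos L N hδdef
      have h5 : ∑ n ∈ G, (((pw L).filter (fun p => p^2 ∣ n)).card : ℝ)
          ≤ ∑ n ∈ Finset.Icc 1 N, (((pw L).filter (fun p => p^2 ∣ n)).card : ℝ) := by
        apply Finset.sum_le_sum_of_subset_of_nonneg
        · exact subset_trans (Finset.filter_subset _ _) (Finset.filter_subset _ _)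
        · intros; positivity
      have h6 := sum_sqdvd_le L N
      rw [Finset.sum_add_distrib] at h2
      linarith
    -- combine
    have hTGB : (T.card : ℝ) ≤ (G.card : ℝ) + (B.card : ℝ) := by
      have hsub : T ⊆ G ∪ B := by
        intro n hn
        by_cases h : M/2 ≤ om n
        · exact Finset.mem_union_left _ (Finset.mem_filter.mpr ⟨hn, h⟩)
        · apply Finset.mem_union_right _
          apply Finset.mem_filter.mpr ⟨(Finset.mem_filter.mp hn).1, by linarith⟩
      have := le_trans (Finset.card_le_card hsub) (Finset.card_union_le _ _)
      exact_mod_cast this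
    have hG4 : (G.card : ℝ) ≤ 4*N/M := by
      rw [← mul_le_mul_iff_of_pos_right (show (0:ℝ) < M/2 by positivity)]
      calc (G.card : ℝ) * (M/2) ≤ 2*N := hGcard
        _ = 4*(N:ℝ)/M * (M/2) := by field_simp; ring
    have hB4 : (B.card : ℝ) ≤ 4*N/M + 8*L/M := by
      rw [← mul_le_mul_iff_of_pos_right (show (0:ℝ) < (M/2)^2 by positivity)]
      calc (B.card : ℝ) * (M/2)^2 ≤ N*M + 2*M*L := hBcard
        _ = (4*(N:ℝ)/M + 8*(L:ℝ)/M) * (M/2)^2 := by field_simp; ring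
    have hMinv : 1/M ≤ ε/16 := by
      have h := one_div_le_one_div_of_le (by positivity : (0:ℝ) < 16/ε) hM
      rwa [one_div_div] at h
    have hfin1 : 4*(N:ℝ)/M + 4*(N:ℝ)/M ≤ (ε/2)*N := by
      have : 4*(N:ℝ)/M + 4*(N:ℝ)/M = 8*(N:ℝ)*(1/M) := by ring
      rw [this]
      calc 8*(N:ℝ)*(1/M) ≤ 8*(N:ℝ)*(ε/16) := by
            apply mul_le_mul_of_nonneg_left hMinv (by positivity)
        _ = (ε/2)*N := by ring
    have hfin2 : 8*(L:ℝ)/M ≤ (ε/2)*N := by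
      have h1 : 8*(L:ℝ)/M = 8*(L:ℝ)*(1/M) := by ring
      rw [h1]
      calc 8*(L:ℝ)*(1/M) ≤ 8*(L:ℝ)*(ε/16) := by
            apply mul_le_mul_of_nonneg_left hMinv (by positivity)
        _ = (ε/2)*L := by ring
        _ ≤ (ε/2)*N := by apply mul_le_mul_of_nonneg_left hNL (by positivity)
    calc (T.card : ℝ) ≤ (G.card : ℝ) + (B.card : ℝ) := hTGB
      _ ≤ 4*N/M + (4*N/M + 8*L/M) := by linarith
      _ ≤ (ε/2)*N + (ε/2)*N := by linarith
      _ = ε * N := by ring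

lemma cs_bound (f : ℕ → ℂ) (s v : Finset ℕ) (hsv : s ⊆ v) :
    ∑ n ∈ s, ‖f n‖ ≤ Real.sqrt (∑ n ∈ v, ‖f n‖^2) * Real.sqrt s.card := by
  have h := Finset.sum_mul_sq_le_sq_mul_sq s (fun n => ‖f n‖) (fun _ => (1:ℝ))
  simp only [mul_one, one_pow] at h
  have h2 : (∑ n ∈ s, ‖f n‖)^2 ≤ (∑ n ∈ v, ‖f n‖^2) * s.card := by
    rw [Finset.sum_const, nsmul_eq_mul, mul_one] at h
    have hmono : ∑ n ∈ s, ‖f n‖^2 ≤ ∑ n ∈ v, ‖f n‖^2 :=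
      Finset.sum_le_sum_of_subset_of_nonneg hsv (fun n _ _ => by positivity)
    calc (∑ n ∈ s, ‖f n‖)^2 ≤ (∑ n ∈ s, ‖f n‖^2) * s.card := h
      _ ≤ (∑ n ∈ v, ‖f n‖^2) * s.card := by
          apply mul_le_mul_of_nonneg_right hmono (by positivity)
  have hnn : 0 ≤ ∑ n ∈ s, ‖f n‖ := Finset.sum_nonneg (fun n _ => norm_nonneg _)
  calc ∑ n ∈ s, ‖f n‖ = Real.sqrt ((∑ n ∈ s, ‖f n‖)^2) := (Real.sqrt_sq hnn).symm
    _ ≤ Real.sqrt ((∑ n ∈ v, ‖f n‖^2) * s.card) := Real.sqrt_le_sqrt h2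
    _ = Real.sqrt (∑ n ∈ v, ‖f n‖^2) * Real.sqrt s.card := by
        rw [Real.sqrt_mul (Finset.sum_nonneg (fun n _ => by positivity))]

lemma poly_mean (f : ℕ → ℂ) (c : ℕ → ℂ)
    (hc : ∀ k : ℕ, Tendsto (fun N : ℕ => (N : ℂ)⁻¹ * ∑ n ∈ Finset.Icc 1 N,
        f n * ((sigmaRatio n : ℝ) : ℂ) ^ k) atTop (nhds (c k)))
    (P : Polynomial ℝ) :
    Tendsto (fun N : ℕ => (N : ℂ)⁻¹ * ∑ n ∈ Finset.Icc 1 N,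
        f n * ((P.eval (sigmaRatio n) : ℝ) : ℂ)) atTop
      (nhds (∑ k ∈ Finset.range (P.natDegree + 1), (P.coeff k : ℂ) * c k)) := by
  have heq : ∀ N : ℕ, (N : ℂ)⁻¹ * ∑ n ∈ Finset.Icc 1 N, f n * ((P.eval (sigmaRatio n) : ℝ) : ℂ)
      = ∑ k ∈ Finset.range (P.natDegree + 1),
          (P.coeff k : ℂ) * ((N : ℂ)⁻¹ * ∑ n ∈ Finset.Icc 1 N,
            f n * ((sigmaRatio n : ℝ) : ℂ) ^ k) := by
    intro N
    have hs : ∀ n : ℕ, ((P.eval (sigmaRatio n) : ℝ) : ℂ)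
        = ∑ k ∈ Finset.range (P.natDegree + 1), (P.coeff k : ℂ) * ((sigmaRatio n : ℝ) : ℂ) ^ k := by
      intro n
      rw [Polynomial.eval_eq_sum_range]
      push_cast
      rfl
    calc (N : ℂ)⁻¹ * ∑ n ∈ Finset.Icc 1 N, f n * ((P.eval (sigmaRatio n) : ℝ) : ℂ)
        = (N : ℂ)⁻¹ * ∑ n ∈ Finset.Icc 1 N, ∑ k ∈ Finset.range (P.natDegree + 1),
            (P.coeff k : ℂ) * (f n * ((sigmaRatio n : ℝ) : ℂ) ^ k) := by
          congr 1
          apply Finset.sum_congr rfl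
          intro n _
          rw [hs n, Finset.mul_sum]
          apply Finset.sum_congr rfl
          intro k _
          ring
      _ = ∑ k ∈ Finset.range (P.natDegree + 1), (P.coeff k : ℂ) * ((N : ℂ)⁻¹ *
            ∑ n ∈ Finset.Icc 1 N, f n * ((sigmaRatio n : ℝ) : ℂ) ^ k) := by
          rw [Finset.sum_comm]
          rw [Finset.mul_sum]
          apply Finset.sum_congr rfl
          intro k _
          rw [Finset.mul_sum, Finset.mul_sum, Finset.mul_sum]
          apply Finset.sum_congr rfl
          intro n _
          ring
  rw [show (fun N : ℕ => (N : ℂ)⁻¹ * ∑ n ∈ Finset.Icc 1 N, f n * ((P.eval (sigmaRatio n) : ℝ) : ℂ))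
      = fun N : ℕ => ∑ k ∈ Finset.range (P.natDegree + 1),
          (P.coeff k : ℂ) * ((N : ℂ)⁻¹ * ∑ n ∈ Finset.Icc 1 N,
            f n * ((sigmaRatio n : ℝ) : ℂ) ^ k) from funext heq]
  exact tendsto_finset_sum _ (fun k _ => (hc k).const_mul _)

lemma ramp_cont (u δ : ℝ) : Continuous (fun x : ℝ => max 0 (min 1 ((u + δ - x)/δ))) := by
  apply continuous_const.max
  apply continuous_const.min
  continuity

lemma ramp_bound (u δ : ℝ) (hδ : 0 < δ) (x : ℝ) :
    |(if x ≤ u then (1:ℝ) else 0) - max 0 (min 1 ((u + δ - x)/δ))|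
      ≤ (if |x - u| ≤ δ then (1:ℝ) else 0) := by
  by_cases hxu : x ≤ u
  · have h1 : (1:ℝ) ≤ (u + δ - x)/δ := by
      rw [le_div_iff₀ hδ]
      linarith
    rw [if_pos hxu]
    have hmin : min 1 ((u + δ - x)/δ) = 1 := min_eq_left h1
    rw [hmin]
    have hmax : max (0:ℝ) 1 = 1 := max_eq_right zero_le_one
    rw [hmax, sub_self, abs_zero]
    split <;> norm_num
  · push_neg at hxu
    rw [if_neg (not_le.mpr hxu)]
    have hg0 : (0:ℝ) ≤ max 0 (min 1 ((u + δ - x)/δ)) := le_max_left _ _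
    have hg1 : max 0 (min 1 ((u + δ - x)/δ)) ≤ 1 := by
      apply max_le (by norm_num)
      exact min_le_left _ _
    by_cases hw : |x - u| ≤ δ
    · rw [if_pos hw]
      rw [abs_le]
      constructor <;> linarith
    · rw [if_neg hw]
      have hxgt : u + δ < x := by
        rw [abs_le] at hw
        push_neg at hw
        rcases lt_or_ge (x-u) (-δ) with h | h
        · linarith
        · have := hw h; linarith
      have : (u + δ - x)/δ < 0 := div_neg_of_neg_of_pos (by linarith) hδ
      have hmin : min 1 ((u + δ - x)/δ) = (u + δ - x)/δ := min_eq_right (by linarith)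
      rw [hmin, max_eq_left (by linarith)]
      norm_num

lemma key_est (f : ℕ → ℂ) {C : ℝ} (hC : 1 ≤ C)
    (hms : ∀ᶠ N : ℕ in atTop, ∑ n ∈ Finset.Icc 1 N, ‖f n‖^2 ≤ C * N)
    (u : ℝ) {ε₁ ε₂ δ : ℝ} (hε₁ : 0 ≤ ε₁) (hε₂ : 0 ≤ ε₂) (hδ : 0 < δ)
    (hconc : ∀ᶠ N : ℕ in atTop,
      (((Finset.Icc 1 N).filter (fun n => |sigmaRatio n - u| ≤ δ)).card : ℝ) ≤ ε₂ * N)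
    (P : Polynomial ℝ)
    (hPb : ∀ x ∈ Set.Icc (0:ℝ) 1,
      |(if x ≤ u then (1:ℝ) else 0) - P.eval x| ≤ ε₁ + (if |x - u| ≤ δ then (1:ℝ) else 0)) :
    ∀ᶠ N : ℕ in atTop,
      ‖(N:ℂ)⁻¹ * (∑ n ∈ (Finset.Icc 1 N).filter (fun n => sigmaRatio n ≤ u), f n)
        - (N:ℂ)⁻¹ * ∑ n ∈ Finset.Icc 1 N, f n * ((P.eval (sigmaRatio n) : ℝ) : ℂ)‖
          ≤ ε₁ * Real.sqrt C + Real.sqrt (C * ε₂) := by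
  filter_upwards [hms, hconc, Filter.eventually_ge_atTop 1] with N hmsN hconcN hN1
  have hN0 : (0:ℝ) < N := by exact_mod_cast hN1
  have hC0 : (0:ℝ) < C := by linarith
  -- rewrite difference
  have hfil : ∑ n ∈ (Finset.Icc 1 N).filter (fun n => sigmaRatio n ≤ u), f n
      = ∑ n ∈ Finset.Icc 1 N, (((if sigmaRatio n ≤ u then (1:ℝ) else 0) : ℝ) : ℂ) * f n := by
    rw [Finset.sum_filter]
    apply Finset.sum_congr rfl
    intro n _
    split <;> simp
  rw [hfil, ← mul_sub, ← Finset.sum_sub_distrib]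
  rw [norm_mul, norm_inv, Complex.norm_natCast]
  have hptk : ∀ n ∈ Finset.Icc 1 N,
      ‖(((if sigmaRatio n ≤ u then (1:ℝ) else 0) : ℝ) : ℂ) * f n - f n * ((P.eval (sigmaRatio n) : ℝ) : ℂ)‖
        ≤ ‖f n‖ * (ε₁ + (if |sigmaRatio n - u| ≤ δ then (1:ℝ) else 0)) := by
    intro n hn
    obtain ⟨h1, -⟩ := Finset.mem_Icc.mp hn
    have hmem : sigmaRatio n ∈ Set.Icc (0:ℝ) 1 :=
      ⟨(sigmaRatio_pos h1).le, sigmaRatio_le_one h1⟩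
    have heq : (((if sigmaRatio n ≤ u then (1:ℝ) else 0) : ℝ) : ℂ) * f n
        - f n * ((P.eval (sigmaRatio n) : ℝ) : ℂ)
        = f n * ((((if sigmaRatio n ≤ u then (1:ℝ) else 0) - P.eval (sigmaRatio n) : ℝ)) : ℂ) := by
      push_cast
      ring
    rw [heq, norm_mul]
    apply mul_le_mul_of_nonneg_left _ (norm_nonneg _)
    rw [Complex.norm_real]
    exact le_trans (le_of_eq rfl) (hPb _ hmem)
  calc (N:ℝ)⁻¹ * ‖∑ n ∈ Finset.Icc 1 N,
        ((((if sigmaRatio n ≤ u then (1:ℝ) else 0) : ℝ) : ℂ) * f n - f n * ((P.eval (sigmaRatio n) : ℝ) : ℂ))‖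
      ≤ (N:ℝ)⁻¹ * ∑ n ∈ Finset.Icc 1 N,
          ‖f n‖ * (ε₁ + (if |sigmaRatio n - u| ≤ δ then (1:ℝ) else 0)) := by
        apply mul_le_mul_of_nonneg_left _ (by positivity)
        exact le_trans (norm_sum_le _ _) (Finset.sum_le_sum hptk)
    _ = (N:ℝ)⁻¹ * (ε₁ * ∑ n ∈ Finset.Icc 1 N, ‖f n‖
          + ∑ n ∈ (Finset.Icc 1 N).filter (fun n => |sigmaRatio n - u| ≤ δ), ‖f n‖) := by
        congr 1
        rw [Finset.sum_filter, Finset.mul_sum, ← Finset.sum_add_distrib]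
        apply Finset.sum_congr rfl
        intro n _
        split <;> ring
    _ ≤ (N:ℝ)⁻¹ * (ε₁ * (Real.sqrt (C*N) * Real.sqrt N)
          + Real.sqrt (C*N) * Real.sqrt (ε₂ * N)) := by
        apply mul_le_mul_of_nonneg_left _ (by positivity)
        apply add_le_add
        · apply mul_le_mul_of_nonneg_left _ hε₁
          calc ∑ n ∈ Finset.Icc 1 N, ‖f n‖
              ≤ Real.sqrt (∑ n ∈ Finset.Icc 1 N, ‖f n‖^2) * Real.sqrt ((Finset.Icc 1 N).card) :=
                cs_bound f _ _ (subset_refl _)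
            _ ≤ Real.sqrt (C*N) * Real.sqrt N := by
                apply mul_le_mul
                · exact Real.sqrt_le_sqrt hmsN
                · apply Real.sqrt_le_sqrt
                  rw [Nat.card_Icc]
                  push_cast
                  linarith
                · positivity
                · positivity
        · calc ∑ n ∈ (Finset.Icc 1 N).filter (fun n => |sigmaRatio n - u| ≤ δ), ‖f n‖
              ≤ Real.sqrt (∑ n ∈ Finset.Icc 1 N, ‖f n‖^2)
                  * Real.sqrt (((Finset.Icc 1 N).filter (fun n => |sigmaRatio n - u| ≤ δ)).card) :=
                cs_bound f _ _ (Finset.filter_subset _ _)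
            _ ≤ Real.sqrt (C*N) * Real.sqrt (ε₂ * N) := by
                apply mul_le_mul
                · exact Real.sqrt_le_sqrt hmsN
                · exact Real.sqrt_le_sqrt hconcN
                · positivity
                · positivity
    _ = ε₁ * Real.sqrt C + Real.sqrt (C * ε₂) := by
        rw [Real.sqrt_mul hC0.le, Real.sqrt_mul hε₂, Real.sqrt_mul hC0.le]
        have hss : Real.sqrt (N:ℝ) * Real.sqrt (N:ℝ) = (N:ℝ) := Real.mul_self_sqrt hN0.le
        have hexp : ε₁ * (Real.sqrt C * Real.sqrt (N:ℝ) * Real.sqrt (N:ℝ))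
            + Real.sqrt C * Real.sqrt (N:ℝ) * (Real.sqrt ε₂ * Real.sqrt (N:ℝ))
            = (ε₁ * Real.sqrt C + Real.sqrt C * Real.sqrt ε₂) * ((N:ℝ)) := by
          linear_combination (ε₁ * Real.sqrt C + Real.sqrt C * Real.sqrt ε₂) * hss
        rw [hexp]
        field_simp

lemma diff_est (f : ℕ → ℂ) {C u a b δ ε₂ : ℝ} (hab : a ≤ b)
    (hw : ∀ t : ℝ, a < t → t ≤ b → |t - u| ≤ δ) (N : ℕ)
    (hmsN : ∑ n ∈ Finset.Icc 1 N, ‖f n‖^2 ≤ C * N) (hN1 : 1 ≤ N)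
    (hconcN : (((Finset.Icc 1 N).filter (fun n => |sigmaRatio n - u| ≤ δ)).card : ℝ) ≤ ε₂ * N)
    (hC0 : 0 ≤ C) (hε₂ : 0 ≤ ε₂) :
    ‖(N:ℂ)⁻¹ * (∑ n ∈ (Finset.Icc 1 N).filter (fun n => sigmaRatio n ≤ b), f n)
      - (N:ℂ)⁻¹ * (∑ n ∈ (Finset.Icc 1 N).filter (fun n => sigmaRatio n ≤ a), f n)‖
        ≤ Real.sqrt (C * ε₂) := by
  have hN0 : (0:ℝ) < N := by exact_mod_cast hN1
  set Fa := (Finset.Icc 1 N).filter (fun n => sigmaRatio n ≤ a) with hFa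
  set Fb := (Finset.Icc 1 N).filter (fun n => sigmaRatio n ≤ b) with hFb
  have hsub : Fa ⊆ Fb := by
    exact Finset.monotone_filter_right _ (fun n _ hn => le_trans hn hab)
  have hdiff : ∑ n ∈ Fb, f n - ∑ n ∈ Fa, f n = ∑ n ∈ Fb \ Fa, f n :=
    (Finset.sum_sdiff_eq_sub hsub).symm
  have hwin : Fb \ Fa ⊆ (Finset.Icc 1 N).filter (fun n => |sigmaRatio n - u| ≤ δ) := by
    intro n hn
    obtain ⟨hnb, hna⟩ := Finset.mem_sdiff.mp hn
    obtain ⟨hnI, hnle⟩ := Finset.mem_filter.mp hnb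
    have hgt : a < sigmaRatio n := by
      by_contra h
      exact hna (Finset.mem_filter.mpr ⟨hnI, not_lt.mp h⟩)
    exact Finset.mem_filter.mpr ⟨hnI, hw _ hgt hnle⟩
  rw [← mul_sub, hdiff, norm_mul, norm_inv, Complex.norm_natCast]
  calc (N:ℝ)⁻¹ * ‖∑ n ∈ Fb \ Fa, f n‖
      ≤ (N:ℝ)⁻¹ * ∑ n ∈ Fb \ Fa, ‖f n‖ := by
        apply mul_le_mul_of_nonneg_left (norm_sum_le _ _) (by positivity)
    _ ≤ (N:ℝ)⁻¹ * (Real.sqrt (∑ n ∈ Finset.Icc 1 N, ‖f n‖^2) * Real.sqrt ((Fb \ Fa).card)) := by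
        apply mul_le_mul_of_nonneg_left _ (by positivity)
        apply cs_bound f _ _
        intro n hn
        exact (Finset.mem_filter.mp (hwin hn)).1
    _ ≤ (N:ℝ)⁻¹ * (Real.sqrt (C*N) * Real.sqrt (ε₂*N)) := by
        apply mul_le_mul_of_nonneg_left _ (by positivity)
        apply mul_le_mul
        · exact Real.sqrt_le_sqrt hmsN
        · apply Real.sqrt_le_sqrt
          calc ((Fb \ Fa).card : ℝ)
              ≤ ((((Finset.Icc 1 N).filter (fun n => |sigmaRatio n - u| ≤ δ))).card : ℝ) := by
                exact_mod_cast Finset.card_le_card hwin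
            _ ≤ ε₂ * N := hconcN
        · positivity
        · positivity
    _ = Real.sqrt (C * ε₂) := by
        rw [Real.sqrt_mul hC0, Real.sqrt_mul hε₂, Real.sqrt_mul hC0]
        have hss : Real.sqrt (N:ℝ) * Real.sqrt (N:ℝ) = (N:ℝ) := Real.mul_self_sqrt hN0.le
        have hexp : Real.sqrt C * Real.sqrt (N:ℝ) * (Real.sqrt ε₂ * Real.sqrt (N:ℝ))
            = Real.sqrt C * Real.sqrt ε₂ * (N:ℝ) := by
          linear_combination (Real.sqrt C * Real.sqrt ε₂) * hss
        rw [hexp]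
        field_simp

set_option maxHeartbeats 1000000 in
theorem davenport_analogue_smallmult (f : ℕ → ℂ)
    (hf1 : f 1 = 1)
    (hfmul : ∀ m n : ℕ, Nat.Coprime m n → f (m * n) = f m * f n)
    (hms : ∃ C : ℝ, ∀ᶠ N : ℕ in atTop, ∑ n ∈ Finset.Icc 1 N, ‖f n‖ ^ 2 ≤ C * N)
    (hmean : ∀ k : ℕ, ∃ c : ℂ,
      Tendsto (fun N : ℕ => (N : ℂ)⁻¹ * ∑ n ∈ Finset.Icc 1 N,
        f n * ((sigmaRatio n : ℝ) : ℂ) ^ k) atTop (nhds c)) :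
    ∃ D : ℝ → ℂ, ContinuousOn D (Set.Icc 0 1) ∧
      ∀ u ∈ Set.Icc (0 : ℝ) 1,
        Tendsto (fun N : ℕ => (N : ℂ)⁻¹ *
            ∑ n ∈ (Finset.Icc 1 N).filter (fun n : ℕ => sigmaRatio n ≤ u), f n)
          atTop (nhds (D u)) := by
  classical
  obtain ⟨C₀, hms₀⟩ := hms
  set C := max C₀ 1 with hCdef
  have hC : 1 ≤ C := le_max_right _ _
  have hC0 : (0:ℝ) < C := by linarith
  have hmsC : ∀ᶠ N : ℕ in atTop, ∑ n ∈ Finset.Icc 1 N, ‖f n‖^2 ≤ C * N := by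
    filter_upwards [hms₀] with N h
    calc ∑ n ∈ Finset.Icc 1 N, ‖f n‖^2 ≤ C₀ * N := h
      _ ≤ C * N := by
          apply mul_le_mul_of_nonneg_right (le_max_left _ _) (Nat.cast_nonneg N)
  choose c hc using hmean
  set S : ℝ → ℕ → ℂ := fun u N => (N:ℂ)⁻¹ *
    ∑ n ∈ (Finset.Icc 1 N).filter (fun n : ℕ => sigmaRatio n ≤ u), f n with hSdef
  have hsqC : 0 < Real.sqrt C := Real.sqrt_pos.mpr hC0
  -- KEY approximation property
  have key : ∀ u ∈ Set.Icc (0:ℝ) 1, ∀ ε : ℝ, 0 < ε → ∃ z : ℂ,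
      ∀ᶠ N : ℕ in atTop, ‖S u N - z‖ ≤ ε := by
    intro u hu ε hε
    set ε₁ := ε/(4*Real.sqrt C) with hε₁def
    have hε₁pos : 0 < ε₁ := by positivity
    set ε₂ := ε^2/(16*C) with hε₂def
    have hε₂pos : 0 < ε₂ := by positivity
    obtain ⟨δ, hδpos, hconc⟩ := conc u ε₂ hu.1 hε₂pos
    obtain ⟨P, hP⟩ := exists_polynomial_near_of_continuousOn 0 1
      (fun x : ℝ => max 0 (min 1 ((u + δ - x)/δ))) ((ramp_cont u δ).continuousOn) ε₁ hε₁pos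
    have hPb : ∀ x ∈ Set.Icc (0:ℝ) 1,
        |(if x ≤ u then (1:ℝ) else 0) - P.eval x| ≤ ε₁ + (if |x - u| ≤ δ then (1:ℝ) else 0) := by
      intro x hx
      have h1 := ramp_bound u δ hδpos x
      have h2 := hP x hx
      calc |(if x ≤ u then (1:ℝ) else 0) - P.eval x|
          ≤ |(if x ≤ u then (1:ℝ) else 0) - max 0 (min 1 ((u + δ - x)/δ))|
            + |max 0 (min 1 ((u + δ - x)/δ)) - P.eval x| := abs_sub_le _ _ _
        _ ≤ (if |x - u| ≤ δ then (1:ℝ) else 0) + ε₁ := by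
            apply add_le_add h1
            rw [abs_sub_comm]
            exact h2.le
        _ = ε₁ + (if |x - u| ≤ δ then (1:ℝ) else 0) := by ring
    have hEst := key_est f hC hmsC u hε₁pos.le hε₂pos.le hδpos hconc P hPb
    refine ⟨∑ k ∈ Finset.range (P.natDegree + 1), (P.coeff k : ℂ) * c k, ?_⟩
    have hpoly := poly_mean f c hc P
    have hpoly' : ∀ᶠ N : ℕ in atTop,
        ‖(N:ℂ)⁻¹ * ∑ n ∈ Finset.Icc 1 N, f n * ((P.eval (sigmaRatio n) : ℝ) : ℂ)
          - ∑ k ∈ Finset.range (P.natDegree + 1), (P.coeff k : ℂ) * c k‖ ≤ ε/4 := by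
      have := Metric.tendsto_atTop.mp hpoly (ε/4) (by positivity)
      obtain ⟨K, hK⟩ := this
      rw [eventually_atTop]
      exact ⟨K, fun N hN => by
        have := hK N hN
        rw [dist_eq_norm] at this
        exact this.le⟩
    have hval1 : ε₁ * Real.sqrt C = ε/4 := by
      rw [hε₁def]
      field_simp
    have hval2 : Real.sqrt (C * ε₂) = ε/4 := by
      have : C * ε₂ = (ε/4)^2 := by
        rw [hε₂def]
        field_simp
        ring
      rw [this, Real.sqrt_sq (by positivity)]
    filter_upwards [hEst, hpoly'] with N h1 h2
    calc ‖S u N - (∑ k ∈ Finset.range (P.natDegree + 1), (P.coeff k : ℂ) * c k)‖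
        ≤ ‖S u N - (N:ℂ)⁻¹ * ∑ n ∈ Finset.Icc 1 N, f n * ((P.eval (sigmaRatio n) : ℝ) : ℂ)‖
          + ‖(N:ℂ)⁻¹ * ∑ n ∈ Finset.Icc 1 N, f n * ((P.eval (sigmaRatio n) : ℝ) : ℂ)
            - ∑ k ∈ Finset.range (P.natDegree + 1), (P.coeff k : ℂ) * c k‖ :=
          norm_sub_le_norm_sub_add_norm_sub _ _ _
      _ ≤ (ε₁ * Real.sqrt C + Real.sqrt (C * ε₂)) + ε/4 := add_le_add h1 h2
      _ = ε/4 + ε/4 + ε/4 := by rw [hval1, hval2]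
      _ ≤ ε := by linarith
  -- Cauchy and limits
  have hcauchy : ∀ u ∈ Set.Icc (0:ℝ) 1, CauchySeq (S u) := by
    intro u hu
    rw [Metric.cauchySeq_iff]
    intro ε hε
    obtain ⟨z, hz⟩ := key u hu (ε/3) (by positivity)
    obtain ⟨K, hK⟩ := eventually_atTop.mp hz
    refine ⟨K, fun m hm n hn => ?_⟩
    have h1 := hK m hm
    have h2 := hK n hn
    calc dist (S u m) (S u n) ≤ dist (S u m) z + dist z (S u n) := dist_triangle _ _ _
      _ = ‖S u m - z‖ + ‖S u n - z‖ := by rw [dist_eq_norm, dist_comm, dist_eq_norm]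
      _ ≤ ε/3 + ε/3 := add_le_add h1 h2
      _ < ε := by linarith
  have htend : ∀ u ∈ Set.Icc (0:ℝ) 1,
      Tendsto (S u) atTop (nhds (limUnder atTop (S u))) := by
    intro u hu
    obtain ⟨l, hl⟩ := cauchySeq_tendsto_of_complete (hcauchy u hu)
    exact tendsto_nhds_limUnder ⟨l, hl⟩
  refine ⟨fun u => limUnder atTop (S u), ?_, fun u hu => htend u hu⟩
  -- continuity
  intro u hu
  rw [Metric.continuousWithinAt_iff]
  intro ε hε
  set ε₂ := ε^2/(64*C) with hε₂def
  have hε₂pos : 0 < ε₂ := by positivity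
  obtain ⟨δ, hδpos, hconc⟩ := conc u ε₂ hu.1 hε₂pos
  have hval : Real.sqrt (C * ε₂) = ε/8 := by
    have : C * ε₂ = (ε/8)^2 := by
      rw [hε₂def]
      field_simp
      ring
    rw [this, Real.sqrt_sq (by positivity)]
  refine ⟨δ, hδpos, ?_⟩
  intro u' hu' hdist
  have hbound : ∀ᶠ N : ℕ in atTop, dist (S u' N) (S u N) ≤ ε/8 := by
    filter_upwards [hconc, hmsC, eventually_ge_atTop 1] with N h1 h2 h3
    have hd : |u' - u| < δ := by rwa [Real.dist_eq] at hdist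
    rcases le_total u u' with hle | hle
    · have hw : ∀ t : ℝ, u < t → t ≤ u' → |t - u| ≤ δ := by
        intro t ht1 ht2
        rw [abs_of_pos (by linarith)]
        have h5 := le_abs_self (u' - u)
        linarith
      have := diff_est f hle hw N h2 h3 h1 hC0.le hε₂pos.le
      rw [dist_eq_norm]
      calc ‖S u' N - S u N‖ ≤ Real.sqrt (C * ε₂) := this
        _ = ε/8 := hval
    · have hw : ∀ t : ℝ, u' < t → t ≤ u → |t - u| ≤ δ := by
        intro t ht1 ht2
        rw [abs_of_nonpos (by linarith), neg_sub]
        have h5 := neg_le_abs (u' - u)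
        linarith
      have := diff_est f hle hw N h2 h3 h1 hC0.le hε₂pos.le
      rw [dist_eq_norm, ← norm_neg, neg_sub]
      calc ‖S u N - S u' N‖ ≤ Real.sqrt (C * ε₂) := this
        _ = ε/8 := hval
  have htdist : Tendsto (fun N => dist (S u' N) (S u N)) atTop
      (nhds (dist (limUnder atTop (S u')) (limUnder atTop (S u)))) :=
    (htend u' hu').dist (htend u hu)
  have hfinal : dist (limUnder atTop (S u')) (limUnder atTop (S u)) ≤ ε/8 :=
    le_of_tendsto htdist hbound
  calc dist (limUnder atTop (S u')) (limUnder atTop (S u)) ≤ ε/8 := hfinal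
    _ < ε := by linarith
end

section
/- Let f be a multiplicative function from the positive integers to the complex numbers that is bounded in mean square, and suppose that for every nonnegative integer k the function n ↦ f(n)·(n/σ(n))^k possesses a mean value, so that D_f(u) := lim_{x→∞} (1/x) ∑_{n≤x, n/σ(n)≤u} f(n) exists for all u ∈ [0,1]. Then for every u ∈ [0,1], lim_{x→∞} (1/x²) ∑_{n≤x, n/σ(n)≤u} n·f(n) = D_f(u)/2. -/
open Filter ArithmeticFunction

lemma nat_sq_inv_sum_range : Tendsto (fun N : ℕ => ((N : ℂ)^2)⁻¹ * ∑ m ∈ Finset.range N, (m : ℂ))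
    atTop (nhds (1/2)) := by
  have hre : Tendsto (fun N : ℕ => (∑ m ∈ Finset.range N, (m : ℝ)) / (N : ℝ)^2)
      atTop (nhds (1/2)) := by
    have heq : ∀ᶠ N : ℕ in atTop, (∑ m ∈ Finset.range N, (m : ℝ)) / (N : ℝ)^2
        = (1 - (N : ℝ)⁻¹) / 2 := by
      filter_upwards [eventually_ge_atTop 1] with N hN
      have hN0 : (N : ℝ) ≠ 0 := by positivity
      have h2 : (∑ m ∈ Finset.range N, (m : ℝ)) * 2 = (N : ℝ) * ((N : ℝ) - 1) := by
        have := Finset.sum_range_id_mul_two N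
        have := congrArg (fun k : ℕ => (k : ℝ)) this
        push_cast [Nat.cast_sub hN] at this
        linarith [this]
      field_simp
      nlinarith [h2]
    have : Tendsto (fun N : ℕ => (1 - (N : ℝ)⁻¹) / 2) atTop (nhds (1/2)) := by
      have := tendsto_inv_atTop_zero.comp (tendsto_natCast_atTop_atTop (R := ℝ))
      have := (tendsto_const_nhds (x := (1:ℝ)) (f := atTop (α := ℕ))).sub this
      simpa using this.div_const 2
    refine this.congr' ?_
    filter_upwards [heq] with N h using h.symm
  have h := (Complex.continuous_ofReal.tendsto _).comp hre
  rw [show ((1/2 : ℝ) : ℂ) = 1/2 by norm_num] at h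
  refine h.congr fun N => ?_
  simp only [Function.comp_apply]
  push_cast
  ring

lemma weighted_cesaro (b : ℕ → ℂ) (c : ℂ) (hb : Tendsto b atTop (nhds c)) :
    Tendsto (fun N : ℕ => ((N : ℂ)^2)⁻¹ * ∑ m ∈ Finset.range N, (m : ℂ) * b m)
      atTop (nhds (c/2)) := by
  have key : ∀ N : ℕ, ((N : ℂ)^2)⁻¹ * ∑ m ∈ Finset.range N, (m : ℂ) * b m
      = ((N : ℂ)^2)⁻¹ * (∑ m ∈ Finset.range N, (m : ℂ)) * c
        + ((N : ℂ)^2)⁻¹ * ∑ m ∈ Finset.range N, (m : ℂ) * (b m - c) := by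
    intro N
    rw [Finset.sum_congr rfl (fun m _ => by ring : ∀ m ∈ Finset.range N,
      (m : ℂ) * b m = (m : ℂ) * c + (m : ℂ) * (b m - c)), Finset.sum_add_distrib,
      ← Finset.sum_mul]
    ring
  have h1 : Tendsto (fun N : ℕ => ((N : ℂ)^2)⁻¹ * (∑ m ∈ Finset.range N, (m : ℂ)) * c)
      atTop (nhds (c/2)) := by
    have h := nat_sq_inv_sum_range.mul_const c
    rwa [show (1/2 : ℂ) * c = c / 2 by ring] at h
  have h2 : Tendsto (fun N : ℕ => ((N : ℂ)^2)⁻¹ * ∑ m ∈ Finset.range N, (m : ℂ) * (b m - c))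
      atTop (nhds 0) := by
    rw [tendsto_zero_iff_norm_tendsto_zero]
    have hces : Tendsto (fun N : ℕ => (N : ℝ)⁻¹ • ∑ m ∈ Finset.range N, ‖b m - c‖)
        atTop (nhds 0) := by
      have : Tendsto (fun m : ℕ => ‖b m - c‖) atTop (nhds 0) := by
        simpa using (hb.sub_const c).norm
      simpa using this.cesaro
    refine squeeze_zero (fun N => norm_nonneg _) (fun N => ?_) hces
    calc ‖((N : ℂ)^2)⁻¹ * ∑ m ∈ Finset.range N, (m : ℂ) * (b m - c)‖
        = ((N : ℝ)^2)⁻¹ * ‖∑ m ∈ Finset.range N, (m : ℂ) * (b m - c)‖ := by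
          rw [norm_mul]; norm_num
      _ ≤ ((N : ℝ)^2)⁻¹ * ∑ m ∈ Finset.range N, (N : ℝ) * ‖b m - c‖ := by
          gcongr
          refine (norm_sum_le _ _).trans (Finset.sum_le_sum fun m hm => ?_)
          rw [norm_mul]
          gcongr
          simpa using (Finset.mem_range.mp hm).le
      _ ≤ (N : ℝ)⁻¹ • ∑ m ∈ Finset.range N, ‖b m - c‖ := by
          rw [← Finset.mul_sum, smul_eq_mul]
          rcases Nat.eq_zero_or_pos N with h | h
          · simp [h]
          · have : ((N : ℝ)^2)⁻¹ * ((N : ℝ) * ∑ m ∈ Finset.range N, ‖b m - c‖)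
                = (N : ℝ)⁻¹ * ∑ m ∈ Finset.range N, ‖b m - c‖ := by
              have hN0 : (N : ℝ) ≠ 0 := by positivity
              field_simp
            rw [this]
  have := h1.add h2
  rw [add_zero] at this
  exact this.congr fun N => (key N).symm

theorem davenport_analogue_weighted (f : ℕ → ℂ)
    (hf1 : f 1 = 1)
    (hfmul : ∀ m n : ℕ, Nat.Coprime m n → f (m * n) = f m * f n)
    (hms : ∃ C : ℝ, ∀ᶠ N : ℕ in atTop, ∑ n ∈ Finset.Icc 1 N, ‖f n‖ ^ 2 ≤ C * N)
    (hmean : ∀ k : ℕ, ∃ c : ℂ,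
      Tendsto (fun N : ℕ => (N : ℂ)⁻¹ * ∑ n ∈ Finset.Icc 1 N,
        f n * ((sigmaRatio n : ℝ) : ℂ) ^ k) atTop (nhds c))
    (D : ℝ → ℂ)
    (hD : ∀ u ∈ Set.Icc (0 : ℝ) 1,
      Tendsto (fun N : ℕ => (N : ℂ)⁻¹ *
          ∑ n ∈ (Finset.Icc 1 N).filter (fun n : ℕ => sigmaRatio n ≤ u), f n)
        atTop (nhds (D u))) :
    ∀ u ∈ Set.Icc (0 : ℝ) 1,
      Tendsto (fun N : ℕ => ((N : ℂ) ^ 2)⁻¹ *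
          ∑ n ∈ (Finset.Icc 1 N).filter (fun n : ℕ => sigmaRatio n ≤ u), (n : ℂ) * f n)
        atTop (nhds (D u / 2)) := by
  intro u hu
  set A : ℕ → ℂ := fun n => if sigmaRatio n ≤ u then f n else 0 with hA
  set S : ℕ → ℂ := fun N => ∑ n ∈ Finset.Icc 1 N, A n with hSdef
  have hSfilter : ∀ N : ℕ,
      ∑ n ∈ (Finset.Icc 1 N).filter (fun n : ℕ => sigmaRatio n ≤ u), f n = S N := by
    intro N; rw [hSdef]; exact Finset.sum_filter _ _
  have hS : Tendsto (fun N : ℕ => (N : ℂ)⁻¹ * S N) atTop (nhds (D u)) := by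
    refine (hD u hu).congr fun N => by rw [hSfilter]
  have hTfilter : ∀ N : ℕ,
      ∑ n ∈ (Finset.Icc 1 N).filter (fun n : ℕ => sigmaRatio n ≤ u), (n : ℂ) * f n
        = ∑ n ∈ Finset.Icc 1 N, (n : ℂ) * A n := by
    intro N
    rw [Finset.sum_filter]
    refine Finset.sum_congr rfl fun n _ => ?_
    simp only [hA]
    split <;> simp
  -- summation by parts identity
  have hid : ∀ N : ℕ, ∑ n ∈ Finset.Icc 1 N, (n : ℂ) * A n
      = (N : ℂ) * S N - ∑ m ∈ Finset.range N, S m := by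
    intro N
    induction N with
    | zero => simp [hSdef]
    | succ N ih =>
      rw [Finset.sum_Icc_succ_top (Nat.one_le_iff_ne_zero.mpr (Nat.succ_ne_zero N)), ih,
        Finset.sum_range_succ]
      have hSsucc : S (N + 1) = S N + A (N + 1) := by
        rw [hSdef]
        exact Finset.sum_Icc_succ_top (Nat.one_le_iff_ne_zero.mpr (Nat.succ_ne_zero N)) _
      rw [hSsucc]
      push_cast
      ring
  -- define b
  set b : ℕ → ℂ := fun m => if m = 0 then D u else (m : ℂ)⁻¹ * S m with hbdef
  have hb : Tendsto b atTop (nhds (D u)) := by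
    refine hS.congr' ?_
    filter_upwards [eventually_ge_atTop 1] with m hm
    simp [hbdef, Nat.one_le_iff_ne_zero.mp hm]
  have hSb : ∀ m : ℕ, S m = (m : ℂ) * b m := by
    intro m
    rcases Nat.eq_zero_or_pos m with h | h
    · simp [h, hSdef]
    · have hm0 : (m : ℂ) ≠ 0 := Nat.cast_ne_zero.mpr (Nat.pos_iff_ne_zero.mp h)
      simp only [hbdef, Nat.pos_iff_ne_zero.mp h, if_false]
      field_simp
  have h2 : Tendsto (fun N : ℕ => ((N : ℂ)^2)⁻¹ * ∑ m ∈ Finset.range N, S m)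
      atTop (nhds (D u / 2)) := by
    refine (weighted_cesaro b (D u) hb).congr fun N => ?_
    congr 1
    exact Finset.sum_congr rfl fun m _ => (hSb m).symm
  have hmain : Tendsto (fun N : ℕ => (N : ℂ)⁻¹ * S N
      - ((N : ℂ)^2)⁻¹ * ∑ m ∈ Finset.range N, S m) atTop (nhds (D u / 2)) := by
    have := hS.sub h2
    have heq : D u - D u / 2 = D u / 2 := by ring
    rwa [heq] at this
  refine hmain.congr' ?_
  filter_upwards [eventually_ge_atTop 1] with N hN
  have hN0 : (N : ℂ) ≠ 0 := Nat.cast_ne_zero.mpr (Nat.one_le_iff_ne_zero.mp hN)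
  rw [hTfilter, hid]
  field_simp
end

section
/- Let f be a multiplicative function from the positive integers to the complex numbers that is bounded in mean square, and suppose that for every nonnegative integer k the function n ↦ f(n)·(n/σ(n))^k possesses a mean value. Then for every continuous function ψ : [0,1] → ℂ, the limit lim_{x→∞} (1/x) ∑_{n≤x} f(n)·ψ(n/σ(n)) exists. -/
open Filter ArithmeticFunction

lemma sigmaRatio_mem {n : ℕ} (hn : 1 ≤ n) : sigmaRatio n ∈ Set.Icc (0:ℝ) 1 := by
  have hσ : n ≤ sigma 1 n := by
    rw [ArithmeticFunction.sigma_one_apply]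
    exact Finset.single_le_sum (fun i _ => Nat.zero_le i)
      (Nat.mem_divisors_self n (by omega))
  have hσ0 : (0:ℝ) < ((sigma 1 n : ℕ) : ℝ) := by
    have : 0 < sigma 1 n := lt_of_lt_of_le hn hσ
    exact_mod_cast this
  refine ⟨div_nonneg (Nat.cast_nonneg n) (Nat.cast_nonneg _), ?_⟩
  rw [sigmaRatio, div_le_one hσ0]
  exact_mod_cast hσ

theorem smoothed_mean_value_exists (f : ℕ → ℂ)
    (hf1 : f 1 = 1)
    (hfmul : ∀ m n : ℕ, Nat.Coprime m n → f (m * n) = f m * f n)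
    (hms : ∃ C : ℝ, ∀ᶠ N : ℕ in atTop, ∑ n ∈ Finset.Icc 1 N, ‖f n‖ ^ 2 ≤ C * N)
    (hmean : ∀ k : ℕ, ∃ c : ℂ,
      Tendsto (fun N : ℕ => (N : ℂ)⁻¹ * ∑ n ∈ Finset.Icc 1 N,
        f n * ((sigmaRatio n : ℝ) : ℂ) ^ k) atTop (nhds c)) :
    ∀ ψ : ℝ → ℂ, ContinuousOn ψ (Set.Icc 0 1) →
      ∃ L : ℂ, Tendsto (fun N : ℕ => (N : ℂ)⁻¹ * ∑ n ∈ Finset.Icc 1 N,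
        f n * ψ (sigmaRatio n)) atTop (nhds L) := by
  intro ψ hψ
  set A : (ℝ → ℂ) → ℕ → ℂ := fun g N =>
    (N : ℂ)⁻¹ * ∑ n ∈ Finset.Icc 1 N, f n * g (sigmaRatio n) with hA
  obtain ⟨C, hC⟩ := hms
  set B : ℝ := Real.sqrt (max C 1) with hBdef
  have hCm : (0:ℝ) ≤ max C 1 := le_trans zero_le_one (le_max_right _ _)
  have hB0 : 0 ≤ B := Real.sqrt_nonneg _
  -- Step 1: first-moment bound
  have habs : ∀ᶠ N : ℕ in atTop, ∑ n ∈ Finset.Icc 1 N, ‖f n‖ ≤ B * N := by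
    filter_upwards [hC] with N hCN
    have h2 : ∑ n ∈ Finset.Icc 1 N, ‖f n‖ ^ 2 ≤ max C 1 * N := by
      refine hCN.trans ?_
      exact mul_le_mul_of_nonneg_right (le_max_left _ _) (Nat.cast_nonneg N)
    have hcard : (Finset.Icc 1 N).card = N := by simp
    have hcs : (∑ n ∈ Finset.Icc 1 N, ‖f n‖) ^ 2 ≤
        (∑ n ∈ Finset.Icc 1 N, ‖f n‖ ^ 2) * N := by
      have := Finset.sum_mul_sq_le_sq_mul_sq (Finset.Icc 1 N) (fun n => ‖f n‖) 1
      simpa [hcard] using this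
    have hsq : (∑ n ∈ Finset.Icc 1 N, ‖f n‖) ^ 2 ≤ (B * N) ^ 2 := by
      have : (B * N) ^ 2 = max C 1 * N ^ 2 := by
        rw [mul_pow, Real.sq_sqrt hCm]
      rw [this]
      calc (∑ n ∈ Finset.Icc 1 N, ‖f n‖) ^ 2
          ≤ (∑ n ∈ Finset.Icc 1 N, ‖f n‖ ^ 2) * N := hcs
        _ ≤ (max C 1 * N) * N := mul_le_mul_of_nonneg_right h2 (Nat.cast_nonneg N)
        _ = max C 1 * N ^ 2 := by ring
    have hnn : 0 ≤ ∑ n ∈ Finset.Icc 1 N, ‖f n‖ :=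
      Finset.sum_nonneg fun n _ => norm_nonneg _
    have hBN : 0 ≤ B * (N:ℝ) := mul_nonneg hB0 (Nat.cast_nonneg N)
    exact (pow_le_pow_iff_left₀ hnn hBN (by norm_num)).mp hsq
  -- Step 2: comparison of averages
  have hcomp : ∀ (g h : ℝ → ℂ) (ε : ℝ), 0 ≤ ε →
      (∀ x ∈ Set.Icc (0:ℝ) 1, ‖g x - h x‖ ≤ ε) →
      ∀ᶠ N : ℕ in atTop, ‖A g N - A h N‖ ≤ B * ε := by
    intro g h ε hε hgh
    filter_upwards [habs, eventually_ge_atTop 1] with N hN hN1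
    have hdiff : A g N - A h N =
        (N : ℂ)⁻¹ * ∑ n ∈ Finset.Icc 1 N, f n * (g (sigmaRatio n) - h (sigmaRatio n)) := by
      simp only [hA]
      rw [← mul_sub, ← Finset.sum_sub_distrib]
      congr 1
      exact Finset.sum_congr rfl fun n _ => by ring
    rw [hdiff]
    have hnorm : ‖∑ n ∈ Finset.Icc 1 N, f n * (g (sigmaRatio n) - h (sigmaRatio n))‖ ≤
        (∑ n ∈ Finset.Icc 1 N, ‖f n‖) * ε := by
      refine (norm_sum_le _ _).trans ?_
      rw [Finset.sum_mul]
      refine Finset.sum_le_sum fun n hn => ?_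
      rw [norm_mul]
      exact mul_le_mul_of_nonneg_left
        (hgh _ (sigmaRatio_mem (Finset.mem_Icc.mp hn).1)) (norm_nonneg _)
    rw [norm_mul, norm_inv]
    have hNpos : (0:ℝ) < N := by exact_mod_cast hN1
    have : ‖(N:ℂ)‖ = (N:ℝ) := by simp
    rw [this]
    calc ((N:ℝ))⁻¹ * ‖∑ n ∈ Finset.Icc 1 N, f n * (g (sigmaRatio n) - h (sigmaRatio n))‖
        ≤ ((N:ℝ))⁻¹ * ((∑ n ∈ Finset.Icc 1 N, ‖f n‖) * ε) := by
          exact mul_le_mul_of_nonneg_left hnorm (by positivity)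
      _ ≤ ((N:ℝ))⁻¹ * ((B * N) * ε) := by
          refine mul_le_mul_of_nonneg_left ?_ (by positivity)
          exact mul_le_mul_of_nonneg_right hN hε
      _ = B * ε := by field_simp
  -- Step 3: polynomial means exist
  choose c hc using hmean
  have hpoly : ∀ p : Polynomial ℂ, ∃ L : ℂ,
      Tendsto (A (fun x => p.eval ((x:ℝ) : ℂ))) atTop (nhds L) := by
    intro p
    refine ⟨∑ k ∈ Finset.range (p.natDegree + 1), p.coeff k * c k, ?_⟩
    have key : ∀ N : ℕ, A (fun x => p.eval ((x:ℝ) : ℂ)) N =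
        ∑ k ∈ Finset.range (p.natDegree + 1),
          p.coeff k * ((N : ℂ)⁻¹ * ∑ n ∈ Finset.Icc 1 N,
            f n * ((sigmaRatio n : ℝ) : ℂ) ^ k) := by
      intro N
      simp only [hA, Polynomial.eval_eq_sum_range, Finset.mul_sum]
      rw [Finset.sum_comm]
      refine Finset.sum_congr rfl fun k _ => ?_
      exact Finset.sum_congr rfl fun n _ => by ring
    have := tendsto_finset_sum (Finset.range (p.natDegree + 1))
      (fun k _ => (hc k).const_mul (p.coeff k))
    refine Tendsto.congr (fun N => (key N).symm) this
  -- Step 4: polynomial approximation of ψ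
  have happrox : ∀ ε : ℝ, 0 < ε → ∃ p : Polynomial ℂ,
      ∀ x ∈ Set.Icc (0:ℝ) 1, ‖ψ x - p.eval ((x:ℝ) : ℂ)‖ ≤ ε := by
    intro ε hε
    obtain ⟨pr, hpr⟩ := exists_polynomial_near_of_continuousOn 0 1 (fun x => (ψ x).re)
      (Complex.continuous_re.comp_continuousOn hψ) (ε / 2) (by positivity)
    obtain ⟨pi, hpi⟩ := exists_polynomial_near_of_continuousOn 0 1 (fun x => (ψ x).im)
      (Complex.continuous_im.comp_continuousOn hψ) (ε / 2) (by positivity)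
    refine ⟨pr.map Complex.ofRealHom + Polynomial.C Complex.I * pi.map Complex.ofRealHom,
      fun x hx => ?_⟩
    have her : (pr.map Complex.ofRealHom).eval ((x:ℝ):ℂ) = ((pr.eval x : ℝ) : ℂ) := by
      rw [Polynomial.eval_map]
      exact Polynomial.eval₂_at_apply Complex.ofRealHom x
    have hei : (pi.map Complex.ofRealHom).eval ((x:ℝ):ℂ) = ((pi.eval x : ℝ) : ℂ) := by
      rw [Polynomial.eval_map]
      exact Polynomial.eval₂_at_apply Complex.ofRealHom x
    have heval : (pr.map Complex.ofRealHom + Polynomial.C Complex.I *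
        pi.map Complex.ofRealHom).eval ((x:ℝ):ℂ) =
        ((pr.eval x : ℝ) : ℂ) + Complex.I * ((pi.eval x : ℝ) : ℂ) := by
      simp [her, hei]
    rw [heval]
    set z : ℂ := ψ x - (((pr.eval x : ℝ) : ℂ) + Complex.I * ((pi.eval x : ℝ) : ℂ)) with hz
    have hre : z.re = (ψ x).re - pr.eval x := by simp [hz]
    have him : z.im = (ψ x).im - pi.eval x := by simp [hz]
    calc ‖z‖ ≤ |z.re| + |z.im| := Complex.norm_le_abs_re_add_abs_im z
      _ ≤ ε / 2 + ε / 2 := by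
          rw [hre, him]
          exact add_le_add (le_of_lt (by simpa [abs_sub_comm] using hpr x hx))
            (le_of_lt (by simpa [abs_sub_comm] using hpi x hx))
      _ = ε := by ring
  -- Step 5: Cauchy sequence
  have hcauchy : CauchySeq (A ψ) := by
    rw [Metric.cauchySeq_iff]
    intro ε hε
    set δ : ℝ := ε / (4 * (B + 1)) with hδdef
    have hδ : 0 < δ := by positivity
    obtain ⟨p, hp⟩ := happrox δ hδ
    have hBδ : B * δ ≤ ε / 4 := by
      have h1 : (B + 1) * δ = ε / 4 := by
        rw [hδdef]
        field_simp
      have h2 : B * δ ≤ (B + 1) * δ :=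
        mul_le_mul_of_nonneg_right (by linarith) hδ.le
      linarith
    obtain ⟨L, hL⟩ := hpoly p
    have hLc : CauchySeq (A (fun x => p.eval ((x:ℝ):ℂ))) := hL.cauchySeq
    rw [Metric.cauchySeq_iff] at hLc
    obtain ⟨M1, hM1⟩ := hLc (ε / 4) (by positivity)
    have hcmp := hcomp ψ (fun x => p.eval ((x:ℝ):ℂ)) δ hδ.le hp
    rw [eventually_atTop] at hcmp
    obtain ⟨M2, hM2⟩ := hcmp
    refine ⟨max M1 M2, fun m hm n hn => ?_⟩
    have h1 := hM2 m (le_trans (le_max_right _ _) hm)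
    have h2 := hM2 n (le_trans (le_max_right _ _) hn)
    have h3 := hM1 m (le_trans (le_max_left _ _) hm) n (le_trans (le_max_left _ _) hn)
    calc dist (A ψ m) (A ψ n)
        ≤ dist (A ψ m) (A (fun x => p.eval ((x:ℝ):ℂ)) m) +
          dist (A (fun x => p.eval ((x:ℝ):ℂ)) m) (A (fun x => p.eval ((x:ℝ):ℂ)) n) +
          dist (A (fun x => p.eval ((x:ℝ):ℂ)) n) (A ψ n) := dist_triangle4 _ _ _ _
      _ ≤ ε / 4 + ε / 4 + ε / 4 := by
          refine add_le_add (add_le_add ?_ h3.le) ?_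
          · rw [dist_eq_norm]; exact le_trans h1 hBδ
          · rw [dist_comm, dist_eq_norm]; exact le_trans h2 hBδ
      _ < ε := by linarith
  exact cauchySeq_tendsto_of_complete hcauchy
end

section
/- Let f be a complex-valued multiplicative function satisfying ∑_p |f(p)−1|/p < ∞ and ∑_p ∑_{j≥2} |f(p^j)|/p^j < ∞, where the sums run over primes p. Then f has a mean value: (1/x) ∑_{n≤x} f(n) converges as x → ∞, and its limit equals the convergent Euler product ∏_p (1 − 1/p)(1 + f(p)/p + f(p²)/p² + ⋯). -/
open Filter ArithmeticFunction

noncomputable section WintnerAux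

set_option maxHeartbeats 1000000

/-- `f` as an arithmetic function (forcing value `0` at `0`). -/
def Waux (f : ℕ → ℂ) : ArithmeticFunction ℂ :=
  ⟨fun n => if n = 0 then 0 else f n, by simp⟩

lemma Waux_apply (f : ℕ → ℂ) {n : ℕ} (hn : n ≠ 0) : Waux f n = f n := by
  simp [Waux, hn]

/-- The Möbius transform `g = f * μ`, so that `f = g * ζ`. -/
def Wg (f : ℕ → ℂ) : ArithmeticFunction ℂ :=
  Waux f * ((ArithmeticFunction.moebius : ArithmeticFunction ℤ) : ArithmeticFunction ℂ)

/-- `g(n)/n` as a function of `n`. -/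
def WG (f : ℕ → ℂ) : ℕ → ℂ := fun n => Wg f n / n

lemma Wg_mul_zeta (f : ℕ → ℂ) :
    Wg f * ((ArithmeticFunction.zeta : ArithmeticFunction ℕ) : ArithmeticFunction ℂ) = Waux f := by
  rw [Wg, mul_assoc, coe_moebius_mul_coe_zeta, mul_one]

lemma sum_divisors_Wg (f : ℕ → ℂ) {n : ℕ} (hn : n ≠ 0) :
    ∑ d ∈ n.divisors, Wg f d = f n := by
  rw [← ArithmeticFunction.coe_mul_zeta_apply, Wg_mul_zeta, Waux_apply f hn]

lemma Wg_one (f : ℕ → ℂ) (hf1 : f 1 = 1) : Wg f 1 = 1 := by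
  have := sum_divisors_Wg f (n := 1) one_ne_zero
  simpa [hf1] using this

lemma Wg_prime_pow (f : ℕ → ℂ) {p : ℕ} (hp : p.Prime) (k : ℕ) :
    Wg f (p ^ (k + 1)) = f (p ^ (k + 1)) - f (p ^ k) := by
  have h1 := sum_divisors_Wg f (n := p ^ (k+1)) (pow_ne_zero _ hp.ne_zero)
  have h2 := sum_divisors_Wg f (n := p ^ k) (pow_ne_zero _ hp.ne_zero)
  rw [Nat.sum_divisors_prime_pow hp] at h1 h2
  rw [Finset.sum_range_succ] at h1
  rw [h2] at h1
  linear_combination h1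

lemma Wg_isMultiplicative (f : ℕ → ℂ) (hf1 : f 1 = 1)
    (hfmul : ∀ m n : ℕ, Nat.Coprime m n → f (m * n) = f m * f n) :
    (Wg f).IsMultiplicative := by
  refine ArithmeticFunction.IsMultiplicative.mul ?_ isMultiplicative_moebius.intCast
  constructor
  · simpa [Waux] using hf1
  · intro m n h
    rcases eq_or_ne m 0 with rfl | hm
    · obtain rfl : n = 1 := Nat.coprime_zero_left n |>.mp h
      simp [Waux, hf1]
    rcases eq_or_ne n 0 with rfl | hn
    · obtain rfl : m = 1 := Nat.coprime_zero_right m |>.mp h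
      simp [Waux, hf1]
    rw [Waux_apply f (Nat.mul_ne_zero hm hn), Waux_apply f hm, Waux_apply f hn]
    exact hfmul m n h

lemma WG_zero (f : ℕ → ℂ) : WG f 0 = 0 := by simp [WG]

lemma WG_one (f : ℕ → ℂ) (hf1 : f 1 = 1) : WG f 1 = 1 := by
  simp [WG, Wg_one f hf1]

lemma WG_mul (f : ℕ → ℂ) (hf1 : f 1 = 1)
    (hfmul : ∀ m n : ℕ, Nat.Coprime m n → f (m * n) = f m * f n)
    {m n : ℕ} (h : Nat.Coprime m n) : WG f (m * n) = WG f m * WG f n := by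
  simp only [WG, (Wg_isMultiplicative f hf1 hfmul).2 h, Nat.cast_mul]
  rw [div_mul_div_comm]

lemma WG_norm (f : ℕ → ℂ) (n : ℕ) : ‖WG f n‖ = ‖Wg f n‖ / n := by
  simp [WG, Complex.norm_natCast]

/-- the quotient `(N/d)/N` (with natural division inside) is at most `1/d`. -/
lemma Wdiv_le (N d : ℕ) : ((N / d : ℕ) : ℝ) / (N : ℝ) ≤ ((d : ℝ))⁻¹ := by
  rcases Nat.eq_zero_or_pos d with rfl | hd
  · simp
  rcases Nat.eq_zero_or_pos N with rfl | hN
  · simp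
  rw [div_le_iff₀ (by positivity : (0:ℝ) < (N:ℝ))]
  calc ((N / d : ℕ) : ℝ) ≤ (N : ℝ) / d := Nat.cast_div_le
    _ = (d : ℝ)⁻¹ * N := by rw [div_eq_inv_mul]

/-- the quotient `(N/d)/N` tends to `1/d`. -/
lemma Wdiv_tendsto (d : ℕ) (hd : 0 < d) :
    Tendsto (fun N : ℕ => ((N / d : ℕ) : ℝ) / (N : ℝ)) atTop (nhds ((d : ℝ)⁻¹)) := by
  have h1 : Tendsto (fun N : ℕ => ((N % d : ℕ) : ℝ) / (N : ℝ)) atTop (nhds 0) := by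
    apply squeeze_zero (fun N => by positivity) (fun N => ?_)
      (tendsto_const_div_atTop_nhds_zero_nat (d : ℝ))
    rcases Nat.eq_zero_or_pos N with rfl | hN
    · simp
    · gcongr
      exact (Nat.mod_lt _ hd).le
  have h2 : Tendsto (fun N : ℕ => (1 - ((N % d : ℕ) : ℝ) / (N : ℝ)) / d) atTop
      (nhds ((d : ℝ)⁻¹)) := by
    have := ((tendsto_const_nhds (x := (1:ℝ))).sub h1).div_const (d : ℝ)
    simpa using this
  apply h2.congr'
  filter_upwards [eventually_ge_atTop 1] with N hN
  have hN0 : (N : ℝ) ≠ 0 := by positivity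
  have hkey : ((N / d : ℕ) : ℝ) * d = (N : ℝ) - ((N % d : ℕ) : ℝ) := by
    have h := Nat.mod_add_div N d
    have h' : ((N % d : ℕ) : ℝ) + (d : ℝ) * ((N / d : ℕ) : ℝ) = (N : ℝ) := by
      exact_mod_cast congrArg (Nat.cast : ℕ → ℝ) h
    linarith
  have hd0 : (d : ℝ) ≠ 0 := by positivity
  field_simp
  linear_combination -hkey

section Hyp

variable {f : ℕ → ℂ} (hf1 : f 1 = 1)
  (hfmul : ∀ m n : ℕ, Nat.Coprime m n → f (m * n) = f m * f n)
  (hpj : Summable (fun pj : Nat.Primes × ℕ =>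
      ‖f ((pj.1 : ℕ) ^ (pj.2 + 2))‖ / ((pj.1 : ℕ) : ℝ) ^ (pj.2 + 2)))

include hpj in
/-- absolute summability of `f(p^j)/p^j` for a fixed prime. -/
lemma Wha (p : Nat.Primes) : Summable (fun j : ℕ => ‖f ((p:ℕ)^j)‖ / ((p:ℕ):ℝ)^j) :=
  (summable_nat_add_iff 2).mp (hpj.prod_factor p)

lemma Whp1 (p : Nat.Primes) : (1:ℝ) ≤ ((p:ℕ):ℝ) := by exact_mod_cast p.2.one_lt.le

lemma Whppos (p : Nat.Primes) : (0:ℝ) < ((p:ℕ):ℝ) := lt_of_lt_of_le one_pos (Whp1 p)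

lemma Whstep (p : Nat.Primes) (k : ℕ) :
    ‖f ((p:ℕ)^k)‖ / ((p:ℕ):ℝ)^(k+1) ≤ ‖f ((p:ℕ)^k)‖ / ((p:ℕ):ℝ)^k :=
  div_le_div_of_nonneg_left (norm_nonneg _) (pow_pos (Whppos p) k)
    (pow_le_pow_right₀ (Whp1 p) (Nat.le_succ k))

include hf1 in
lemma WGpp_le (p : Nat.Primes) (k : ℕ) : ‖WG f ((p:ℕ)^(k+1))‖ ≤
    ‖f ((p:ℕ)^(k+1))‖ / ((p:ℕ):ℝ)^(k+1) + ‖f ((p:ℕ)^k)‖ / ((p:ℕ):ℝ)^(k+1) := by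
  rw [WG_norm, Wg_prime_pow f p.2 k, Nat.cast_pow, ← add_div]
  gcongr
  exact norm_sub_le _ _

include hf1 hpj in
lemma WSG (p : Nat.Primes) : Summable (fun e : ℕ => ‖WG f ((p:ℕ)^e)‖) := by
  rw [← summable_nat_add_iff 1]
  exact Summable.of_nonneg_of_le (fun k => norm_nonneg _)
    (fun k => (WGpp_le hf1 p k).trans (add_le_add le_rfl (Whstep p k)))
    (((summable_nat_add_iff 1).mpr (Wha hpj p)).add (Wha hpj p))

include hf1 hpj in
/-- bound for the tail sum at a prime. -/
lemma Wc_bound (p : Nat.Primes) : ∑' k : ℕ, ‖WG f ((p:ℕ)^(k+1))‖ ≤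
    2 * (‖f (p:ℕ) - 1‖ / ((p:ℕ):ℝ)) + ((p:ℕ):ℝ)⁻¹^2
    + 2 * ∑' j : ℕ, ‖f ((p:ℕ)^(j+2))‖ / ((p:ℕ):ℝ)^(j+2) := by
  have hu : Summable (fun k : ℕ => ‖WG f ((p:ℕ)^(k+1))‖) :=
    (summable_nat_add_iff 1).mpr (WSG hf1 hpj p)
  have hsum2 : Summable (fun k : ℕ => ‖WG f ((p:ℕ)^(k+1+1))‖) :=
    (summable_nat_add_iff 1).mpr hu
  have hA : Summable (fun k : ℕ => ‖f ((p:ℕ)^(k+2))‖ / ((p:ℕ):ℝ)^(k+2)) := hpj.prod_factor p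
  have hB : Summable (fun k : ℕ => ‖f ((p:ℕ)^(k+1))‖ / ((p:ℕ):ℝ)^(k+2)) :=
    Summable.of_nonneg_of_le (fun k => by positivity) (fun k => Whstep p (k+1))
      ((summable_nat_add_iff 1).mpr (Wha hpj p))
  have h0 : ‖WG f ((p:ℕ)^1)‖ = ‖f (p:ℕ) - 1‖ / ((p:ℕ):ℝ) := by
    have hw := Wg_prime_pow f p.2 0
    rw [zero_add, pow_zero, hf1] at hw
    rw [WG_norm, hw]
    push_cast
    norm_num
  have htail : ∑' k : ℕ, ‖WG f ((p:ℕ)^(k+1+1))‖ ≤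
      (∑' k : ℕ, ‖f ((p:ℕ)^(k+2))‖ / ((p:ℕ):ℝ)^(k+2))
      + ∑' k : ℕ, ‖f ((p:ℕ)^(k+1))‖ / ((p:ℕ):ℝ)^(k+2) := by
    rw [← Summable.tsum_add hA hB]
    exact Summable.tsum_le_tsum (fun k => WGpp_le hf1 p (k+1)) hsum2 (hA.add hB)
  have hB0 : ‖f ((p:ℕ)^1)‖ / ((p:ℕ):ℝ)^2 ≤ ‖f (p:ℕ) - 1‖ / ((p:ℕ):ℝ) + ((p:ℕ):ℝ)⁻¹^2 := by
    have h1 : ‖f ((p:ℕ)^1)‖ ≤ ‖f (p:ℕ) - 1‖ + 1 := by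
      rw [pow_one]
      calc ‖f (p:ℕ)‖ = ‖(f (p:ℕ) - 1) + 1‖ := by rw [sub_add_cancel]
        _ ≤ ‖f (p:ℕ) - 1‖ + ‖(1:ℂ)‖ := norm_add_le _ _
        _ = ‖f (p:ℕ) - 1‖ + 1 := by rw [norm_one]
    have e1 : ‖f ((p:ℕ)^1)‖ / ((p:ℕ):ℝ)^2 ≤ (‖f (p:ℕ) - 1‖ + 1) / ((p:ℕ):ℝ)^2 := by gcongr
    have e2 : (‖f (p:ℕ) - 1‖ + 1) / ((p:ℕ):ℝ)^2
        = ‖f (p:ℕ) - 1‖/((p:ℕ):ℝ)^2 + 1/((p:ℕ):ℝ)^2 := add_div _ _ _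
    have e3 : ‖f (p:ℕ) - 1‖/((p:ℕ):ℝ)^2 ≤ ‖f (p:ℕ) - 1‖/((p:ℕ):ℝ) :=
      div_le_div_of_nonneg_left (norm_nonneg _) (Whppos p)
        (by nlinarith [Whp1 p, Whppos p])
    have e4 : (1:ℝ)/((p:ℕ):ℝ)^2 = ((p:ℕ):ℝ)⁻¹^2 := by rw [inv_pow, one_div]
    linarith [e1, e3, e4.le, e4.ge]
  have hBtail : ∑' k : ℕ, ‖f ((p:ℕ)^(k+1+1))‖ / ((p:ℕ):ℝ)^(k+1+2) ≤
      ∑' k : ℕ, ‖f ((p:ℕ)^(k+2))‖ / ((p:ℕ):ℝ)^(k+2) := by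
    exact Summable.tsum_le_tsum (fun k => Whstep p (k+2)) ((summable_nat_add_iff 1).mpr hB) hA
  have hBsplit := Summable.tsum_eq_zero_add hB
  have husplit := Summable.tsum_eq_zero_add hu
  simp only [zero_add] at hBsplit husplit
  rw [husplit, h0]
  rw [hBsplit] at htail
  linarith

include hf1 hpj in
lemma Wc_summable (hp : Summable (fun p : Nat.Primes => ‖f (p : ℕ) - 1‖ / (p : ℕ))) :
    Summable (Set.indicator {q : ℕ | q.Prime} (fun q => ∑' k : ℕ, ‖WG f (q^(k+1))‖)) := by
  rw [← summable_subtype_iff_indicator]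
  have ht_sum : Summable (fun p : Nat.Primes =>
      ∑' j : ℕ, ‖f ((p:ℕ)^(j+2))‖ / ((p:ℕ):ℝ)^(j+2)) :=
    ((summable_prod_of_nonneg (fun _ => by positivity)).mp hpj).2
  have hq_sum : Summable (fun p : Nat.Primes => ((p:ℕ):ℝ)⁻¹^2) := by
    have h2 : Summable (fun n : ℕ => ((n:ℝ))⁻¹^2) := by
      simpa [one_div, inv_pow] using Real.summable_one_div_nat_pow.mpr one_lt_two
    exact h2.comp_injective Subtype.val_injective
  have hD : Summable (fun p : Nat.Primes =>
      2 * (‖f (p:ℕ) - 1‖ / ((p:ℕ):ℝ)) + ((p:ℕ):ℝ)⁻¹^2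
      + 2 * ∑' j : ℕ, ‖f ((p:ℕ)^(j+2))‖ / ((p:ℕ):ℝ)^(j+2)) :=
    ((hp.mul_left 2).add hq_sum).add (ht_sum.mul_left 2)
  exact Summable.of_nonneg_of_le (fun p => tsum_nonneg fun _ => norm_nonneg _)
    (fun p => Wc_bound hf1 hpj p) hD

include hf1 hfmul hpj in
lemma WG_summable (hp : Summable (fun p : Nat.Primes => ‖f (p : ℕ) - 1‖ / (p : ℕ))) :
    Summable (fun n : ℕ => ‖WG f n‖) := by
  classical
  set c := Set.indicator {q : ℕ | q.Prime} (fun q => ∑' k : ℕ, ‖WG f (q^(k+1))‖) with hc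
  have hc_sum : Summable c := Wc_summable hf1 hpj hp
  have hc_nonneg : ∀ n, 0 ≤ c n :=
    fun n => Set.indicator_nonneg (fun q _ => tsum_nonneg fun _ => norm_nonneg _) n
  have hfac : ∀ p : Nat.Primes, ∑' e : ℕ, ‖WG f ((p:ℕ)^e)‖ = 1 + c (p:ℕ) := by
    intro p
    rw [Summable.tsum_eq_zero_add (WSG hf1 hpj p), pow_zero, WG_one f hf1, norm_one]
    congr 1
    exact (Set.indicator_of_mem (show (p:ℕ) ∈ {q : ℕ | q.Prime} from p.2)
      (fun q => ∑' k : ℕ, ‖WG f (q^(k+1))‖)).symm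
  apply summable_of_sum_range_le (c := Real.exp (∑' n, c n)) (fun n => norm_nonneg _)
  intro N
  obtain ⟨hsmsum, hsm⟩ := EulerProduct.summable_and_hasSum_smoothNumbers_prod_primesBelow_tsum
    (f := fun n => ‖WG f n‖)
    (show ‖WG f 1‖ = 1 by rw [WG_one f hf1, norm_one])
    (fun {m n} h => show ‖WG f (m * n)‖ = ‖WG f m‖ * ‖WG f n‖ by
      rw [WG_mul f hf1 hfmul h, norm_mul])
    (fun {q} hq => by simpa using WSG hf1 hpj ⟨q, hq⟩) N
  have h1 : ∑ n ∈ Finset.range N, ‖WG f n‖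
      = ∑ n ∈ Finset.range N, Set.indicator (Nat.smoothNumbers N) (fun n => ‖WG f n‖) n := by
    apply Finset.sum_congr rfl
    intro n hn
    rcases eq_or_ne n 0 with rfl | h0
    · simp [WG_zero, Set.indicator_apply]
    · rw [Set.indicator_of_mem]
      apply Nat.mem_smoothNumbers'.mpr
      intro q hq hqn
      exact lt_of_le_of_lt (Nat.le_of_dvd (Nat.pos_of_ne_zero h0) hqn) (Finset.mem_range.mp hn)
  have h2 : ∑ n ∈ Finset.range N, Set.indicator (Nat.smoothNumbers N) (fun n => ‖WG f n‖) n
      ≤ ∑' n : ℕ, Set.indicator (Nat.smoothNumbers N) (fun n => ‖WG f n‖) n :=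
    Summable.sum_le_tsum _ (fun n _ => Set.indicator_nonneg (fun _ _ => norm_nonneg _) n)
      (summable_subtype_iff_indicator.mp hsm.summable)
  have h3 : ∑' n : ℕ, Set.indicator (Nat.smoothNumbers N) (fun n => ‖WG f n‖) n
      = ∏ p ∈ N.primesBelow, ∑' e : ℕ, ‖WG f (p^e)‖ := by
    rw [← tsum_subtype]
    exact hsm.tsum_eq
  have h4 : ∏ p ∈ N.primesBelow, ∑' e : ℕ, ‖WG f (p^e)‖
      ≤ ∏ p ∈ N.primesBelow, Real.exp (c p) := by
    apply Finset.prod_le_prod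
    · intro q hq; exact tsum_nonneg fun _ => norm_nonneg _
    · intro q hq
      have hq' : q.Prime := Nat.prime_of_mem_primesBelow hq
      rw [show (∑' e : ℕ, ‖WG f (q^e)‖) = 1 + c q from hfac ⟨q, hq'⟩]
      linarith [Real.add_one_le_exp (c q)]
  have h5 : ∏ p ∈ N.primesBelow, Real.exp (c p)
      = Real.exp (∑ p ∈ N.primesBelow, c p) := (Real.exp_sum _ _).symm
  have h6 : Real.exp (∑ p ∈ N.primesBelow, c p) ≤ Real.exp (∑' n, c n) :=
    Real.exp_le_exp.mpr (Summable.sum_le_tsum _ (fun n _ => hc_nonneg n) hc_sum)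
  linarith

include hf1 hpj in
lemma Wfactor (p : Nat.Primes) : ∑' e : ℕ, WG f ((p:ℕ)^e)
    = (1 - (((p:ℕ):ℂ))⁻¹) * ∑' j : ℕ, f ((p:ℕ)^j) / ((p:ℕ):ℂ)^j := by
  have hpne : (((p:ℕ):ℂ)) ≠ 0 := Nat.cast_ne_zero.mpr p.2.ne_zero
  have hfa : Summable (fun j : ℕ => f ((p:ℕ)^j) / ((p:ℕ):ℂ)^j) := by
    apply Summable.of_norm
    refine (Wha hpj p).congr fun j => ?_
    rw [norm_div, norm_pow, Complex.norm_natCast]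
  have hGsum : Summable (fun e : ℕ => WG f ((p:ℕ)^e)) := (WSG hf1 hpj p).of_norm
  have h1 : Summable (fun k : ℕ => f ((p:ℕ)^(k+1)) / ((p:ℕ):ℂ)^(k+1)) :=
    (summable_nat_add_iff 1).mpr hfa
  have h2 : Summable (fun k : ℕ => f ((p:ℕ)^k) / ((p:ℕ):ℂ)^(k+1)) := by
    refine (hfa.mul_right (((p:ℕ):ℂ))⁻¹).congr fun k => ?_
    rw [pow_succ]
    field_simp
  have hGk : ∀ k : ℕ, WG f ((p:ℕ)^(k+1))
      = f ((p:ℕ)^(k+1)) / ((p:ℕ):ℂ)^(k+1) - f ((p:ℕ)^k) / ((p:ℕ):ℂ)^(k+1) := by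
    intro k
    show Wg f ((p:ℕ)^(k+1)) / (((p:ℕ)^(k+1) : ℕ) : ℂ) = _
    rw [Wg_prime_pow f p.2 k, Nat.cast_pow, sub_div]
  have hsplit := Summable.tsum_eq_zero_add hGsum
  rw [pow_zero, WG_one f hf1] at hsplit
  have htel : ∑' k : ℕ, WG f ((p:ℕ)^(k+1))
      = (∑' k : ℕ, f ((p:ℕ)^(k+1)) / ((p:ℕ):ℂ)^(k+1))
        - ∑' k : ℕ, f ((p:ℕ)^k) / ((p:ℕ):ℂ)^(k+1) := by
    rw [← Summable.tsum_sub h1 h2]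
    exact tsum_congr hGk
  have hS1 : ∑' j : ℕ, f ((p:ℕ)^j) / ((p:ℕ):ℂ)^j
      = 1 + ∑' k : ℕ, f ((p:ℕ)^(k+1)) / ((p:ℕ):ℂ)^(k+1) := by
    rw [Summable.tsum_eq_zero_add hfa, pow_zero, pow_zero, hf1, div_one]
  have hS2 : ∑' k : ℕ, f ((p:ℕ)^k) / ((p:ℕ):ℂ)^(k+1)
      = (((p:ℕ):ℂ))⁻¹ * ∑' j : ℕ, f ((p:ℕ)^j) / ((p:ℕ):ℂ)^j := by
    rw [← tsum_mul_left]
    exact tsum_congr fun k => by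
      rw [pow_succ, ← div_div, div_eq_mul_inv, mul_comm]
  rw [hsplit, htel, hS2]
  linear_combination -hS1

lemma Wswap (f : ℕ → ℂ) (N : ℕ) :
    ∑ n ∈ Finset.Icc 1 N, f n = ∑ d ∈ Finset.Icc 1 N, ((N / d : ℕ) : ℂ) * Wg f d := by
  classical
  have h1 : ∀ n ∈ Finset.Icc 1 N, f n = ∑ d ∈ Finset.Icc 1 N, if d ∣ n then Wg f d else 0 := by
    intro n hn
    obtain ⟨hn1, hnN⟩ := Finset.mem_Icc.mp hn
    rw [← Finset.sum_filter]
    have hfd : Finset.filter (· ∣ n) (Finset.Icc 1 N) = n.divisors := by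
      ext d
      simp only [Finset.mem_filter, Finset.mem_Icc, Nat.mem_divisors]
      constructor
      · rintro ⟨⟨h1d, hdN⟩, hdvd⟩
        exact ⟨hdvd, by omega⟩
      · rintro ⟨hdvd, hne⟩
        have hd1 : 1 ≤ d := Nat.pos_of_dvd_of_pos hdvd (by omega)
        exact ⟨⟨hd1, le_trans (Nat.le_of_dvd (by omega) hdvd) hnN⟩, hdvd⟩
    rw [hfd, sum_divisors_Wg f (by omega)]
  rw [Finset.sum_congr rfl h1, Finset.sum_comm]
  apply Finset.sum_congr rfl
  intro d hd
  rw [← Finset.sum_filter, Finset.sum_const]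
  have hIcc : Finset.Icc 1 N = Finset.Ioc 0 N := by
    rw [← Finset.Icc_add_one_left_eq_Ioc, zero_add]
  rw [hIcc, Nat.Ioc_filter_dvd_card_eq_div, nsmul_eq_mul]

end Hyp

end WintnerAux

open Filter

theorem wintner_mean_value (f : ℕ → ℂ)
    (hf1 : f 1 = 1)
    (hfmul : ∀ m n : ℕ, Nat.Coprime m n → f (m * n) = f m * f n)
    (hp : Summable (fun p : Nat.Primes => ‖f (p : ℕ) - 1‖ / (p : ℕ)))
    (hpj : Summable (fun pj : Nat.Primes × ℕ =>
      ‖f ((pj.1 : ℕ) ^ (pj.2 + 2))‖ / ((pj.1 : ℕ) : ℝ) ^ (pj.2 + 2))) :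
    Multipliable (fun p : Nat.Primes =>
      (1 - (((p : ℕ) : ℂ))⁻¹) * ∑' j : ℕ, f ((p : ℕ) ^ j) / ((p : ℕ) : ℂ) ^ j) ∧
    Tendsto (fun N : ℕ => (N : ℂ)⁻¹ * ∑ n ∈ Finset.Icc 1 N, f n) atTop
      (nhds (∏' p : Nat.Primes,
        (1 - (((p : ℕ) : ℂ))⁻¹) * ∑' j : ℕ, f ((p : ℕ) ^ j) / ((p : ℕ) : ℂ) ^ j)) := by
  have hGsum : Summable (fun n : ℕ => ‖WG f n‖) := WG_summable hf1 hfmul hpj hp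
  have hEuler : HasProd (fun p : Nat.Primes => ∑' e : ℕ, WG f ((p:ℕ)^e)) (∑' n : ℕ, WG f n) :=
    EulerProduct.eulerProduct_hasProd (WG_one f hf1) (fun {m n} h => WG_mul f hf1 hfmul h)
      hGsum (WG_zero f)
  have hfuneq : (fun p : Nat.Primes => ∑' e : ℕ, WG f ((p:ℕ)^e))
      = fun p : Nat.Primes => (1 - (((p:ℕ):ℂ))⁻¹) * ∑' j : ℕ, f ((p:ℕ)^j) / ((p:ℕ):ℂ)^j :=
    funext fun p => Wfactor hf1 hpj p
  rw [hfuneq] at hEuler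
  refine ⟨hEuler.multipliable, ?_⟩
  rw [hEuler.tprod_eq]
  have hexp : ∀ N : ℕ, (N : ℂ)⁻¹ * ∑ n ∈ Finset.Icc 1 N, f n
      = ∑' d : ℕ, Wg f d * ((N / d : ℕ) : ℂ) / (N : ℂ) := by
    intro N
    rw [Wswap f N]
    rw [tsum_eq_sum (s := Finset.Icc 1 N) ?_]
    · rw [Finset.mul_sum]
      apply Finset.sum_congr rfl
      intro d hd
      ring
    · intro d hd
      rcases eq_or_ne d 0 with rfl | h0
      · simp
      · have hNd : N < d := by
          by_contra hc
          exact hd (Finset.mem_Icc.mpr ⟨Nat.pos_of_ne_zero h0, not_lt.mp hc⟩)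
        rw [Nat.div_eq_of_lt hNd]
        simp
  have hmain := tendsto_tsum_of_dominated_convergence (𝓕 := atTop)
    (f := fun (N : ℕ) (d : ℕ) => Wg f d * ((N / d : ℕ) : ℂ) / (N : ℂ))
    (g := WG f) (bound := fun d => ‖WG f d‖) hGsum ?_ ?_
  · exact (tendsto_congr hexp).mpr hmain
  · -- pointwise convergence
    intro d
    rcases eq_or_ne d 0 with rfl | h0
    · have hz : ∀ N : ℕ, Wg f 0 * ((N / 0 : ℕ) : ℂ) / (N : ℂ) = 0 := by
        intro N; simp
      rw [show WG f 0 = 0 from WG_zero f]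
      simpa [hz] using (tendsto_const_nhds :
        Tendsto (fun _ : ℕ => (0:ℂ)) atTop (nhds 0))
    · have hd : 0 < d := Nat.pos_of_ne_zero h0
      have hre := Wdiv_tendsto d hd
      have hco : Tendsto (fun N : ℕ => (((N / d : ℕ) : ℂ) / (N : ℂ))) atTop
          (nhds (((d:ℕ):ℂ))⁻¹) := by
        have h := (Complex.continuous_ofReal.tendsto ((d:ℝ)⁻¹)).comp hre
        have he : (fun N : ℕ => ((((N / d : ℕ) : ℝ) / (N : ℝ) : ℝ) : ℂ))
            = fun N : ℕ => ((N / d : ℕ) : ℂ) / (N : ℂ) := by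
          funext N; push_cast; ring
        have he2 : (((d:ℝ)⁻¹ : ℝ) : ℂ) = (((d:ℕ):ℂ))⁻¹ := by push_cast; ring
        rw [← he2]
        exact h.congr (fun N => congrFun he N)
      have := hco.const_mul (Wg f d)
      simpa [mul_div_assoc, WG, div_eq_mul_inv, mul_assoc] using this
  · -- domination
    apply Eventually.of_forall
    intro N d
    rcases eq_or_ne d 0 with rfl | h0
    · simp [WG_zero]
    · have hd : 0 < d := Nat.pos_of_ne_zero h0
      show ‖Wg f d * ((N / d : ℕ) : ℂ) / (N : ℂ)‖ ≤ ‖WG f d‖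
      rw [norm_div, norm_mul, Complex.norm_natCast, Complex.norm_natCast, WG_norm,
        mul_div_assoc]
      calc ‖Wg f d‖ * (((N/d:ℕ):ℝ) / (N:ℝ)) ≤ ‖Wg f d‖ * ((d:ℝ))⁻¹ :=
            mul_le_mul_of_nonneg_left (Wdiv_le N d) (norm_nonneg _)
        _ = ‖Wg f d‖ / d := by rw [div_eq_mul_inv]
end

section
/- Let f be a multiplicative function from the positive integers to the complex numbers that is bounded in mean square, and suppose that for every nonnegative integer k the function n ↦ f(n)·(n/σ(n))^k possesses a mean value, so that D_f(u) := lim_{x→∞} (1/x) ∑_{n≤x, n/σ(n)≤u} f(n) exists for all u ∈ [0,1]. Let D(u) denote Davenport's distribution function D(u) = lim_{x→∞} (1/x) #{n ≤ x : n/σ(n) ≤ u}. Then there is a constant C (depending only on f) such that for all u, v ∈ [0,1], |D_f(u) − D_f(v)| ≤ C·|D(u) − D(v)|^{1/2}. -/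
open Filter ArithmeticFunction

theorem Df_holder_bound (f : ℕ → ℂ)
    (hf1 : f 1 = 1)
    (hfmul : ∀ m n : ℕ, Nat.Coprime m n → f (m * n) = f m * f n)
    (hms : ∃ C : ℝ, ∀ᶠ N : ℕ in atTop, ∑ n ∈ Finset.Icc 1 N, ‖f n‖ ^ 2 ≤ C * N)
    (hmean : ∀ k : ℕ, ∃ c : ℂ,
      Tendsto (fun N : ℕ => (N : ℂ)⁻¹ * ∑ n ∈ Finset.Icc 1 N,
        f n * ((sigmaRatio n : ℝ) : ℂ) ^ k) atTop (nhds c))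
    (Df : ℝ → ℂ)
    (hDf : ∀ u ∈ Set.Icc (0 : ℝ) 1,
      Tendsto (fun N : ℕ => (N : ℂ)⁻¹ *
          ∑ n ∈ (Finset.Icc 1 N).filter (fun n : ℕ => sigmaRatio n ≤ u), f n)
        atTop (nhds (Df u)))
    (D : ℝ → ℝ)
    (hD : ∀ u ∈ Set.Icc (0 : ℝ) 1,
      Tendsto (fun N : ℕ =>
          (((Finset.Icc 1 N).filter (fun n : ℕ => sigmaRatio n ≤ u)).card : ℝ) / N)
        atTop (nhds (D u))) :
    ∃ C : ℝ, ∀ u ∈ Set.Icc (0 : ℝ) 1, ∀ v ∈ Set.Icc (0 : ℝ) 1,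
      ‖Df u - Df v‖ ≤ C * Real.sqrt |D u - D v| := by
  obtain ⟨C₀, hC₀⟩ := hms
  set C₁ : ℝ := max C₀ 0 with hC₁def
  have hC₁0 : 0 ≤ C₁ := le_max_right _ _
  have hC₁ : ∀ᶠ N : ℕ in atTop, ∑ n ∈ Finset.Icc 1 N, ‖f n‖ ^ 2 ≤ C₁ * N := by
    filter_upwards [hC₀] with N h
    exact h.trans (mul_le_mul_of_nonneg_right (le_max_left _ _) (Nat.cast_nonneg N))
  refine ⟨Real.sqrt C₁, ?_⟩
  have key : ∀ u ∈ Set.Icc (0 : ℝ) 1, ∀ v ∈ Set.Icc (0 : ℝ) 1, v ≤ u →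
      ‖Df u - Df v‖ ≤ Real.sqrt C₁ * Real.sqrt |D u - D v| := by
    intro u hu v hv hvu
    set Su : ℕ → Finset ℕ := fun N => (Finset.Icc 1 N).filter (fun n => sigmaRatio n ≤ u)
      with hSu
    set Sv : ℕ → Finset ℕ := fun N => (Finset.Icc 1 N).filter (fun n => sigmaRatio n ≤ v)
      with hSv
    have hsub : ∀ N, Sv N ⊆ Su N := fun N =>
      Finset.monotone_filter_right _ (fun n _ hn => le_trans hn hvu)
    set a : ℕ → ℝ := fun N => ((Su N).card : ℝ) / N - ((Sv N).card : ℝ) / N with ha_def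
    have ha : Tendsto a atTop (nhds (D u - D v)) := (hD u hu).sub (hD v hv)
    have hcard : ∀ N, ((Sv N).card : ℝ) ≤ ((Su N).card : ℝ) := fun N =>
      Nat.cast_le.mpr (Finset.card_le_card (hsub N))
    have ha0 : ∀ N : ℕ, 0 ≤ a N := by
      intro N
      have : a N = (((Su N).card : ℝ) - ((Sv N).card : ℝ)) / N := by
        rw [ha_def, sub_div]
      rw [this]
      exact div_nonneg (sub_nonneg.mpr (hcard N)) (Nat.cast_nonneg N)
    -- the difference of partial sums
    set g : ℕ → ℂ := fun N => (N : ℂ)⁻¹ * ∑ n ∈ Su N, f n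
      - (N : ℂ)⁻¹ * ∑ n ∈ Sv N, f n with hg_def
    have hg : Tendsto (fun N => ‖g N‖) atTop (nhds ‖Df u - Df v‖) :=
      ((hDf u hu).sub (hDf v hv)).norm
    have hb : Tendsto (fun N => Real.sqrt (C₁ * a N)) atTop
        (nhds (Real.sqrt (C₁ * (D u - D v)))) :=
      (Real.continuous_sqrt.tendsto _).comp (ha.const_mul C₁)
    have hbound : ∀ᶠ N : ℕ in atTop, ‖g N‖ ≤ Real.sqrt (C₁ * a N) := by
      filter_upwards [hC₁, eventually_ge_atTop 1] with N hN hN1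
      have hNpos : (0 : ℝ) < (N : ℝ) := by exact_mod_cast hN1
      set T : Finset ℕ := Su N \ Sv N with hT
      have hTsum : ∑ n ∈ T, f n = ∑ n ∈ Su N, f n - ∑ n ∈ Sv N, f n :=
        Finset.sum_sdiff_eq_sub (hsub N)
      have hgN : g N = (N : ℂ)⁻¹ * ∑ n ∈ T, f n := by
        rw [hg_def, hTsum]; ring
      have hnorm : ‖g N‖ = ((N : ℝ))⁻¹ * ‖∑ n ∈ T, f n‖ := by
        rw [hgN, norm_mul, norm_inv, Complex.norm_natCast]
      have hcardT : ((T.card : ℝ)) = ((Su N).card : ℝ) - ((Sv N).card : ℝ) := by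
        rw [hT, Finset.card_sdiff_of_subset (hsub N)]
        push_cast [Finset.card_le_card (hsub N)]
        ring
      have haN : a N = (T.card : ℝ) / N := by
        rw [ha_def, hcardT, sub_div]
      -- Cauchy-Schwarz
      have h1 : ‖∑ n ∈ T, f n‖ ≤ ∑ n ∈ T, ‖f n‖ := norm_sum_le _ _
      have h2 : (∑ n ∈ T, ‖f n‖) ^ 2 ≤ (T.card : ℝ) * ∑ n ∈ T, ‖f n‖ ^ 2 := by
        have := Finset.sum_mul_sq_le_sq_mul_sq T (fun _ => (1 : ℝ)) (fun n => ‖f n‖)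
        simpa using this
      have hTsubIcc : T ⊆ Finset.Icc 1 N :=
        (Finset.sdiff_subset).trans (Finset.filter_subset _ _)
      have h3 : ∑ n ∈ T, ‖f n‖ ^ 2 ≤ C₁ * N := by
        refine le_trans (Finset.sum_le_sum_of_subset_of_nonneg hTsubIcc
          (fun n _ _ => sq_nonneg _)) hN
      rw [hnorm]
      apply Real.le_sqrt_of_sq_le
      have hx0 : 0 ≤ ‖∑ n ∈ T, f n‖ := norm_nonneg _
      have hs0 : 0 ≤ ∑ n ∈ T, ‖f n‖ := Finset.sum_nonneg fun n _ => norm_nonneg _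
      have hT0 : (0 : ℝ) ≤ (T.card : ℝ) := Nat.cast_nonneg _
      have hx2 : ‖∑ n ∈ T, f n‖ ^ 2 ≤ C₁ * (T.card : ℝ) * N := by
        nlinarith
      have : ((N : ℝ)⁻¹ * ‖∑ n ∈ T, f n‖) ^ 2
          = ‖∑ n ∈ T, f n‖ ^ 2 / (N : ℝ) ^ 2 := by
        field_simp
      rw [this, haN]
      rw [div_le_iff₀ (by positivity)]
      calc ‖∑ n ∈ T, f n‖ ^ 2 ≤ C₁ * (T.card : ℝ) * N := hx2
        _ = C₁ * ((T.card : ℝ) / N) * (N : ℝ) ^ 2 := by field_simp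
    have hle : ‖Df u - Df v‖ ≤ Real.sqrt (C₁ * (D u - D v)) :=
      le_of_tendsto_of_tendsto hg hb hbound
    have hDuv : 0 ≤ D u - D v := ge_of_tendsto ha (Eventually.of_forall ha0)
    calc ‖Df u - Df v‖ ≤ Real.sqrt (C₁ * (D u - D v)) := hle
      _ = Real.sqrt C₁ * Real.sqrt (D u - D v) := Real.sqrt_mul hC₁0 _
      _ = Real.sqrt C₁ * Real.sqrt |D u - D v| := by rw [abs_of_nonneg hDuv]
  intro u hu v hv
  rcases le_total v u with h | h
  · exact key u hu v hv h
  · rw [← norm_neg, neg_sub, ← abs_neg, neg_sub]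
    exact key v hv u hu h
end

section
/- For every real u ∈ [0,1], the limit D(u) := lim_{x→∞} (1/x) #{n ≤ x : n/σ(n) ≤ u} exists, and D(u) is a continuous function of u on [0,1]. In particular, the set of abundant numbers (positive integers n with σ(n) > 2n) possesses an asymptotic density. -/
open Filter ArithmeticFunction

namespace Davenport

/-- `σ(n)/n` as a sum of reciprocals of divisors. -/
noncomputable def g (n : ℕ) : ℝ := ∑ d ∈ n.divisors, (1 : ℝ) / d

open Classical in
/-- number of `n ∈ [1, N]` satisfying `S`. -/
noncomputable def cnt (S : ℕ → Prop) (N : ℕ) : ℕ := ((Finset.Icc 1 N).filter S).card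

noncomputable def dns (S : ℕ → Prop) (N : ℕ) : ℝ := (cnt S N : ℝ) / N

open Classical

lemma cnt_le (S : ℕ → Prop) (N : ℕ) : cnt S N ≤ N := by
  classical
  calc cnt S N ≤ (Finset.Icc 1 N).card := Finset.card_filter_le _ _
  _ = N := by rw [Nat.card_Icc]; omega

lemma cnt_mono_prop {S T : ℕ → Prop} (h : ∀ n, 1 ≤ n → S n → T n) (N : ℕ) :
    cnt S N ≤ cnt T N := by
  classical
  apply Finset.card_le_card
  intro x hx
  simp only [Finset.mem_filter, Finset.mem_Icc] at hx ⊢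
  exact ⟨hx.1, h x hx.1.1 hx.2⟩

lemma cnt_congr {S T : ℕ → Prop} (h : ∀ n, 1 ≤ n → (S n ↔ T n)) (N : ℕ) :
    cnt S N = cnt T N :=
  le_antisymm (cnt_mono_prop (fun n h1 hs => (h n h1).1 hs) N)
    (cnt_mono_prop (fun n h1 hs => (h n h1).2 hs) N)

lemma cnt_union_le {S T U : ℕ → Prop} (h : ∀ n, 1 ≤ n → S n → T n ∨ U n) (N : ℕ) :
    cnt S N ≤ cnt T N + cnt U N := by
  classical
  calc cnt S N ≤ ((Finset.Icc 1 N).filter T ∪ (Finset.Icc 1 N).filter U).card := by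
        apply Finset.card_le_card
        intro x hx
        simp only [Finset.mem_filter, Finset.mem_Icc, Finset.mem_union] at hx ⊢
        rcases h x hx.1.1 hx.2 with ht | hu
        · exact Or.inl ⟨hx.1, ht⟩
        · exact Or.inr ⟨hx.1, hu⟩
  _ ≤ _ := Finset.card_union_le _ _

lemma cnt_mono_N (S : ℕ → Prop) {M N : ℕ} (h : M ≤ N) : cnt S M ≤ cnt S N := by
  classical
  exact Finset.card_le_card (Finset.filter_subset_filter _ (Finset.Icc_subset_Icc_right h))

lemma periodic_iterate {S : ℕ → Prop} {L : ℕ} (hS : ∀ n, S (n + L) ↔ S n) (k : ℕ) :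
    ∀ n, S (n + k * L) ↔ S n := by
  induction k with
  | zero => simp
  | succ k ih =>
    intro n
    have : n + (k + 1) * L = (n + k * L) + L := by ring
    rw [this, hS, ih]

lemma cnt_block {S : ℕ → Prop} {L : ℕ} (hL : 1 ≤ L) (hS : ∀ n, S (n + L) ↔ S n) (k : ℕ) :
    cnt S (k * L) = k * cnt S L := by
  classical
  induction k with
  | zero => simp [cnt]
  | succ k ih =>
    have e : (k + 1) * L = k * L + L := by ring
    rw [e]
    set A := k * L with hA
    have hsplit : Finset.Icc 1 (A + L) = Finset.Icc 1 A ∪ Finset.Ioc A (A + L) := by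
      ext x
      simp only [Finset.mem_Icc, Finset.mem_union, Finset.mem_Ioc]
      omega
    have hdisj : Disjoint ((Finset.Icc 1 A).filter S) ((Finset.Ioc A (A + L)).filter S) := by
      rw [Finset.disjoint_left]
      intro a ha hb
      simp only [Finset.mem_filter, Finset.mem_Icc, Finset.mem_Ioc] at ha hb
      omega
    have hblock : ((Finset.Ioc A (A + L)).filter S).card = cnt S L := by
      rw [cnt]
      apply Finset.card_bij (fun n _ => n - A)
      · intro a ha
        simp only [Finset.mem_filter, Finset.mem_Ioc, Finset.mem_Icc] at ha ⊢
        refine ⟨by omega, ?_⟩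
        have hiter := periodic_iterate hS k (a - A)
        rw [← hA] at hiter
        have h2 : a - A + A = a := by omega
        rw [h2] at hiter
        exact hiter.mp ha.2
      · intro a ha b hb hab
        simp only [Finset.mem_filter, Finset.mem_Ioc] at ha hb
        omega
      · intro b hb
        simp only [Finset.mem_filter, Finset.mem_Icc] at hb
        refine ⟨b + A, ?_, by omega⟩
        simp only [Finset.mem_filter, Finset.mem_Ioc]
        have hiter := periodic_iterate hS k b
        rw [← hA] at hiter
        exact ⟨⟨by omega, by omega⟩, hiter.mpr hb.2⟩
    rw [cnt, hsplit, Finset.filter_union, Finset.card_union_of_disjoint hdisj, ← cnt, ih, hblock]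
    ring

lemma dns_nonneg (S : ℕ → Prop) (N : ℕ) : 0 ≤ dns S N := by
  unfold dns; positivity

lemma dns_le_one (S : ℕ → Prop) (N : ℕ) : dns S N ≤ 1 := by
  unfold dns
  rcases Nat.eq_zero_or_pos N with h | h
  · simp [h]
  · rw [div_le_one (by positivity)]
    exact_mod_cast cnt_le S N

/-- Exact density of a periodic set. -/
lemma tendsto_dns_periodic {S : ℕ → Prop} {L : ℕ} (hL : 1 ≤ L)
    (hS : ∀ n, S (n + L) ↔ S n) :
    Tendsto (dns S) atTop (nhds ((cnt S L : ℝ) / L)) := by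
  have key : ∀ N : ℕ, 1 ≤ N → |dns S N - (cnt S L : ℝ) / L| ≤ L / N := by
    intro N hN
    set c := cnt S L with hc
    set k := N / L with hk
    have hkL : k * L ≤ N := Nat.div_mul_le_self N L
    have hNk : N < (k + 1) * L := by
      calc N = L * k + N % L := (Nat.div_add_mod N L).symm
      _ < L * k + L := by
          have : N % L < L := Nat.mod_lt _ (by omega)
          omega
      _ = (k + 1) * L := by ring
    have hlow : k * c ≤ cnt S N := by
      rw [← cnt_block hL hS k]
      exact cnt_mono_N S hkL
    have hhigh : cnt S N ≤ (k + 1) * c := by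
      rw [← cnt_block hL hS (k + 1)]
      exact cnt_mono_N S (le_of_lt hNk)
    have hcL : c ≤ L := cnt_le S L
    -- real versions
    have hNpos : (0:ℝ) < N := by exact_mod_cast hN
    have hLpos : (0:ℝ) < L := by exact_mod_cast hL
    have hcnn : (0:ℝ) ≤ c := by positivity
    have hknn : (0:ℝ) ≤ k := by positivity
    have hr1 : (k:ℝ) * L ≤ N := by exact_mod_cast hkL
    have hr2 : (N:ℝ) < ((k:ℝ) + 1) * L := by exact_mod_cast hNk
    have hr3 : (k:ℝ) * c ≤ cnt S N := by exact_mod_cast hlow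
    have hr4 : (cnt S N : ℝ) ≤ ((k:ℝ) + 1) * c := by exact_mod_cast hhigh
    have hr5 : (c:ℝ) ≤ L := by exact_mod_cast hcL
    have hnum : |(cnt S N : ℝ) * L - (c:ℝ) * N| ≤ L * L := by
      rw [abs_le]
      constructor
      · have p4 : (k:ℝ) * c * L ≤ (cnt S N : ℝ) * L :=
          mul_le_mul_of_nonneg_right hr3 (le_of_lt hLpos)
        have p5 : (c:ℝ) * N ≤ (c:ℝ) * (((k:ℝ) + 1) * L) :=
          mul_le_mul_of_nonneg_left (le_of_lt hr2) hcnn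
        have p6 : (c:ℝ) * L ≤ L * L := mul_le_mul_of_nonneg_right hr5 (le_of_lt hLpos)
        nlinarith [p4, p5, p6]
      · have p1 : (cnt S N : ℝ) * L ≤ ((k:ℝ) + 1) * c * L :=
          mul_le_mul_of_nonneg_right hr4 (le_of_lt hLpos)
        have p2 : (c:ℝ) * ((k:ℝ) * L) ≤ (c:ℝ) * N := mul_le_mul_of_nonneg_left hr1 hcnn
        have p3 : (c:ℝ) * L ≤ L * L := mul_le_mul_of_nonneg_right hr5 (le_of_lt hLpos)
        nlinarith [p1, p2, p3]
    have heq : dns S N - (c:ℝ) / L = ((cnt S N : ℝ) * L - (c:ℝ) * N) / (N * L) := by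
      rw [dns]
      field_simp
    rw [heq, abs_div, abs_of_pos (by positivity : (0:ℝ) < (N:ℝ) * L),
      div_le_div_iff₀ (by positivity) hNpos]
    calc |(cnt S N : ℝ) * L - (c:ℝ) * N| * N ≤ (L * L) * N :=
          mul_le_mul_of_nonneg_right hnum (le_of_lt hNpos)
    _ = (L:ℝ) * (N * L) := by ring
  have hLN : Tendsto (fun N : ℕ => (L : ℝ) / N) atTop (nhds 0) :=
    tendsto_const_div_atTop_nhds_zero_nat (L:ℝ)
  rw [tendsto_iff_norm_sub_tendsto_zero]
  apply squeeze_zero' (by filter_upwards with N using norm_nonneg _) _ hLN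
  filter_upwards [eventually_ge_atTop 1] with N hN
  simpa [Real.norm_eq_abs] using key N hN

/-! ### Section 2: sums and averages -/

lemma sum_inv_sq_strong (a : ℕ) (ha : 1 ≤ a) (N : ℕ) :
    (∑ d ∈ Finset.Ioc a N, (1:ℝ)/(d*d)) + 1/(max a N) ≤ 1/a := by
  induction N with
  | zero =>
    rw [Finset.Ioc_eq_empty (by omega)]
    simp [Nat.max_eq_left (by omega : 0 ≤ a)]
  | succ n ih =>
    rcases le_or_gt (n + 1) a with h | h
    · rw [Finset.Ioc_eq_empty (by omega)]
      simp only [Finset.sum_empty, zero_add]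
      rw [Nat.max_eq_left h]
    · have han : a ≤ n := by omega
      rw [Finset.sum_Ioc_succ_top han]
      rw [Nat.max_eq_right han] at ih
      rw [Nat.max_eq_right (by omega : a ≤ n + 1)]
      have hn1 : (1:ℝ) ≤ n := by exact_mod_cast le_trans ha han
      have hstep : (1:ℝ)/((n+1)*(n+1)) + 1/(n+1) ≤ 1/n := by
        rw [div_add_div _ _ (by nlinarith) (by nlinarith), div_le_div_iff₀ (by nlinarith) (by nlinarith)]
        ring_nf
        nlinarith
      push_cast
      push_cast at ih
      nlinarith [hstep, ih]

lemma sum_inv_sq_Ioc (a : ℕ) (ha : 1 ≤ a) (N : ℕ) :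
    (∑ d ∈ Finset.Ioc a N, (1:ℝ)/(d*d)) ≤ 1/a := by
  have := sum_inv_sq_strong a ha N
  have h2 : (0:ℝ) ≤ 1/(max a N) := by positivity
  linarith

lemma sum_inv_sq_Icc (N : ℕ) : (∑ d ∈ Finset.Icc 1 N, (1:ℝ)/(d*d)) ≤ 2 := by
  rcases Nat.eq_zero_or_pos N with h | h
  · simp [h]
  · have : Finset.Icc 1 N = insert 1 (Finset.Ioc 1 N) := by
      ext x
      simp only [Finset.mem_Icc, Finset.mem_insert, Finset.mem_Ioc]
      omega
    rw [this, Finset.sum_insert (by simp)]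
    have := sum_inv_sq_Ioc 1 le_rfl N
    norm_num at this ⊢
    linarith

/-- The divisor-sum swap estimate. -/
lemma sumswap (P : ℕ → Prop) [DecidablePred P] (N : ℕ) :
    (∑ n ∈ Finset.Icc 1 N, ∑ d ∈ n.divisors.filter P, (1:ℝ)/d)
      ≤ N * ∑ d ∈ (Finset.Icc 1 N).filter P, (1:ℝ)/(d*d) := by
  classical
  have hinner : ∀ n ∈ Finset.Icc 1 N,
      (∑ d ∈ n.divisors.filter P, (1:ℝ)/d)
        = ∑ d ∈ (Finset.Icc 1 N).filter P, (if d ∣ n then (1:ℝ)/d else 0) := by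
    intro n hn
    rw [Finset.mem_Icc] at hn
    rw [← Finset.sum_filter]
    apply Finset.sum_congr _ (fun _ _ => rfl)
    ext d
    simp only [Finset.mem_filter, Nat.mem_divisors, Finset.mem_Icc]
    constructor
    · rintro ⟨⟨hd, _⟩, hP⟩
      have hd1 : 1 ≤ d := Nat.pos_of_dvd_of_pos hd (by omega)
      have hdN : d ≤ N := le_trans (Nat.le_of_dvd (by omega) hd) hn.2
      exact ⟨⟨⟨hd1, hdN⟩, hP⟩, hd⟩
    · rintro ⟨⟨_, hP⟩, hd⟩
      exact ⟨⟨hd, by omega⟩, hP⟩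
  rw [Finset.sum_congr rfl hinner, Finset.sum_comm]
  have hterm : ∀ d ∈ (Finset.Icc 1 N).filter P,
      (∑ n ∈ Finset.Icc 1 N, if d ∣ n then (1:ℝ)/d else 0) ≤ N * ((1:ℝ)/(d*d)) := by
    intro d hd
    simp only [Finset.mem_filter, Finset.mem_Icc] at hd
    have hd1 : 1 ≤ d := hd.1.1
    have hdpos : (0:ℝ) < d := by exact_mod_cast hd1
    rw [← Finset.sum_filter, Finset.sum_const]
    have hIcc : Finset.Icc 1 N = Finset.Ioc 0 N := by ext x; simp [Finset.mem_Icc, Finset.mem_Ioc]; omega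
    rw [hIcc, Nat.Ioc_filter_dvd_card_eq_div, nsmul_eq_mul]
    have hcast : ((N / d : ℕ) : ℝ) ≤ (N : ℝ) / d := Nat.cast_div_le
    have hstep : ((N / d : ℕ) : ℝ) * ((1:ℝ)/d) ≤ ((N:ℝ)/d) * (1/d) := by
      apply mul_le_mul_of_nonneg_right hcast
      positivity
    have heq2 : ((N:ℝ)/d) * (1/d) = N * (1/(d*d)) := by field_simp
    linarith
  calc (∑ d ∈ (Finset.Icc 1 N).filter P, ∑ n ∈ Finset.Icc 1 N, if d ∣ n then (1:ℝ)/d else 0)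
      ≤ ∑ d ∈ (Finset.Icc 1 N).filter P, (N:ℝ) * (1/(d*d)) := Finset.sum_le_sum hterm
  _ = N * ∑ d ∈ (Finset.Icc 1 N).filter P, (1:ℝ)/(d*d) := by rw [Finset.mul_sum]

/-- truncated divisor sum -/
noncomputable def gy (y n : ℕ) : ℝ := ∑ d ∈ (Finset.Icc 1 y).filter (· ∣ n), (1:ℝ)/d

open Classical in
lemma gy_eq (y n : ℕ) (hn : 1 ≤ n) :
    gy y n = ∑ d ∈ n.divisors.filter (· ≤ y), (1:ℝ)/d := by
  classical
  unfold gy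
  apply Finset.sum_congr _ (fun _ _ => rfl)
  ext d
  simp only [Finset.mem_filter, Finset.mem_Icc, Nat.mem_divisors]
  constructor
  · rintro ⟨⟨h1, h2⟩, h3⟩
    exact ⟨⟨h3, by omega⟩, h2⟩
  · rintro ⟨⟨h1, _⟩, h2⟩
    exact ⟨⟨Nat.pos_of_dvd_of_pos h1 (by omega), h2⟩, h1⟩

lemma g_sub_gy (y n : ℕ) (hn : 1 ≤ n) :
    g n - gy y n = ∑ d ∈ n.divisors.filter (fun d => ¬ d ≤ y), (1:ℝ)/d := by
  classical
  rw [gy_eq y n hn, g, ← Finset.sum_filter_add_sum_filter_not n.divisors (· ≤ y)]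
  ring

lemma gy_le_g (y n : ℕ) (hn : 1 ≤ n) : gy y n ≤ g n := by
  have h := g_sub_gy y n hn
  have hpos : (0:ℝ) ≤ ∑ d ∈ n.divisors.filter (fun d => ¬ d ≤ y), (1:ℝ)/d := by
    apply Finset.sum_nonneg; intro i _; positivity
  linarith

lemma gy_periodic (y : ℕ) (n : ℕ) : gy y (n + Nat.factorial y) = gy y n := by
  unfold gy
  apply Finset.sum_congr _ (fun _ _ => rfl)
  apply Finset.filter_congr
  intro d hd
  rw [Finset.mem_Icc] at hd
  have hdf : d ∣ Nat.factorial y := Nat.dvd_factorial (by omega) hd.2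
  constructor
  · intro h
    have h2 := Nat.dvd_sub h hdf
    rwa [Nat.add_sub_cancel] at h2
  · intro h
    exact Nat.dvd_add h hdf

lemma avg_g_sub_gy (y N : ℕ) (hy : 1 ≤ y) :
    (∑ n ∈ Finset.Icc 1 N, (g n - gy y n)) ≤ N * (1/y) := by
  have h1 : ∀ n ∈ Finset.Icc 1 N, g n - gy y n
      = ∑ d ∈ n.divisors.filter (fun d => ¬ d ≤ y), (1:ℝ)/d := by
    intro n hn
    rw [Finset.mem_Icc] at hn
    exact g_sub_gy y n hn.1
  rw [Finset.sum_congr rfl h1]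
  calc (∑ n ∈ Finset.Icc 1 N, ∑ d ∈ n.divisors.filter (fun d => ¬ d ≤ y), (1:ℝ)/d)
      ≤ N * ∑ d ∈ (Finset.Icc 1 N).filter (fun d => ¬ d ≤ y), (1:ℝ)/(d*d) :=
        sumswap (fun d => ¬ d ≤ y) N
  _ ≤ N * (1/y) := by
      apply mul_le_mul_of_nonneg_left _ (by positivity)
      have : (Finset.Icc 1 N).filter (fun d => ¬ d ≤ y) = Finset.Ioc y N := by
        ext x
        simp only [Finset.mem_filter, Finset.mem_Icc, Finset.mem_Ioc]
        omega
      rw [this]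
      exact sum_inv_sq_Ioc y hy N

lemma avg_g (N : ℕ) : (∑ n ∈ Finset.Icc 1 N, g n) ≤ 2 * N := by
  have h1 : ∀ n ∈ Finset.Icc 1 N, g n = ∑ d ∈ n.divisors.filter (fun _ => True), (1:ℝ)/d := by
    intro n _
    rw [Finset.filter_true]
    rfl
  rw [Finset.sum_congr rfl h1]
  calc (∑ n ∈ Finset.Icc 1 N, ∑ d ∈ n.divisors.filter (fun _ => True), (1:ℝ)/d)
      ≤ N * ∑ d ∈ (Finset.Icc 1 N).filter (fun _ => True), (1:ℝ)/(d*d) := sumswap _ N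
  _ ≤ N * 2 := by
      apply mul_le_mul_of_nonneg_left _ (by positivity)
      rw [Finset.filter_true]
      exact sum_inv_sq_Icc N
  _ = 2 * N := by ring

/-- Markov inequality for counts. -/
lemma markov {h : ℕ → ℝ} {N : ℕ} {δ B : ℝ} (hδ : 0 < δ)
    (hh : ∀ n, 1 ≤ n → n ≤ N → 0 ≤ h n) (hB : (∑ n ∈ Finset.Icc 1 N, h n) ≤ B) :
    (cnt (fun n => δ < h n) N : ℝ) * δ ≤ B := by
  classical
  have : (cnt (fun n => δ < h n) N : ℝ) * δ
      = ∑ n ∈ (Finset.Icc 1 N).filter (fun n => δ < h n), δ := by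
    rw [Finset.sum_const, nsmul_eq_mul]
    unfold cnt
    congr 1
  rw [this]
  calc (∑ n ∈ (Finset.Icc 1 N).filter (fun n => δ < h n), δ)
      ≤ ∑ n ∈ (Finset.Icc 1 N).filter (fun n => δ < h n), h n := by
        apply Finset.sum_le_sum
        intro i hi
        simp only [Finset.mem_filter] at hi
        exact le_of_lt hi.2
  _ ≤ ∑ n ∈ Finset.Icc 1 N, h n := by
        apply Finset.sum_le_sum_of_subset_of_nonneg (Finset.filter_subset _ _)
        intro i hi _
        rw [Finset.mem_Icc] at hi
        exact hh i hi.1 hi.2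
  _ ≤ B := hB
/-! ### Section 3: limsup/liminf helpers -/

lemma dns_bddAbove (S : ℕ → Prop) : IsBoundedUnder (· ≤ ·) atTop (dns S) :=
  isBoundedUnder_of ⟨1, fun N => dns_le_one S N⟩

lemma dns_bddBelow (S : ℕ → Prop) : IsBoundedUnder (· ≥ ·) atTop (dns S) :=
  isBoundedUnder_of ⟨0, fun N => dns_nonneg S N⟩

/-- upper density -/
noncomputable def ud (S : ℕ → Prop) : ℝ := limsup (dns S) atTop
/-- lower density -/
noncomputable def ld (S : ℕ → Prop) : ℝ := liminf (dns S) atTop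

lemma ld_le_ud (S : ℕ → Prop) : ld S ≤ ud S :=
  liminf_le_limsup (dns_bddAbove S) (dns_bddBelow S)

lemma ud_nonneg (S : ℕ → Prop) : 0 ≤ ud S := by
  refine le_trans ?_ (ld_le_ud S)
  exact Filter.le_liminf_of_le (dns_bddAbove S).isCoboundedUnder_ge
    (Eventually.of_forall fun N => dns_nonneg S N)

lemma ud_le_one (S : ℕ → Prop) : ud S ≤ 1 :=
  Filter.limsup_le_of_le (dns_bddBelow S).isCoboundedUnder_le
    (Eventually.of_forall fun N => dns_le_one S N)

lemma dns_mono {S T : ℕ → Prop} (h : ∀ n, 1 ≤ n → S n → T n) (N : ℕ) :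
    dns S N ≤ dns T N := by
  unfold dns
  gcongr
  exact_mod_cast cnt_mono_prop h N

lemma ud_mono {S T : ℕ → Prop} (h : ∀ n, 1 ≤ n → S n → T n) : ud S ≤ ud T :=
  Filter.limsup_le_limsup (Eventually.of_forall (dns_mono h))
    (dns_bddBelow S).isCoboundedUnder_le (dns_bddAbove T)

lemma ld_mono {S T : ℕ → Prop} (h : ∀ n, 1 ≤ n → S n → T n) : ld S ≤ ld T :=
  Filter.liminf_le_liminf (Eventually.of_forall (dns_mono h))
    (dns_bddBelow S) (dns_bddAbove T).isCoboundedUnder_ge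

/-- If eventually `u N ≤ v N + κ` and `v → β` then `limsup u ≤ β + κ`. -/
lemma limsup_le_of_le_add {u v : ℕ → ℝ} {κ β : ℝ}
    (h0 : ∀ N, 0 ≤ u N)
    (h : ∀ᶠ N in atTop, u N ≤ v N + κ) (hv : Tendsto v atTop (nhds β)) :
    limsup u atTop ≤ β + κ := by
  apply le_of_forall_pos_le_add
  intro ε hε
  have hstep : limsup u atTop ≤ β + κ + ε := by
    apply Filter.limsup_le_of_le
      (IsBoundedUnder.isCoboundedUnder_le (isBoundedUnder_of ⟨0, fun N => h0 N⟩))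
    have hv' : ∀ᶠ N in atTop, v N ≤ β + ε :=
      hv.eventually (eventually_le_nhds (by linarith : β < β + ε))
    filter_upwards [h, hv'] with N h1 h2
    linarith
  linarith

/-- If eventually `v N ≤ u N + κ` and `v → β` then `β - κ ≤ liminf u`. -/
lemma le_liminf_of_add {u v : ℕ → ℝ} {κ β : ℝ}
    (h1 : ∀ N, u N ≤ 1)
    (h : ∀ᶠ N in atTop, v N ≤ u N + κ) (hv : Tendsto v atTop (nhds β)) :
    β - κ ≤ liminf u atTop := by
  have hco : IsCoboundedUnder (· ≥ ·) atTop u :=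
    IsBoundedUnder.isCoboundedUnder_ge (isBoundedUnder_of ⟨1, fun N => h1 N⟩)
  apply le_of_forall_pos_le_add
  intro ε hε
  have hv' : ∀ᶠ N in atTop, β - ε ≤ v N :=
    hv.eventually (eventually_ge_nhds (by linarith : β - ε < β))
  have hstep : β - κ - ε ≤ liminf u atTop := by
    apply Filter.le_liminf_of_le hco
    filter_upwards [h, hv'] with N h2 h3
    linarith
  linarith
/-! ### Section 4: facts about `g` -/

lemma g_nonneg (n : ℕ) : 0 ≤ g n := by
  unfold g; apply Finset.sum_nonneg; intro i _; positivity

lemma one_le_g {n : ℕ} (hn : 1 ≤ n) : 1 ≤ g n := by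
  unfold g
  have h1 : (1:ℕ) ∈ n.divisors := Nat.one_mem_divisors.mpr (by omega)
  calc (1:ℝ) = (1:ℝ)/(1:ℕ) := by norm_num
  _ ≤ ∑ d ∈ n.divisors, (1:ℝ)/d :=
      Finset.single_le_sum (f := fun d : ℕ => (1:ℝ)/(d:ℝ)) (fun i _ => by positivity) h1

lemma g_eq_sigma_div {n : ℕ} (hn : 1 ≤ n) : g n = ((sigma 1 n : ℕ) : ℝ) / n := by
  have h1 : ∑ d ∈ n.divisors, (1:ℝ)/(↑(n / d)) = ∑ d ∈ n.divisors, (1:ℝ)/d :=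
    Nat.sum_div_divisors n (fun d => (1:ℝ)/d)
  have h2 : ∀ d ∈ n.divisors, (1:ℝ)/(↑(n / d)) = (d:ℝ)/n := by
    intro d hd
    rw [Nat.mem_divisors] at hd
    have hd1 : 1 ≤ d := Nat.pos_of_dvd_of_pos hd.1 (by omega)
    rw [Nat.cast_div hd.1 (by exact_mod_cast by omega : (d:ℝ) ≠ 0)]
    rw [one_div_div]
  rw [g, ← h1, Finset.sum_congr rfl h2, ← Finset.sum_div, sigma_one_apply]
  push_cast
  ring_nf

lemma sigma_pos {n : ℕ} (hn : 1 ≤ n) : (n:ℕ) ≤ sigma 1 n := by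
  rw [sigma_one_apply]
  exact Finset.single_le_sum (fun i _ => Nat.zero_le i)
    (Nat.mem_divisors_self n (by omega))

lemma g_mult {p m : ℕ} (hp : p.Prime) (hpm : ¬ p ∣ m) (hm : 1 ≤ m) :
    g (p * m) = (1 + 1/(p:ℝ)) * g m := by
  have hcop : Nat.Coprime p m := (Nat.Prime.coprime_iff_not_dvd hp).mpr hpm
  have hσ : sigma 1 (p * m) = sigma 1 p * sigma 1 m :=
    isMultiplicative_sigma.map_mul_of_coprime hcop
  have hσp : sigma 1 p = 1 + p := by
    rw [sigma_one_apply, hp.divisors, Finset.sum_pair hp.one_lt.ne]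
  have hppos : (0:ℝ) < p := by exact_mod_cast hp.pos
  have hmpos : (0:ℝ) < m := by exact_mod_cast hm
  have hp0 : (p:ℝ) ≠ 0 := ne_of_gt hppos
  have hm0 : (m:ℝ) ≠ 0 := ne_of_gt hmpos
  rw [g_eq_sigma_div (by nlinarith [hp.pos, hm] : 1 ≤ p * m), g_eq_sigma_div hm, hσ, hσp]
  push_cast
  rw [show (1:ℝ) + 1/(p:ℝ) = ((p:ℝ)+1)/p from by field_simp, div_mul_div_comm]
  ring_nf

lemma ratio_iff {n : ℕ} (hn : 1 ≤ n) {u : ℝ} (hu : 0 < u) :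
    sigmaRatio n ≤ u ↔ 1/u ≤ g n := by
  have hσ : (0:ℝ) < ((sigma 1 n : ℕ) : ℝ) := by
    have := sigma_pos hn
    exact_mod_cast lt_of_lt_of_le (by exact_mod_cast hn : (0:ℕ) < n) this
  have hnpos : (0:ℝ) < n := by exact_mod_cast hn
  rw [sigmaRatio, g_eq_sigma_div hn, div_le_iff₀ hσ, div_le_div_iff₀ hu hnpos]
  constructor <;> intro h <;> nlinarith

lemma abundant_iff {n : ℕ} (hn : 1 ≤ n) :
    2 * n < sigma 1 n ↔ 2 < g n := by
  have hnpos : (0:ℝ) < n := by exact_mod_cast hn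
  rw [g_eq_sigma_div hn, lt_div_iff₀ hnpos]
  constructor <;> intro h
  · exact_mod_cast by exact_mod_cast h
  · exact_mod_cast by exact_mod_cast h

lemma sigmaRatio_pos {n : ℕ} (hn : 1 ≤ n) : 0 < sigmaRatio n := by
  have hσ : (0:ℝ) < ((sigma 1 n : ℕ) : ℝ) := by
    have := sigma_pos hn
    have hn' : (0:ℕ) < n := by omega
    exact_mod_cast lt_of_lt_of_le hn' this
  have hnpos : (0:ℝ) < n := by exact_mod_cast hn
  exact div_pos hnpos hσ

/-! ### Section 5: CRT counting -/

open Classical in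
noncomputable def R (S : ℕ → Prop) (M : ℕ) : ℕ := ((Finset.range M).filter S).card

lemma S_mod {S : ℕ → Prop} {M : ℕ} (hS : ∀ n, S (n + M) ↔ S n) (hM : M ≠ 0) :
    ∀ n, S n ↔ S (n % M) := by
  intro n
  induction n using Nat.strong_induction_on with
  | _ n ih =>
    rcases lt_or_ge n M with h | h
    · rw [Nat.mod_eq_of_lt h]
    · have h1 : n - M + M = n := by omega
      have h2 : S n ↔ S (n - M) := by rw [← h1, hS]; rw [h1]
      have h3 : n % M = (n - M) % M := by
        conv_lhs => rw [← h1]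
        rw [Nat.add_mod_right]
      rw [h2, h3]
      exact ih (n - M) (by omega)

lemma cnt_eq_R {S : ℕ → Prop} {L : ℕ} (hS : ∀ n, S (n + L) ↔ S n) (hL : 1 ≤ L) :
    cnt S L = R S L := by
  classical
  have h1 : Finset.Icc 1 L = insert L (Finset.Ico 1 L) := by
    ext x; simp only [Finset.mem_Icc, Finset.mem_insert, Finset.mem_Ico]; omega
  have h2 : Finset.range L = insert 0 (Finset.Ico 1 L) := by
    ext x; simp only [Finset.mem_range, Finset.mem_insert, Finset.mem_Ico]; omega
  have hSL : S L ↔ S 0 := by have := hS 0; simpa using this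
  rw [cnt, R, h1, h2, Finset.filter_insert, Finset.filter_insert]
  by_cases h : S 0
  · rw [if_pos (hSL.mpr h), if_pos h,
      Finset.card_insert_of_notMem (by simp [Finset.mem_filter]),
      Finset.card_insert_of_notMem (by simp [Finset.mem_filter])]
  · rw [if_neg (fun hl => h (hSL.mp hl)), if_neg h]

lemma crt_count {M N : ℕ} {S T : ℕ → Prop} (hMN : Nat.Coprime M N)
    (hM : M ≠ 0) (hN : N ≠ 0)
    (hS : ∀ n, S (n + M) ↔ S n) (hT : ∀ n, T (n + N) ↔ T n) :
    R (fun n => S n ∧ T n) (M * N) = R S M * R T N := by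
  classical
  rw [R, R, R, ← Finset.card_product, ← Finset.filter_product]
  apply Finset.card_bij (fun n _ => (n % M, n % N))
  · intro a ha
    simp only [Finset.mem_filter, Finset.mem_range, Finset.mem_product] at ha ⊢
    refine ⟨⟨Nat.mod_lt _ (by omega), Nat.mod_lt _ (by omega)⟩, ?_, ?_⟩
    · exact (S_mod hS hM a).mp ha.2.1
    · exact (S_mod hT hN a).mp ha.2.2
  · intro a ha b hb hab
    simp only [Finset.mem_filter, Finset.mem_range] at ha hb
    simp only [Prod.mk.injEq] at hab
    have h1 : a ≡ b [MOD M] := by unfold Nat.ModEq; rw [hab.1]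
    have h2 : a ≡ b [MOD N] := by unfold Nat.ModEq; rw [hab.2]
    have h3 : a ≡ b [MOD M * N] :=
      (Nat.modEq_and_modEq_iff_modEq_mul hMN).mp ⟨h1, h2⟩
    have heq : a % (M * N) = b % (M * N) := h3
    rwa [Nat.mod_eq_of_lt ha.1, Nat.mod_eq_of_lt hb.1] at heq
  · intro b hb
    simp only [Finset.mem_filter, Finset.mem_product, Finset.mem_range] at hb
    obtain ⟨⟨hb1, hb2⟩, hbS, hbT⟩ := hb
    obtain ⟨k, hk1, hk2⟩ := Nat.chineseRemainder hMN b.1 b.2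
    have hMN0 : 0 < M * N := Nat.mul_pos (Nat.pos_of_ne_zero hM) (Nat.pos_of_ne_zero hN)
    have hk0lt : k % (M * N) < M * N := Nat.mod_lt _ hMN0
    have hmod : k % (M * N) ≡ k [MOD M * N] := Nat.mod_modEq k (M * N)
    have h1 : k % (M * N) ≡ b.1 [MOD M] := (hmod.of_dvd ⟨N, rfl⟩).trans hk1
    have h2 : k % (M * N) ≡ b.2 [MOD N] := (hmod.of_dvd ⟨M, mul_comm M N⟩).trans hk2
    have hkM : (k % (M * N)) % M = b.1 := by
      unfold Nat.ModEq at h1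
      rwa [Nat.mod_eq_of_lt hb1] at h1
    have hkN : (k % (M * N)) % N = b.2 := by
      unfold Nat.ModEq at h2
      rwa [Nat.mod_eq_of_lt hb2] at h2
    refine ⟨k % (M * N), ?_, ?_⟩
    · simp only [Finset.mem_filter, Finset.mem_range]
      refine ⟨hk0lt, ?_, ?_⟩
      · rw [S_mod hS hM (k % (M * N)), hkM]; exact hbS
      · rw [S_mod hT hN (k % (M * N)), hkN]; exact hbT
    · rw [hkM, hkN]
/-! ### Section 6: the "no exact prime divisor" set -/

lemma dvd_add_period {d L n : ℕ} (hdL : d ∣ L) : d ∣ n + L ↔ d ∣ n := by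
  constructor
  · intro h
    have h2 := Nat.dvd_sub h hdL
    rwa [Nat.add_sub_cancel] at h2
  · intro h; exact Nat.dvd_add h hdL

/-- `badP P n` means no prime in `P` divides `n` exactly once. -/
def badP (P : Finset ℕ) (n : ℕ) : Prop := ∀ p ∈ P, ¬ (p ∣ n ∧ ¬ (p * p) ∣ n)

lemma badP_periodic (P : Finset ℕ) (hP : ∀ p ∈ P, Nat.Prime p) (n : ℕ) :
    badP P (n + ∏ p ∈ P, p * p) ↔ badP P n := by
  unfold badP
  apply forall₂_congr
  intro p hp
  have hdvd : (p * p) ∣ ∏ q ∈ P, q * q := Finset.dvd_prod_of_mem _ hp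
  have hd1 : p ∣ ∏ q ∈ P, q * q := dvd_trans (Dvd.intro p rfl) hdvd
  have e1 : p ∣ n + ∏ q ∈ P, q * q ↔ p ∣ n := by
    constructor
    · intro h
      have h2 := Nat.dvd_sub h hd1
      rwa [Nat.add_sub_cancel] at h2
    · intro h; exact Nat.dvd_add h hd1
  have e2 : (p * p) ∣ n + ∏ q ∈ P, q * q ↔ (p * p) ∣ n := by
    constructor
    · intro h
      have h2 := Nat.dvd_sub h hdvd
      rwa [Nat.add_sub_cancel] at h2
    · intro h; exact Nat.dvd_add h hdvd
  rw [e1, e2]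

lemma R_eq {p : ℕ → Prop} [DecidablePred p] (M : ℕ) :
    R p M = ((Finset.range M).filter p).card := by
  apply le_antisymm <;>
    exact Finset.card_le_card (fun x hx => by
      simp only [Finset.mem_filter] at hx ⊢
      exact hx)

lemma R_single {q : ℕ} (hq : q.Prime) :
    R (fun n => ¬ (q ∣ n ∧ ¬ (q * q) ∣ n)) (q * q) = q * q - q + 1 := by
  classical
  have hq2 : 2 ≤ q := hq.two_le
  have hcompl : ((Finset.range (q * q)).filter (fun n => q ∣ n ∧ ¬ (q * q) ∣ n)).card = q - 1 := by
    have hset : (Finset.range (q * q)).filter (fun n => q ∣ n ∧ ¬ (q * q) ∣ n)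
        = ((Finset.range q).filter (· ≠ 0)).image (· * q) := by
      ext n
      simp only [Finset.mem_filter, Finset.mem_range, Finset.mem_image, ne_eq]
      constructor
      · rintro ⟨hlt, ⟨b, hb⟩, hnd⟩
        refine ⟨b, ⟨?_, ?_⟩, by rw [mul_comm]; exact hb.symm⟩
        · by_contra h
          push_neg at h
          have : q * q ≤ q * b := Nat.mul_le_mul_left q h
          omega
        · rintro rfl
          simp at hb
          subst hb
          exact hnd ⟨0, by ring⟩
      · rintro ⟨b, ⟨hblt, hb0⟩, rfl⟩
        refine ⟨by nlinarith, ⟨b, by ring⟩, ?_⟩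
        rintro ⟨c, hc⟩
        have : b = q * c := by
          have hq0 : 0 < q := by omega
          have : q * b = q * (q * c) := by nlinarith [hc]
          exact Nat.eq_of_mul_eq_mul_left hq0 this
        have : q ≤ b ∨ b = 0 := by
          rcases Nat.eq_zero_or_pos c with h | h
          · right
            rw [h, Nat.mul_zero] at this
            exact this
          · left
            calc q = q * 1 := (Nat.mul_one q).symm
            _ ≤ q * c := Nat.mul_le_mul_left q h
            _ = b := this.symm
        omega
    rw [hset, Finset.card_image_of_injective _ (fun a b hab => by
      have hq0 : 0 < q := by omega
      exact Nat.eq_of_mul_eq_mul_right hq0 hab)]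
    have : (Finset.range q).filter (· ≠ 0) = (Finset.range q).erase 0 := by
      ext x; simp [Finset.mem_erase, and_comm]
    rw [this, Finset.card_erase_of_mem (by simp [Finset.mem_range]; omega), Finset.card_range]
  have hle : q ≤ q * q := Nat.le_mul_of_pos_left q (by omega)
  rw [R_eq, Finset.filter_not, Finset.card_sdiff_of_subset (Finset.filter_subset _ _),
    Finset.card_range, hcompl]
  omega

set_option maxHeartbeats 1000000 in
lemma bad_count (P : Finset ℕ) :
    (∀ p ∈ P, Nat.Prime p) → R (badP P) (∏ p ∈ P, p * p) = ∏ p ∈ P, (p * p - p + 1) := by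
  classical
  induction P using Finset.induction_on with
  | empty =>
    intro _
    simp only [Finset.prod_empty]
    have : badP ∅ = fun _ => True := by
      funext n; simp [badP]
    rw [this, R]
    simp
  | @insert q P hqP ih =>
    intro hP
    have hq : q.Prime := hP q (Finset.mem_insert_self q P)
    have hP' : ∀ p ∈ P, Nat.Prime p := fun p hp => hP p (Finset.mem_insert_of_mem hp)
    have hcop : Nat.Coprime (q * q) (∏ p ∈ P, p * p) := by
      apply Nat.Coprime.prod_right
      intro p hp
      have hpq : q ≠ p := fun h => hqP (h ▸ hp)
      have hc : Nat.Coprime q p := (Nat.coprime_primes hq (hP' p hp)).mpr hpq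
      exact (hc.mul_right hc).mul (hc.mul_right hc)
    have hprod0 : (∏ p ∈ P, p * p) ≠ 0 := by
      rw [Finset.prod_ne_zero_iff]
      intro p hp
      have := (hP' p hp).pos
      positivity
    have hq0 : q * q ≠ 0 := by
      have := hq.pos
      positivity
    have hSq : ∀ n, (¬ (q ∣ n + q * q ∧ ¬ (q * q) ∣ n + q * q)) ↔ ¬ (q ∣ n ∧ ¬ (q * q) ∣ n) := by
      intro n
      rw [dvd_add_period (Dvd.intro q rfl), dvd_add_period dvd_rfl]
    have key := crt_count (S := fun n => ¬ (q ∣ n ∧ ¬ (q * q) ∣ n)) (T := badP P) hcop hq0 hprod0 hSq (badP_periodic P hP')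
    have hins : badP (insert q P) = fun n => (¬ (q ∣ n ∧ ¬ (q * q) ∣ n)) ∧ badP P n := by
      funext n
      unfold badP
      rw [eq_iff_iff, Finset.forall_mem_insert]
    rw [Finset.prod_insert hqP, Finset.prod_insert hqP, hins, key, R_single hq, ih hP']
/-! ### Section 7: choosing primes, and the continuity (no-atom) estimate -/

lemma exists_primes (K : ℕ) (Sv : ℝ) :
    ∃ P : Finset ℕ, (∀ p ∈ P, Nat.Prime p ∧ K ≤ p) ∧ Sv ≤ ∑ p ∈ P, (1:ℝ)/p := by
  classical
  set f : ℕ → ℝ := fun n => if n.Prime ∧ K ≤ n then (1:ℝ)/n else 0 with hf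
  have hfnn : ∀ n, 0 ≤ f n := by
    intro n
    rw [hf]
    dsimp only
    split <;> positivity
  have hns : ¬ Summable f := by
    intro hsum
    apply not_summable_one_div_on_primes
    set gsmall : ℕ → ℝ := fun n => if n.Prime ∧ n < K then (1:ℝ)/n else 0 with hg
    have hgsum : Summable gsmall := by
      apply summable_of_finite_support
      apply Set.Finite.subset (Set.finite_Iio K)
      intro n hn
      simp only [Function.mem_support, hg] at hn
      by_contra h
      simp only [Set.mem_Iio, not_lt] at h
      apply hn
      rw [if_neg]
      rintro ⟨-, hlt⟩
      omega
    have heq : ({p | p.Prime}.indicator fun n : ℕ => (1:ℝ)/n) = f + gsmall := by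
      funext n
      rw [hf, hg]
      simp only [Set.indicator_apply, Set.mem_setOf_eq, Pi.add_apply]
      by_cases hp : n.Prime
      · by_cases h : K ≤ n
        · rw [if_pos hp, if_pos ⟨hp, h⟩, if_neg (fun hc => by omega), add_zero]
        · rw [if_pos hp, if_neg (fun hc => h hc.2), if_pos ⟨hp, by omega⟩, zero_add]
      · rw [if_neg hp, if_neg (fun hc => hp hc.1), if_neg (fun hc => hp hc.1), add_zero]
    rw [heq]
    exact hsum.add hgsum
  have htend : Tendsto (fun n => ∑ i ∈ Finset.range n, f i) atTop atTop := by
    by_contra h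
    exact hns ((summable_iff_not_tendsto_nat_atTop_of_nonneg hfnn).mpr h)
  obtain ⟨n, hn⟩ := (htend.eventually_ge_atTop Sv).exists
  refine ⟨(Finset.range n).filter (fun p => p.Prime ∧ K ≤ p), ?_, ?_⟩
  · intro p hp
    simp only [Finset.mem_filter] at hp
    exact hp.2
  · calc Sv ≤ ∑ i ∈ Finset.range n, f i := hn
    _ = ∑ p ∈ (Finset.range n).filter (fun p => p.Prime ∧ K ≤ p), (1:ℝ)/p := by
        rw [Finset.sum_filter]
  
lemma sep_bound {p q : ℕ} (hp : 1 ≤ p) (hq : 1 ≤ q) (hne : p ≠ q) :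
    1/((p:ℝ)*q) ≤ |1/(p:ℝ) - 1/q| := by
  have hp0 : (0:ℝ) < p := by exact_mod_cast hp
  have hq0 : (0:ℝ) < q := by exact_mod_cast hq
  have heq : 1/(p:ℝ) - 1/q = ((q:ℝ) - p)/(p*q) := by
    rw [div_sub_div _ _ (ne_of_gt hp0) (ne_of_gt hq0), one_mul, mul_one]
  have h1 : (1:ℝ) ≤ |(q:ℝ) - p| := by
    rcases lt_or_gt_of_ne hne with h | h
    · have hle : p + 1 ≤ q := h
      have : (p:ℝ) + 1 ≤ q := by exact_mod_cast hle
      rw [abs_of_pos (by linarith)]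
      linarith
    · have hle : q + 1 ≤ p := h
      have : (q:ℝ) + 1 ≤ p := by exact_mod_cast hle
      rw [abs_of_neg (by linarith)]
      linarith
  have hpq : (0:ℝ) < (p:ℝ)*q := by positivity
  rw [heq, abs_div, abs_of_pos hpq, div_le_div_iff₀ hpq hpq]
  nlinarith [mul_le_mul_of_nonneg_right h1 (le_of_lt hpq)]
/-! ### Section 8: the injection bound -/

open Classical in
set_option maxHeartbeats 1600000 in
lemma good_count (P : Finset ℕ) (hP : ∀ p ∈ P, Nat.Prime p) {K : ℕ} (hK : 1 ≤ K)
    (hPK : ∀ p ∈ P, K ≤ p) (t δ : ℝ) (hδ0 : 0 < δ)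
    (hsep : ∀ p ∈ P, ∀ q ∈ P, p ≠ q → 5 * δ < t * |1/(p:ℝ) - 1/(q:ℝ)|)
    (N : ℕ) :
    cnt (fun n => |g n - t| ≤ δ ∧ ∃ p ∈ P, p ∣ n ∧ ¬ (p * p) ∣ n) N ≤ N / K := by
  classical
  have hpkex : ∃ pk : ℕ → ℕ, ∀ n, (∃ p ∈ P, p ∣ n ∧ ¬ p ∣ (n / p) ∧ 1 ≤ n / p ∧
      p * (n / p) = n ∧ g n = (1 + 1/(p:ℝ)) * g (n / p)) →
      pk n ∈ P ∧ pk n ∣ n ∧ ¬ pk n ∣ (n / pk n) ∧ 1 ≤ n / pk n ∧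
      pk n * (n / pk n) = n ∧ g n = (1 + 1/(pk n : ℝ)) * g (n / pk n) := by
    refine ⟨fun n =>
      if h : ∃ p ∈ P, p ∣ n ∧ ¬ p ∣ (n / p) ∧ 1 ≤ n / p ∧ p * (n / p) = n ∧
        g n = (1 + 1/(p:ℝ)) * g (n / p) then h.choose else 1, fun n h => ?_⟩
    dsimp only
    rw [dif_pos h]
    exact h.choose_spec
  obtain ⟨pk, hpk_spec⟩ := hpkex
  have hfacts : ∀ n, 1 ≤ n → (∃ p ∈ P, p ∣ n ∧ ¬ (p * p) ∣ n) →
      ∃ p ∈ P, p ∣ n ∧ ¬ p ∣ (n / p) ∧ 1 ≤ n / p ∧ p * (n / p) = n ∧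
        g n = (1 + 1/(p:ℝ)) * g (n / p) := by
    rintro n hn ⟨p, hpP, hdvd, hnsq⟩
    have hprime := hP p hpP
    have hpm : p * (n / p) = n := Nat.mul_div_cancel' hdvd
    have hm1 : 1 ≤ n / p := by
      rcases Nat.eq_zero_or_pos (n / p) with h | h
      · rw [h, Nat.mul_zero] at hpm; omega
      · exact h
    have hpnm : ¬ p ∣ (n / p) := by
      rintro ⟨c, hc⟩
      exact hnsq ⟨c, by rw [← hpm, hc]; ring⟩
    refine ⟨p, hpP, hdvd, hpnm, hm1, hpm, ?_⟩
    conv_lhs => rw [← hpm]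
    exact g_mult hprime hpnm hm1
  have hcard : (Finset.Icc 1 (N / K)).card = N / K := by
    rw [Nat.card_Icc, Nat.add_sub_cancel]
  rw [cnt, ← hcard]
  apply Finset.card_le_card_of_injOn (fun n => n / pk n)
  · intro n hn
    simp only [Finset.coe_filter, Set.mem_setOf_eq, Finset.mem_Icc] at hn
    obtain ⟨hpP, hdvd, hpnm, hm1, hpm, hg⟩ :=
      hpk_spec n (hfacts n hn.1.1 hn.2.2)
    have hKp : K ≤ pk n := hPK _ hpP
    rw [Finset.mem_coe, Finset.mem_Icc]
    refine ⟨hm1, ?_⟩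
    rw [Nat.le_div_iff_mul_le (by omega : 0 < K)]
    have h1 : n / pk n * K ≤ n := by
      calc n / pk n * K ≤ n / pk n * pk n := Nat.mul_le_mul_left _ hKp
      _ = n := by rw [mul_comm]; exact hpm
    exact le_trans h1 hn.1.2
  · intro n1 hn1 n2 hn2 heq
    simp only [Finset.coe_filter, Set.mem_setOf_eq, Finset.mem_Icc] at hn1 hn2
    simp only at heq
    obtain ⟨hpP1, hdvd1, hpnm1, hm11, hpm1, hg1⟩ :=
      hpk_spec n1 (hfacts n1 hn1.1.1 hn1.2.2)
    obtain ⟨hpP2, hdvd2, hpnm2, hm12, hpm2, hg2⟩ :=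
      hpk_spec n2 (hfacts n2 hn2.1.1 hn2.2.2)
    by_cases hpp : pk n1 = pk n2
    · calc n1 = pk n1 * (n1 / pk n1) := hpm1.symm
      _ = pk n2 * (n2 / pk n2) := by rw [heq, hpp]
      _ = n2 := hpm2
    · exfalso
      have hδ1 : |g n1 - t| ≤ δ := hn1.2.1
      have hδ2 : |g n2 - t| ≤ δ := hn2.2.1
      set G := g (n1 / pk n1) with hG
      have hG2eq : g (n2 / pk n2) = G := by rw [hG, heq]
      have hG1 : 1 ≤ G := by rw [hG]; exact one_le_g hm11
      set x1 := 1/(pk n1 : ℝ) with hx1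
      set x2 := 1/(pk n2 : ℝ) with hx2
      have hp1_prime := hP _ hpP1
      have hp2_prime := hP _ hpP2
      have hp1pos : (0:ℝ) < pk n1 := by exact_mod_cast hp1_prime.pos
      have hp2pos : (0:ℝ) < pk n2 := by exact_mod_cast hp2_prime.pos
      have hx1pos : 0 < x1 := by rw [hx1]; exact one_div_pos.mpr hp1pos
      have hx2pos : 0 < x2 := by rw [hx2]; exact one_div_pos.mpr hp2pos
      have hx1le : x1 ≤ 1 := by
        rw [hx1]
        apply div_le_one_of_le₀ _ (le_of_lt hp1pos)
        exact_mod_cast hp1_prime.one_le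
      have hx2le : x2 ≤ 1 := by
        rw [hx2]
        apply div_le_one_of_le₀ _ (le_of_lt hp2pos)
        exact_mod_cast hp2_prime.one_le
      rw [hg1] at hδ1
      rw [hg2, hG2eq] at hδ2
      have d1 := abs_le.mp hδ1
      have d2 := abs_le.mp hδ2
      have hGnn : (0:ℝ) ≤ G := by linarith
      have hsub : |x1 - x2| * G ≤ 2 * δ := by
        rcases abs_cases (x1 - x2) with ⟨h, _⟩ | ⟨h, _⟩ <;> rw [h] <;>
          nlinarith [d1.1, d1.2, d2.1, d2.2]
      have htb : t ≤ 2 * G + δ := by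
        nlinarith [d1.1, mul_le_mul_of_nonneg_right hx1le hGnn]
      have habs : (0:ℝ) ≤ |x1 - x2| := abs_nonneg _
      have hle1 : |x1 - x2| ≤ 1 := by
        rcases abs_cases (x1 - x2) with ⟨h, _⟩ | ⟨h, _⟩ <;> rw [h] <;> linarith
      have hcontr : t * |x1 - x2| ≤ 5 * δ := by
        calc t * |x1 - x2| ≤ (2 * G + δ) * |x1 - x2| :=
              mul_le_mul_of_nonneg_right htb habs
        _ = 2 * (|x1 - x2| * G) + δ * |x1 - x2| := by ring
        _ ≤ 2 * (2 * δ) + δ * 1 := by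
            apply add_le_add
            · linarith
            · exact mul_le_mul_of_nonneg_left hle1 (le_of_lt hδ0)
        _ = 5 * δ := by ring
      exact absurd (hsep _ hpP1 _ hpP2 hpp) (not_lt.mpr hcontr)
/-! ### Section 9: the no-atom estimate -/

set_option maxHeartbeats 1600000 in
lemma noatom {t : ℝ} (ht : 1 ≤ t) {ε : ℝ} (hε : 0 < ε) :
    ∃ δ : ℝ, 0 < δ ∧ ∀ᶠ N : ℕ in atTop,
      (cnt (fun n => |g n - t| ≤ δ) N : ℝ) ≤ ε * N := by
  classical
  -- choose K
  set K : ℕ := max 2 ⌈(3:ℝ)/ε⌉₊ with hKdef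
  have hK2 : 2 ≤ K := le_max_left _ _
  have hKc : (3:ℝ)/ε ≤ K := by
    calc (3:ℝ)/ε ≤ ⌈(3:ℝ)/ε⌉₊ := Nat.le_ceil _
    _ ≤ K := by exact_mod_cast le_max_right _ _
  have hKpos : (0:ℝ) < K := by
    have : (2:ℝ) ≤ K := by exact_mod_cast hK2
    linarith
  have hKε : (1:ℝ)/K ≤ ε/3 := by
    rw [div_le_div_iff₀ hKpos (by norm_num : (0:ℝ) < 3)]
    have h0 : (0:ℝ) < 3/ε := by positivity
    calc (1:ℝ) * 3 = 3 := by ring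
    _ = (3/ε) * ε := by field_simp
    _ ≤ (K:ℝ) * ε := mul_le_mul_of_nonneg_right hKc (le_of_lt hε)
    _ = ε * K := by ring
  -- choose target sum
  set Sv : ℝ := 2 * Real.log (3/ε) + 1 with hSv
  have hexp : Real.exp (-(Sv/2)) ≤ ε/3 := by
    have h1 : -(Sv/2) ≤ Real.log (ε/3) := by
      rw [hSv]
      have : Real.log (ε/3) = - Real.log (3/ε) := by
        rw [← Real.log_inv, inv_div]
      rw [this]
      linarith
    calc Real.exp (-(Sv/2)) ≤ Real.exp (Real.log (ε/3)) := Real.exp_le_exp.mpr h1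
    _ = ε/3 := Real.exp_log (by positivity)
  -- choose primes
  obtain ⟨P, hPmem, hPsum⟩ := exists_primes K Sv
  have hPp : ∀ p ∈ P, Nat.Prime p := fun p hp => (hPmem p hp).1
  have hPK : ∀ p ∈ P, K ≤ p := fun p hp => (hPmem p hp).2
  have hP1 : ∀ p ∈ P, 1 ≤ p := fun p hp => (hPp p hp).one_le
  -- the bound B
  set B : ℕ := ∏ p ∈ P, p with hB
  have hB1 : 1 ≤ B := Finset.one_le_prod' hP1
  have hpB : ∀ p ∈ P, p ≤ B := fun p hp => Finset.single_le_prod' hP1 hp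
  have hBpos : (0:ℝ) < B := by exact_mod_cast hB1
  -- δ
  set δ : ℝ := t / (6 * B * B) with hδdef
  have hδ0 : 0 < δ := by rw [hδdef]; positivity
  have hsep : ∀ p ∈ P, ∀ q ∈ P, p ≠ q → 5 * δ < t * |1/(p:ℝ) - 1/(q:ℝ)| := by
    intro p hp q hq hne
    have hppos : (0:ℝ) < p := by exact_mod_cast hP1 p hp
    have hqpos : (0:ℝ) < q := by exact_mod_cast hP1 q hq
    have h1 : 1/((p:ℝ)*q) ≤ |1/(p:ℝ) - 1/q| := sep_bound (hP1 p hp) (hP1 q hq) hne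
    have h2 : 1/((B:ℝ)*B) ≤ 1/((p:ℝ)*q) := by
      apply one_div_le_one_div_of_le (by positivity)
      have hpB' : (p:ℝ) ≤ B := by exact_mod_cast hpB p hp
      have hqB' : (q:ℝ) ≤ B := by exact_mod_cast hpB q hq
      calc (p:ℝ) * q ≤ B * q := mul_le_mul_of_nonneg_right hpB' (le_of_lt hqpos)
      _ ≤ B * B := mul_le_mul_of_nonneg_left hqB' (le_of_lt hBpos)
    have h3 : t/((B:ℝ)*B) ≤ t * |1/(p:ℝ) - 1/q| := by
      calc t/((B:ℝ)*B) = t * (1/((B:ℝ)*B)) := by ring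
      _ ≤ t * (1/((p:ℝ)*q)) := mul_le_mul_of_nonneg_left h2 (by linarith)
      _ ≤ t * |1/(p:ℝ) - 1/q| := mul_le_mul_of_nonneg_left h1 (by linarith)
    have h4 : 5 * δ < t/((B:ℝ)*B) := by
      rw [hδdef]
      have heq6 : t / (6 * (B:ℝ) * B) = (t/((B:ℝ)*B))/6 := by ring
      rw [heq6]
      have hpos : 0 < t/((B:ℝ)*B) := by positivity
      linarith
    linarith
  -- the bad set
  set LP : ℕ := ∏ p ∈ P, p * p with hLP
  have hLP1 : 1 ≤ LP := Finset.one_le_prod' (fun p hp => by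
    have := hP1 p hp; nlinarith)
  have hper := badP_periodic P hPp
  have htends := tendsto_dns_periodic hLP1 hper
  have hval : (cnt (badP P) LP : ℝ) / LP ≤ ε/3 := by
    rw [cnt_eq_R hper hLP1, hLP, bad_count P hPp]
    have hcast : ((∏ p ∈ P, (p * p - p + 1) : ℕ) : ℝ) / ((∏ p ∈ P, p * p : ℕ) : ℝ)
        = ∏ p ∈ P, (((p * p - p + 1 : ℕ) : ℝ) / ((p * p : ℕ) : ℝ)) := by
      rw [Nat.cast_prod, Nat.cast_prod, ← Finset.prod_div_distrib]
    rw [hcast]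
    have hfac : ∀ p ∈ P, (((p * p - p + 1 : ℕ) : ℝ) / ((p * p : ℕ) : ℝ))
        ≤ Real.exp (-(1/(2*(p:ℝ)))) := by
      intro p hp
      have hp2 : 2 ≤ p := (hPp p hp).two_le
      have hle : p ≤ p * p := Nat.le_mul_of_pos_left p (by omega)
      have hppos : (0:ℝ) < p := by exact_mod_cast (by omega : 0 < p)
      have step1 : (((p * p - p + 1 : ℕ) : ℝ) / ((p * p : ℕ) : ℝ)) ≤ 1 - 1/(2*(p:ℝ)) := by
        rw [Nat.cast_add, Nat.cast_sub hle]
        push_cast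
        rw [div_le_iff₀ (by positivity)]
        have h2p : (2:ℝ) ≤ p := by exact_mod_cast hp2
        have hdiv : (1 - 1/(2*(p:ℝ))) * ((p:ℝ)*(p:ℝ)) = (p:ℝ)*(p:ℝ) - (p:ℝ)/2 := by
          field_simp
        rw [hdiv]
        linarith
      calc (((p * p - p + 1 : ℕ) : ℝ) / ((p * p : ℕ) : ℝ)) ≤ 1 - 1/(2*(p:ℝ)) := step1
      _ ≤ Real.exp (-(1/(2*(p:ℝ)))) := by
          have := Real.add_one_le_exp (-(1/(2*(p:ℝ))))
          linarith
    calc (∏ p ∈ P, (((p * p - p + 1 : ℕ) : ℝ) / ((p * p : ℕ) : ℝ)))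
        ≤ ∏ p ∈ P, Real.exp (-(1/(2*(p:ℝ)))) := by
          apply Finset.prod_le_prod
          · intro p hp; positivity
          · exact hfac
    _ = Real.exp (∑ p ∈ P, -(1/(2*(p:ℝ)))) := (Real.exp_sum _ _).symm
    _ ≤ Real.exp (-(Sv/2)) := by
        apply Real.exp_le_exp.mpr
        have : (∑ p ∈ P, -(1/(2*(p:ℝ)))) = -(1/2) * ∑ p ∈ P, 1/(p:ℝ) := by
          rw [Finset.mul_sum]
          apply Finset.sum_congr rfl
          intro p _
          ring
        rw [this]
        nlinarith [hPsum]
    _ ≤ ε/3 := hexp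
  have hbad_ev : ∀ᶠ N : ℕ in atTop, (cnt (badP P) N : ℝ) ≤ (2*ε/3) * N := by
    have hlt : (cnt (badP P) LP : ℝ) / LP < 2*ε/3 := lt_of_le_of_lt hval (by linarith)
    have hev := htends.eventually (eventually_le_nhds hlt)
    filter_upwards [hev, eventually_ge_atTop 1] with N h1 h2
    have hNpos : (0:ℝ) < N := by exact_mod_cast h2
    rw [dns] at h1
    calc (cnt (badP P) N : ℝ) = (cnt (badP P) N : ℝ) / N * N := by field_simp
    _ ≤ (2*ε/3) * N := mul_le_mul_of_nonneg_right h1 (le_of_lt hNpos)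
  refine ⟨δ, hδ0, ?_⟩
  filter_upwards [hbad_ev, eventually_ge_atTop 1] with N hbad hN1
  have hNpos : (0:ℝ) < N := by exact_mod_cast hN1
  have hsplit : cnt (fun n => |g n - t| ≤ δ) N ≤ cnt (badP P) N
      + cnt (fun n => |g n - t| ≤ δ ∧ ∃ p ∈ P, p ∣ n ∧ ¬ (p * p) ∣ n) N := by
    apply cnt_union_le
    intro n hn hδn
    by_cases hb : badP P n
    · exact Or.inl hb
    · right
      refine ⟨hδn, ?_⟩
      unfold badP at hb
      push_neg at hb
      obtain ⟨p, hp1, hp2⟩ := hb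
      exact ⟨p, hp1, hp2⟩
  have hgood : (cnt (fun n => |g n - t| ≤ δ ∧ ∃ p ∈ P, p ∣ n ∧ ¬ (p * p) ∣ n) N : ℝ)
      ≤ (ε/3) * N := by
    have h1 := good_count P hPp (by omega : 1 ≤ K) hPK t δ hδ0 hsep N
    calc (cnt (fun n => |g n - t| ≤ δ ∧ ∃ p ∈ P, p ∣ n ∧ ¬ (p * p) ∣ n) N : ℝ)
        ≤ ((N / K : ℕ) : ℝ) := by exact_mod_cast h1
    _ ≤ (N:ℝ) / K := Nat.cast_div_le
    _ = (N:ℝ) * (1/K) := by ring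
    _ ≤ (N:ℝ) * (ε/3) := mul_le_mul_of_nonneg_left hKε (le_of_lt hNpos)
    _ = (ε/3) * N := by ring
  have hcast : (cnt (fun n => |g n - t| ≤ δ) N : ℝ) ≤ (cnt (badP P) N : ℝ)
      + (cnt (fun n => |g n - t| ≤ δ ∧ ∃ p ∈ P, p ∣ n ∧ ¬ (p * p) ∣ n) N : ℝ) := by
    exact_mod_cast hsplit
  calc (cnt (fun n => |g n - t| ≤ δ) N : ℝ)
      ≤ (cnt (badP P) N : ℝ)
        + (cnt (fun n => |g n - t| ≤ δ ∧ ∃ p ∈ P, p ∣ n ∧ ¬ (p * p) ∣ n) N : ℝ) := hcast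
  _ ≤ (2*ε/3) * N + (ε/3) * N := add_le_add hbad hgood
  _ = ε * N := by ring
/-! ### Section 10: the distribution function and the main theorem -/

noncomputable def F (t : ℝ) : ℝ := ud (fun n => t ≤ g n)

lemma F_antitone {s t : ℝ} (h : s ≤ t) : F t ≤ F s :=
  ud_mono (fun n _ hn => le_trans h hn)

lemma F_nonneg (t : ℝ) : 0 ≤ F t := ud_nonneg _

lemma F_le_one (t : ℝ) : F t ≤ 1 := ud_le_one _

lemma F_markov {t : ℝ} (ht : 0 < t) : F t ≤ 4 / t := by
  apply Filter.limsup_le_of_le (dns_bddBelow _).isCoboundedUnder_le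
  filter_upwards with N
  rcases Nat.eq_zero_or_pos N with h0 | h0
  · have : dns (fun n => t ≤ g n) N = 0 := by
      rw [dns, h0]
      simp
    rw [this]
    positivity
  · have hNpos : (0:ℝ) < N := by exact_mod_cast h0
    have hmk := markov (h := g) (N := N) (δ := t/2) (B := 2*N) (by positivity)
      (fun n _ _ => g_nonneg n) (avg_g N)
    have hsub : cnt (fun n => t ≤ g n) N ≤ cnt (fun n => t/2 < g n) N :=
      cnt_mono_prop (fun n _ hn => by linarith) N
    have hsub' : (cnt (fun n => t ≤ g n) N : ℝ) ≤ cnt (fun n => t/2 < g n) N := by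
      exact_mod_cast hsub
    rw [dns, div_le_div_iff₀ hNpos ht]
    nlinarith [hmk, hsub']

lemma jump_bound {t δ ε : ℝ} (ht : 1 ≤ t) (hδ0 : 0 < δ) (hδt : δ ≤ t)
    (hatom : ∀ᶠ N : ℕ in atTop, (cnt (fun n => |g n - t| ≤ δ) N : ℝ) ≤ ε * N)
    {c : ℝ} (hc : Tendsto (dns (fun n => t + δ ≤ g n)) atTop (nhds c)) :
    F (t - δ) ≤ c + ε := by
  apply limsup_le_of_le_add (fun N => dns_nonneg _ N) _ hc
  filter_upwards [hatom, eventually_ge_atTop 1] with N hat hN1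
  have hNpos : (0:ℝ) < N := by exact_mod_cast hN1
  have hcnt : cnt (fun n => t - δ ≤ g n) N
      ≤ cnt (fun n => t + δ ≤ g n) N + cnt (fun n => |g n - t| ≤ δ) N := by
    apply cnt_union_le
    intro n _ hgn
    rcases le_or_gt (t + δ) (g n) with h | h
    · exact Or.inl h
    · right
      rw [abs_le]
      constructor <;> linarith
  have hcnt' : (cnt (fun n => t - δ ≤ g n) N : ℝ)
      ≤ (cnt (fun n => t + δ ≤ g n) N : ℝ) + (cnt (fun n => |g n - t| ≤ δ) N : ℝ) := by
    exact_mod_cast hcnt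
  rw [dns, dns, div_add' _ _ _ (ne_of_gt hNpos)]
  rw [div_le_div_iff₀ hNpos hNpos]
  nlinarith [hcnt', hat, hNpos]

set_option maxHeartbeats 1600000 in
/-- Existence of the limiting density of `{n : g n ≥ t}`. -/
lemma tendsto_F {t : ℝ} (ht : 1 ≤ t) :
    Tendsto (dns (fun n => t ≤ g n)) atTop (nhds (F t)) := by
  have hkey : ∀ ε : ℝ, 0 < ε → ud (fun n => t ≤ g n) ≤ ld (fun n => t ≤ g n) + ε := by
    intro ε hε
    obtain ⟨δ', hδ'0, hatom⟩ := noatom ht (show (0:ℝ) < ε/3 by linarith)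
    set δ := min δ' 1 with hδdef
    have hδ0 : 0 < δ := lt_min hδ'0 one_pos
    have hδ1 : δ ≤ 1 := min_le_right _ _
    have hatom' : ∀ᶠ N : ℕ in atTop, (cnt (fun n => |g n - t| ≤ δ) N : ℝ) ≤ (ε/3) * N := by
      filter_upwards [hatom] with N h
      refine le_trans ?_ h
      have := cnt_mono_prop (S := fun n => |g n - t| ≤ δ) (T := fun n => |g n - t| ≤ δ')
        (fun n _ hn => le_trans hn (min_le_left _ _)) N
      exact_mod_cast this
    -- choose y
    set y : ℕ := max 1 ⌈3/(ε*δ)⌉₊ with hy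
    have hy1 : 1 ≤ y := le_max_left _ _
    have hypos : (0:ℝ) < y := by exact_mod_cast hy1
    have hyval : 1/((y:ℝ)*δ) ≤ ε/3 := by
      have h1 : (3:ℝ)/(ε*δ) ≤ y := by
        calc (3:ℝ)/(ε*δ) ≤ ⌈3/(ε*δ)⌉₊ := Nat.le_ceil _
        _ ≤ y := by exact_mod_cast le_max_right _ _
      rw [div_le_div_iff₀ (by positivity) (by norm_num : (0:ℝ) < 3)]
      have h2 : (3/(ε*δ)) * (ε*δ) ≤ (y:ℝ) * (ε*δ) :=
        mul_le_mul_of_nonneg_right h1 (by positivity)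
      rw [div_mul_cancel₀] at h2
      · nlinarith [h2]
      · positivity
    -- the periodic approximation
    set L : ℕ := Nat.factorial y with hL
    have hL1 : 1 ≤ L := Nat.factorial_pos y
    have hqper : ∀ n, (t - δ ≤ gy y (n + L)) ↔ (t - δ ≤ gy y n) := by
      intro n
      rw [hL, gy_periodic]
    have htendq := tendsto_dns_periodic (S := fun n => t - δ ≤ gy y n) hL1 hqper
    set β : ℝ := (cnt (fun n => t - δ ≤ gy y n) L : ℝ) / L with hβ
    -- step 1
    have hstep1 : ud (fun n => t ≤ g n) ≤ β + ε/3 := by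
      have h1 : ud (fun n => t ≤ g n) ≤ β + 1/((y:ℝ)*δ) := by
        apply limsup_le_of_le_add (fun N => dns_nonneg _ N) _ htendq
        filter_upwards [eventually_ge_atTop 1] with N hN1
        have hNpos : (0:ℝ) < N := by exact_mod_cast hN1
        have hcnt : cnt (fun n => t ≤ g n) N
            ≤ cnt (fun n => t - δ ≤ gy y n) N + cnt (fun n => δ < g n - gy y n) N := by
          apply cnt_union_le
          intro n hn1 hgn
          rcases le_or_gt (g n - gy y n) δ with h | h
          · exact Or.inl (by linarith)
          · exact Or.inr h
        have hmkv : (cnt (fun n => δ < g n - gy y n) N : ℝ) * δ ≤ (N:ℝ) * (1/(y:ℝ)) :=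
          markov (h := fun n => g n - gy y n) (N := N) (δ := δ)
            (B := N * (1/(y:ℝ))) hδ0
            (fun n h1 _ => by
              have hgg := gy_le_g y n h1
              linarith)
            (avg_g_sub_gy y N hy1)
        have hc1 : (cnt (fun n => δ < g n - gy y n) N : ℝ) ≤ N * (1/((y:ℝ)*δ)) := by
          have h := (le_div_iff₀ hδ0).mpr hmkv
          calc (cnt (fun n => δ < g n - gy y n) N : ℝ) ≤ ((N:ℝ) * (1/(y:ℝ)))/δ := h
          _ = N * (1/((y:ℝ)*δ)) := by
              field_simp
        have hcnt' : (cnt (fun n => t ≤ g n) N : ℝ)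
            ≤ (cnt (fun n => t - δ ≤ gy y n) N : ℝ)
              + (cnt (fun n => δ < g n - gy y n) N : ℝ) := by
          exact_mod_cast hcnt
        rw [dns, dns]
        rw [div_le_iff₀ hNpos]
        have hrhs : ((cnt (fun n => t - δ ≤ gy y n) N : ℝ)/N + 1/((y:ℝ)*δ)) * N
            = (cnt (fun n => t - δ ≤ gy y n) N : ℝ) + N * (1/((y:ℝ)*δ)) := by
          field_simp
        rw [hrhs]
        linarith [hcnt', hc1]
      linarith [h1, hyval]
    -- step 2 : β ≤ ld (t - δ ≤ g)
    have hstep2 : β ≤ ld (fun n => t - δ ≤ g n) := by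
      unfold ld
      have hev : ∀ᶠ N : ℕ in atTop, dns (fun n => t - δ ≤ gy y n) N
          ≤ dns (fun n => t - δ ≤ g n) N + 0 := by
        filter_upwards with N
        have h2 := dns_mono (S := fun n => t - δ ≤ gy y n) (T := fun n => t - δ ≤ g n)
          (fun n h1 hn => le_trans hn (gy_le_g y n h1)) N
        linarith
      have h := le_liminf_of_add (u := dns (fun n => t - δ ≤ g n))
        (v := dns (fun n => t - δ ≤ gy y n)) (κ := 0)
        (fun N => dns_le_one _ N) hev htendq
      linarith
    -- step 3 : ld (t - δ ≤ g) ≤ ld (t ≤ g) + ε/3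
    have hstep3 : ld (fun n => t - δ ≤ g n) ≤ ld (fun n => t ≤ g n) + 2*(ε/3) := by
      have hub : ∀ᶠ N : ℕ in atTop, dns (fun n => t - δ ≤ g n) N
          ≤ dns (fun n => t ≤ g n) N + ε/3 := by
        filter_upwards [hatom', eventually_ge_atTop 1] with N hat hN1
        have hNpos : (0:ℝ) < N := by exact_mod_cast hN1
        have hcnt : cnt (fun n => t - δ ≤ g n) N
            ≤ cnt (fun n => t ≤ g n) N + cnt (fun n => |g n - t| ≤ δ) N := by
          apply cnt_union_le
          intro n _ hgn
          rcases le_or_gt t (g n) with h | h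
          · exact Or.inl h
          · right
            rw [abs_le]
            constructor <;> linarith
        have hcnt' : (cnt (fun n => t - δ ≤ g n) N : ℝ)
            ≤ (cnt (fun n => t ≤ g n) N : ℝ) + (cnt (fun n => |g n - t| ≤ δ) N : ℝ) := by
          exact_mod_cast hcnt
        rw [dns, dns, div_le_iff₀ hNpos]
        have : ((cnt (fun n => t ≤ g n) N : ℝ)/N + ε/3) * N
            = (cnt (fun n => t ≤ g n) N : ℝ) + (ε/3) * N := by
          field_simp
        rw [this]
        linarith [hcnt', hat]
      -- liminf of (u ≤ v + κ) pointwise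
      have hbdd : IsBoundedUnder (· ≤ ·) atTop (fun N => dns (fun n => t ≤ g n) N + ε/3) :=
        isBoundedUnder_of ⟨1 + ε/3, fun N => by
          have h1 := dns_le_one (fun n => t ≤ g n) N
          linarith⟩
      have h2 : ld (fun n => t - δ ≤ g n)
          ≤ liminf (fun N => dns (fun n => t ≤ g n) N + ε/3) atTop := by
        unfold ld
        exact Filter.liminf_le_liminf hub (dns_bddBelow _) hbdd.isCoboundedUnder_ge
      have h3 : liminf (fun N => dns (fun n => t ≤ g n) N + ε/3) atTop
          = ld (fun n => t ≤ g n) + ε/3 :=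
        liminf_add_const atTop (dns (fun n => t ≤ g n)) (ε/3)
          (dns_bddAbove _).isCoboundedUnder_ge (dns_bddBelow _)
      rw [h3] at h2
      linarith
    linarith [hstep1, hstep2, hstep3]
  have heq : ld (fun n => t ≤ g n) = ud (fun n => t ≤ g n) :=
    le_antisymm (ld_le_ud _) (le_of_forall_pos_le_add hkey)
  exact tendsto_of_liminf_eq_limsup heq rfl (dns_bddAbove _) (dns_bddBelow _)
/-! ### Section 11: continuity and the final assembly -/

lemma F_jump {t δ ε : ℝ} (ht : 1 ≤ t) (hδ0 : 0 < δ) (hδt : δ ≤ t)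
    (hatom : ∀ᶠ N : ℕ in atTop, (cnt (fun n => |g n - t| ≤ δ) N : ℝ) ≤ ε * N) :
    F (t - δ) ≤ F (t + δ) + ε :=
  jump_bound ht hδ0 hδt hatom (tendsto_F (by linarith))

lemma F_cont {t : ℝ} (ht : 1 ≤ t) {ε : ℝ} (hε : 0 < ε) :
    ∃ δ : ℝ, 0 < δ ∧ ∀ s, |s - t| ≤ δ → |F s - F t| ≤ ε := by
  obtain ⟨δ', hδ'0, hatom⟩ := noatom ht hε
  set δ := min δ' (min 1 t) with hδdef
  have hδ0 : 0 < δ := lt_min hδ'0 (lt_min one_pos (by linarith))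
  have hδt : δ ≤ t := le_trans (min_le_right _ _) (min_le_right _ _)
  have hatom' : ∀ᶠ N : ℕ in atTop, (cnt (fun n => |g n - t| ≤ δ) N : ℝ) ≤ ε * N := by
    filter_upwards [hatom] with N h
    refine le_trans ?_ h
    have := cnt_mono_prop (S := fun n => |g n - t| ≤ δ) (T := fun n => |g n - t| ≤ δ')
      (fun n _ hn => le_trans hn (min_le_left _ _)) N
    exact_mod_cast this
  have hkey : F (t - δ) ≤ F (t + δ) + ε := F_jump ht hδ0 hδt hatom'
  refine ⟨δ, hδ0, fun s hs => ?_⟩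
  obtain ⟨hs1, hs2⟩ := abs_le.mp hs
  have h1 : F s ≤ F (t - δ) := F_antitone (by linarith)
  have h2 : F (t + δ) ≤ F s := F_antitone (by linarith)
  have h3 : F t ≤ F (t - δ) := F_antitone (by linarith)
  have h4 : F (t + δ) ≤ F t := F_antitone (by linarith)
  rw [abs_le]
  constructor <;> linarith

noncomputable def D (u : ℝ) : ℝ := if u ≤ 0 then 0 else F (1/u)

lemma D_eq_F {u : ℝ} (hu : 0 < u) : D u = F (1/u) := if_neg (not_le.mpr hu)

lemma D_zero : D 0 = 0 := if_pos le_rfl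

lemma D_nonneg (u : ℝ) : 0 ≤ D u := by
  unfold D
  split
  · exact le_refl 0
  · exact F_nonneg _

lemma D_le_4u {u : ℝ} (hu0 : 0 ≤ u) : D u ≤ 4 * u := by
  rcases eq_or_lt_of_le hu0 with h | h
  · rw [← h, D_zero]
    norm_num
  · rw [D_eq_F h]
    have h1 : F (1/u) ≤ 4/(1/u) := F_markov (by positivity)
    rwa [div_div_eq_mul_div, div_one] at h1

/-- The counting sequence for `sigmaRatio ≤ u` converges to `D u`. -/
lemma tendsto_ratio_count {u : ℝ} (hu0 : 0 ≤ u) (hu1 : u ≤ 1) :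
    Tendsto (fun N : ℕ =>
      (((Finset.Icc 1 N).filter (fun n : ℕ => sigmaRatio n ≤ u)).card : ℝ) / N)
      atTop (nhds (D u)) := by
  rcases eq_or_lt_of_le hu0 with h0 | h0
  · -- u = 0
    have hcnt : ∀ N : ℕ, ((Finset.Icc 1 N).filter (fun n : ℕ => sigmaRatio n ≤ u)).card = 0 := by
      intro N
      rw [Finset.card_eq_zero, Finset.filter_eq_empty_iff]
      intro n hn
      rw [Finset.mem_Icc] at hn
      have := sigmaRatio_pos hn.1
      rw [← h0]
      push_neg
      linarith
    have : (fun N : ℕ =>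
        (((Finset.Icc 1 N).filter (fun n : ℕ => sigmaRatio n ≤ u)).card : ℝ) / N)
        = fun _ : ℕ => (0:ℝ) := by
      funext N
      rw [hcnt N]
      norm_num
    rw [this, ← h0, D_zero]
    exact tendsto_const_nhds
  · -- 0 < u
    have ht : 1 ≤ 1/u := by
      rw [le_div_iff₀ h0]
      linarith
    have hfun : (fun N : ℕ =>
        (((Finset.Icc 1 N).filter (fun n : ℕ => sigmaRatio n ≤ u)).card : ℝ) / N)
        = dns (fun n => 1/u ≤ g n) := by
      funext N
      rw [dns, cnt]
      congr 1
      norm_cast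
      apply le_antisymm <;> apply Finset.card_le_card <;> intro x hx <;>
        simp only [Finset.mem_filter, Finset.mem_Icc] at hx ⊢
      · exact ⟨hx.1, (ratio_iff hx.1.1 h0).mp hx.2⟩
      · exact ⟨hx.1, (ratio_iff hx.1.1 h0).mpr hx.2⟩
    rw [hfun, D_eq_F h0]
    exact tendsto_F ht

lemma D_continuousOn : ContinuousOn D (Set.Icc 0 1) := by
  intro u hu
  obtain ⟨hu0, hu1⟩ := hu
  rcases eq_or_lt_of_le hu0 with h0 | h0
  · -- u = 0 : squeeze
    rw [ContinuousWithinAt, ← h0, D_zero]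
    have hupper : Tendsto (fun v : ℝ => 4 * v) (nhdsWithin 0 (Set.Icc 0 1)) (nhds 0) := by
      have hc : Tendsto (fun v : ℝ => 4 * v) (nhds 0) (nhds (4 * 0)) :=
        (continuous_const.mul continuous_id).tendsto 0
      rw [mul_zero] at hc
      exact hc.mono_left nhdsWithin_le_nhds
    apply tendsto_of_tendsto_of_tendsto_of_le_of_le' tendsto_const_nhds hupper
    · filter_upwards with v using D_nonneg v
    · filter_upwards [self_mem_nhdsWithin] with v hv
      exact D_le_4u hv.1
  · -- 0 < u
    have ht : 1 ≤ 1/u := by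
      rw [le_div_iff₀ h0]
      linarith
    apply ContinuousAt.continuousWithinAt
    rw [Metric.continuousAt_iff]
    intro ε hε
    obtain ⟨δ₁, hδ₁0, hF⟩ := F_cont ht (show (0:ℝ) < ε/2 by linarith)
    refine ⟨min (u/2) (δ₁*u*u/2), by positivity, fun {v} hv => ?_⟩
    rw [Real.dist_eq] at hv ⊢
    have hv1 : |v - u| < u/2 := lt_of_lt_of_le hv (min_le_left _ _)
    have hv2 : |v - u| < δ₁*u*u/2 := lt_of_lt_of_le hv (min_le_right _ _)
    obtain ⟨hva, hvb⟩ := abs_lt.mp hv1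
    have hvpos : 0 < v := by linarith
    have hinv : |1/v - 1/u| ≤ δ₁ := by
      have heq : 1/v - 1/u = (u - v)/(v*u) := by
        rw [div_sub_div _ _ (ne_of_gt hvpos) (ne_of_gt h0), one_mul, mul_one]
      rw [heq, abs_div, abs_of_pos (by positivity : (0:ℝ) < v*u)]
      rw [div_le_iff₀ (by positivity)]
      have hvu : u/2 * u ≤ v * u := by
        apply mul_le_mul_of_nonneg_right _ (le_of_lt h0)
        linarith
      have habs : |u - v| < δ₁*u*u/2 := by
        rw [abs_sub_comm]
        exact hv2
      calc |u - v| ≤ δ₁*u*u/2 := le_of_lt habs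
      _ = δ₁ * (u/2 * u) := by ring
      _ ≤ δ₁ * (v * u) := mul_le_mul_of_nonneg_left hvu (le_of_lt hδ₁0)
    have hDv : D v = F (1/v) := D_eq_F hvpos
    have hDu : D u = F (1/u) := D_eq_F h0
    rw [hDv, hDu]
    calc |F (1/v) - F (1/u)| ≤ ε/2 := hF _ hinv
    _ < ε := by linarith

/-- Density of the abundant numbers. -/
lemma tendsto_abundant :
    Tendsto (fun N : ℕ =>
      (((Finset.Icc 1 N).filter (fun n : ℕ => 2 * n < sigma 1 n)).card : ℝ) / N)
      atTop (nhds (F 2)) := by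
  have hfun : (fun N : ℕ =>
      (((Finset.Icc 1 N).filter (fun n : ℕ => 2 * n < sigma 1 n)).card : ℝ) / N)
      = dns (fun n => 2 < g n) := by
    funext N
    rw [dns, cnt]
    congr 1
    norm_cast
    apply le_antisymm <;> apply Finset.card_le_card <;> intro x hx <;>
      simp only [Finset.mem_filter, Finset.mem_Icc] at hx ⊢
    · exact ⟨hx.1, (abundant_iff hx.1.1).mp hx.2⟩
    · exact ⟨hx.1, (abundant_iff hx.1.1).mpr hx.2⟩
  rw [hfun]
  -- squeeze between F (2 + δ) and F 2
  have hud : ud (fun n => 2 < g n) ≤ F 2 :=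
    ud_mono (fun n _ hn => le_of_lt hn)
  have hld : ∀ ε : ℝ, 0 < ε → F 2 ≤ ld (fun n => 2 < g n) + ε := by
    intro ε hε
    obtain ⟨δ', hδ'0, hatom⟩ := noatom (t := 2) (by norm_num) hε
    set δ := min δ' 1 with hδdef
    have hδ0 : 0 < δ := lt_min hδ'0 one_pos
    have hδ1 : δ ≤ 1 := min_le_right _ _
    have hatom' : ∀ᶠ N : ℕ in atTop, (cnt (fun n => |g n - 2| ≤ δ) N : ℝ) ≤ ε * N := by
      filter_upwards [hatom] with N h
      refine le_trans ?_ h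
      have := cnt_mono_prop (S := fun n => |g n - 2| ≤ δ) (T := fun n => |g n - 2| ≤ δ')
        (fun n _ hn => le_trans hn (min_le_left _ _)) N
      exact_mod_cast this
    have hj : F (2 - δ) ≤ F (2 + δ) + ε :=
      F_jump (by norm_num) hδ0 (by linarith) hatom'
    have h1 : F 2 ≤ F (2 - δ) := F_antitone (by linarith)
    have h2 : F (2 + δ) ≤ ld (fun n => 2 < g n) := by
      have hlim := tendsto_F (t := 2 + δ) (by linarith)
      rw [← hlim.liminf_eq]
      exact ld_mono (fun n _ hn => by linarith)
    linarith
  have hF2 : F 2 ≤ ld (fun n => 2 < g n) :=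
    le_of_forall_pos_le_add (fun ε hε => hld ε hε)
  have hudval : ud (fun n => 2 < g n) = F 2 :=
    le_antisymm hud (le_trans hF2 (ld_le_ud _))
  have hldval : ld (fun n => 2 < g n) = F 2 :=
    le_antisymm (by rw [← hudval]; exact ld_le_ud _) hF2
  exact tendsto_of_liminf_eq_limsup hldval hudval (dns_bddAbove _) (dns_bddBelow _)

end Davenport


theorem davenport_theorem :
    (∃ D : ℝ → ℝ, ContinuousOn D (Set.Icc 0 1) ∧
      ∀ u ∈ Set.Icc (0 : ℝ) 1,
        Tendsto (fun N : ℕ =>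
            (((Finset.Icc 1 N).filter (fun n : ℕ => sigmaRatio n ≤ u)).card : ℝ) / N)
          atTop (nhds (D u))) ∧
    ∃ d : ℝ, Tendsto (fun N : ℕ =>
        (((Finset.Icc 1 N).filter (fun n : ℕ => 2 * n < sigma 1 n)).card : ℝ) / N)
      atTop (nhds d) := by
  constructor
  · exact ⟨Davenport.D, Davenport.D_continuousOn,
      fun u hu => Davenport.tendsto_ratio_count hu.1 hu.2⟩
  · exact ⟨Davenport.F 2, Davenport.tendsto_abundant⟩
end
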